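/- arXiv:1703.05101 — 5 statements merged into one kernel-verified Lean document; each statement's English description precedes it below -/
import Mathlib

section
/- Let U : 𝒳 × 𝒴 → [-1,1] be a measurable q₁×q₂-step kernel on bounded measurable sets 𝒳, 𝒴 ⊆ ℝ. Then its cut norm satisfies ‖U‖_□ ≥ (1/(4√(2 q₂)))·‖U‖₁. -/
open Finset

namespace SKAux

lemma core (m : ℕ) (hm : 1 ≤ m) : (16:ℝ) ^ m ≤ 4 * m * (Nat.centralBinom m)^2 := by
  induction m with
  | zero => omega
  | succ k ih =>
    rcases Nat.eq_zero_or_pos k with hk | hk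
    · subst hk; norm_num [Nat.centralBinom]
    · have ih' := ih hk
      have e : ((k:ℝ)+1) * (Nat.centralBinom (k+1)) = 2*(2*k+1) * Nat.centralBinom k := by
        have := Nat.succ_mul_centralBinom_succ k
        have := congrArg (Nat.cast : ℕ → ℝ) this
        push_cast at this; linarith
      have hkpos : (0:ℝ) < (k:ℝ) + 1 := by positivity
      have hB : (0:ℝ) ≤ (Nat.centralBinom k : ℝ)^2 := by positivity
      have hk1 : (1:ℝ) ≤ (k:ℝ) := by exact_mod_cast hk
      rw [← mul_le_mul_iff_of_pos_right (mul_pos hkpos hkpos)]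
      have e2 : ((k:ℝ)+1)^2 * (Nat.centralBinom (k+1))^2
          = 4*(2*k+1)^2 * (Nat.centralBinom k)^2 := by
        have := congrArg (fun x : ℝ => x^2) e
        simp only [mul_pow] at this
        nlinarith [this]
      have s1 : (16:ℝ)^(k+1) * (((k:ℝ)+1)*((k:ℝ)+1))
          ≤ 16 * (4*k*(Nat.centralBinom k:ℝ)^2) * (((k:ℝ)+1)*((k:ℝ)+1)) := by
        have h16 : (16:ℝ)^(k+1) = 16 * 16^k := by ring
        nlinarith [ih', sq_nonneg ((k:ℝ)+1)]
      have s2 : (4:ℝ) * ((k:ℝ)+1) * (Nat.centralBinom (k+1):ℝ)^2 * (((k:ℝ)+1)*((k:ℝ)+1))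
          = 16 * ((k:ℝ)+1) * (2*(k:ℝ)+1)^2 * (Nat.centralBinom k:ℝ)^2 := by
        nlinarith [e2]
      have s3 : 16 * (4*(k:ℝ)*(Nat.centralBinom k:ℝ)^2) * (((k:ℝ)+1)*((k:ℝ)+1))
          ≤ 16 * ((k:ℝ)+1) * (2*(k:ℝ)+1)^2 * (Nat.centralBinom k:ℝ)^2 := by
        nlinarith [hB, hk1]
      push_cast
      push_cast at s1 s2 s3
      linarith

lemma chooseid (n k : ℕ) : ((n:ℝ) - k) * n.choose k = ((k:ℝ)+1) * n.choose (k+1) := by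
  rcases le_or_gt k n with h|h
  · have h1 := Nat.choose_succ_right_eq n k
    have h2 := congrArg (Nat.cast : ℕ → ℝ) h1
    push_cast [h] at h2
    linarith
  · rw [Nat.choose_eq_zero_of_lt h, Nat.choose_eq_zero_of_lt (Nat.lt_succ_of_lt h)]
    simp

lemma tele (n : ℕ) : ∀ j : ℕ, ∑ k ∈ range (j+1), ((n:ℝ) - 2*k) * n.choose k
    = ((j:ℝ)+1) * n.choose (j+1) := by
  intro j
  induction j with
  | zero => simp [Nat.choose_one_right]
  | succ j ih =>
    rw [Finset.sum_range_succ, ih]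
    have h1 := chooseid n (j+1)
    push_cast at h1 ⊢
    nlinarith [h1]

lemma Tsum (n : ℕ) (hn : 1 ≤ n) :
    ∑ k ∈ range (n+1), (n.choose k : ℝ) * |(n:ℝ) - 2*k|
      = 2 * ((n+1)/2 : ℕ) * (n.choose ((n+1)/2)) := by
  set h := (n+1)/2 with hh
  have habs : ∀ x : ℝ, |x| = 2 * max x 0 - x := by
    intro x; rcases le_or_gt 0 x with hx|hx
    · rw [abs_of_nonneg hx, max_eq_left hx]; ring
    · rw [abs_of_neg hx, max_eq_right hx.le]; ring
  have split : ∑ k ∈ range (n+1), (n.choose k : ℝ) * |(n:ℝ) - 2*k|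
      = 2 * (∑ k ∈ range (n+1), (n.choose k : ℝ) * max ((n:ℝ) - 2*k) 0)
        - ∑ k ∈ range (n+1), ((n:ℝ) - 2*k) * n.choose k := by
    rw [Finset.mul_sum, ← Finset.sum_sub_distrib]
    apply Finset.sum_congr rfl; intro k _
    rw [habs ((n:ℝ) - 2*k)]; ring
  have last : ∑ k ∈ range (n+1), ((n:ℝ) - 2*k) * n.choose k = 0 := by
    rw [tele n n, Nat.choose_succ_self]; simp
  have sub : ∑ k ∈ range (n+1), (n.choose k : ℝ) * max ((n:ℝ) - 2*k) 0
      = ∑ k ∈ range h, ((n:ℝ) - 2*k) * n.choose k := by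
    rw [← Finset.sum_subset (Finset.range_subset_range.2 (by omega : h ≤ n+1))]
    · apply Finset.sum_congr rfl
      intro k hk
      have hk' : 2*k + 1 ≤ n := by have := Finset.mem_range.1 hk; omega
      have hnn : (0:ℝ) ≤ (n:ℝ) - 2*k := by
        have : ((2*k+1 : ℕ):ℝ) ≤ (n:ℝ) := by exact_mod_cast hk'
        push_cast at this; linarith
      rw [max_eq_left hnn]; ring
    · intro k hk hk2
      have hk' : n ≤ 2*k := by
        have h1 := Finset.mem_range.1 hk
        have h2 : h ≤ k := by by_contra hc; exact hk2 (Finset.mem_range.2 (by omega))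
        omega
      have : max ((n:ℝ) - 2*k) 0 = 0 := by
        apply max_eq_right
        have : (n:ℝ) ≤ ((2*k:ℕ):ℝ) := by exact_mod_cast hk'
        push_cast at this; linarith
      rw [this, mul_zero]
  have hge : 1 ≤ h := by omega
  have tel2 : ∑ k ∈ range h, ((n:ℝ) - 2*k) * n.choose k = (h:ℝ) * n.choose h := by
    obtain ⟨j, hj⟩ : ∃ j, h = j + 1 := ⟨h - 1, by omega⟩
    rw [hj, tele n j]; push_cast; ring
  rw [split, last, sub, tel2]; ring

lemma Tbound_sq (n : ℕ) (hn : 1 ≤ n) :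
    ((2:ℝ)^n * n)^2 ≤ (2*n) * (2 * (((n+1)/2 : ℕ):ℝ) * (n.choose ((n+1)/2) : ℝ))^2 := by
  rcases Nat.even_or_odd n with ⟨m,hm⟩|⟨m,hm⟩
  · subst hm
    have hm1 : 1 ≤ m := by omega
    have hh : (m+m+1)/2 = m := by omega
    rw [hh]
    have hcb : (m+m).choose m = Nat.centralBinom m := by
      rw [Nat.centralBinom]; congr 1; omega
    rw [hcb]
    have h16 : (16:ℝ)^m = ((2:ℝ)^(m+m))^2 := by
      rw [← pow_mul, show (16:ℝ) = 2^4 by norm_num, ← pow_mul]; congr 1; omega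
    have hc := mul_le_mul_of_nonneg_left (core m hm1)
      (by positivity : (0:ℝ) ≤ 4*(m:ℝ)^2)
    rw [h16] at hc
    push_cast at hc ⊢
    nlinarith [hc, sq_nonneg ((2:ℝ)^(m+m)), sq_nonneg ((Nat.centralBinom m : ℝ))]
  · subst hm
    have hh : (2*m+1+1)/2 = m+1 := by omega
    rw [hh]
    have hcb : Nat.centralBinom (m+1) = 2 * ((2*m+1).choose (m+1)) := by
      rw [Nat.centralBinom, show 2*(m+1) = (2*m+1)+1 by ring, Nat.choose_succ_succ]
      have hs : (2*m+1).choose m = (2*m+1).choose (m+1) := by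
        rw [← Nat.choose_symm (by omega : m+1 ≤ 2*m+1)]
        congr 1; omega
      simp only [Nat.succ_eq_add_one]
      omega
    have hc := core (m+1) (by omega)
    rw [hcb] at hc
    push_cast at hc ⊢
    have h16 : (16:ℝ)^(m+1) = 4 * ((2:ℝ)^(2*m+1))^2 := by
      rw [← pow_mul, show (16:ℝ)^(m+1) = (2^4)^(m+1) by norm_num, ← pow_mul]
      rw [show (2*m+1)*2 = 4*m+2 by ring, show 4*(m+1) = (4*m+2)+2 by ring, pow_add]
      ring
    rw [h16] at hc
    nlinarith [hc, sq_nonneg ((2:ℝ)^(2*m+1)), sq_nonneg (((2*m+1).choose (m+1) : ℝ)),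
      mul_le_mul_of_nonneg_left hc (by positivity : (0:ℝ) ≤ 2*(m:ℝ)+1)]

/-- The key lower bound `∑ C(n,k)|n-2k| ≥ 2^n √(n/2)`, in product form. -/
lemma Tbound (n : ℕ) (hn : 1 ≤ n) :
    (2:ℝ)^n * n ≤ Real.sqrt (2*n) * ∑ k ∈ range (n+1), (n.choose k : ℝ) * |(n:ℝ) - 2*k| := by
  rw [Tsum n hn]
  set t : ℝ := 2 * (((n+1)/2 : ℕ):ℝ) * (n.choose ((n+1)/2) : ℝ) with ht
  have htnn : 0 ≤ t := by positivity
  have ha : (0:ℝ) ≤ (2:ℝ)^n * n := by positivity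
  have hsq := Tbound_sq n hn
  calc (2:ℝ)^n * n = Real.sqrt (((2:ℝ)^n * n)^2) := (Real.sqrt_sq ha).symm
    _ ≤ Real.sqrt ((2*n) * t^2) := Real.sqrt_le_sqrt hsq
    _ = Real.sqrt (2*n) * t := by
        rw [Real.sqrt_mul (by positivity), Real.sqrt_sq htnn]

end SKAux

namespace Sgn

open scoped symmDiff

variable {n : ℕ}

/-- ±1 sign pattern associated to a subset. -/
def sg (A : Finset (Fin n)) (b : Fin n) : ℝ := if b ∈ A then 1 else -1

def Ssum (A : Finset (Fin n)) : ℝ := ∑ b, sg A b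

noncomputable def rsgn (x : ℝ) : ℝ := if x < 0 then -1 else if 0 < x then 1 else 0

lemma abs_rsgn_le (x : ℝ) : |rsgn x| ≤ 1 := by
  unfold rsgn; split_ifs <;> simp

lemma mul_rsgn (x : ℝ) : x * rsgn x = |x| := by
  unfold rsgn
  rcases lt_trichotomy x 0 with h|h|h
  · rw [if_pos h, abs_of_neg h]; ring
  · simp [h]
  · rw [if_neg (not_lt.2 h.le), if_pos h, abs_of_pos h]; ring

lemma Ssum_eq (A : Finset (Fin n)) : Ssum A = 2 * A.card - n := by
  unfold Ssum sg
  have : ∀ b : Fin n, (if b ∈ A then (1:ℝ) else -1) = (if b ∈ A then (2:ℝ) else 0) - 1 := by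
    intro b; split_ifs <;> norm_num
  rw [Finset.sum_congr rfl (fun b _ => this b), Finset.sum_sub_distrib,
    Finset.sum_ite_mem, Finset.univ_inter, Finset.sum_const, Finset.sum_const]
  simp [Finset.card_univ, mul_comm]

lemma sum_abs_Ssum :
    ∑ A : Finset (Fin n), |Ssum A|
      = ∑ k ∈ range (n+1), (n.choose k : ℝ) * |(n:ℝ) - 2*k| := by
  have h1 : ∑ A : Finset (Fin n), |Ssum A|
      = ∑ A ∈ (Finset.univ : Finset (Fin n)).powerset, |2 * (A.card:ℝ) - n| := by
    rw [Finset.powerset_univ]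
    exact Finset.sum_congr rfl (fun A _ => by rw [Ssum_eq])
  rw [h1, Finset.sum_powerset]
  rw [Finset.card_univ, Fintype.card_fin]
  apply Finset.sum_congr rfl
  intro k _
  have h2 : ∀ A ∈ Finset.powersetCard k (Finset.univ : Finset (Fin n)),
      |2 * (A.card:ℝ) - n| = |(n:ℝ) - 2*k| := by
    intro A hA
    rw [(Finset.mem_powersetCard.1 hA).2, abs_sub_comm]
  rw [Finset.sum_congr rfl h2, Finset.sum_const, Finset.card_powersetCard,
    Finset.card_univ, Fintype.card_fin, nsmul_eq_mul]

/-- flips: `X_m(A ∆ C) = X_{|m|}(A)` where `C` is the negative support of `m`. -/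
lemma flip_eq (m : Fin n → ℝ) (A : Finset (Fin n)) :
    ∑ b, m b * sg (A ∆ (Finset.univ.filter (fun b => m b < 0))) b
      = ∑ b, |m b| * sg A b := by
  apply Finset.sum_congr rfl
  intro b _
  set C := Finset.univ.filter (fun b => m b < 0) with hC
  have hmem : b ∈ A ∆ C ↔ (b ∈ A ∧ b ∉ C) ∨ (b ∈ C ∧ b ∉ A) := Finset.mem_symmDiff
  by_cases hbC : b ∈ C
  · have hneg : m b < 0 := (Finset.mem_filter.1 hbC).2
    by_cases hbA : b ∈ A
    · have : b ∉ A ∆ C := by rw [hmem]; tauto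
      rw [sg, if_neg this, sg, if_pos hbA, abs_of_neg hneg]; ring
    · have : b ∈ A ∆ C := by rw [hmem]; tauto
      rw [sg, if_pos this, sg, if_neg hbA, abs_of_neg hneg]; ring
  · have hpos : 0 ≤ m b := by
      by_contra hc; exact hbC (Finset.mem_filter.2 ⟨Finset.mem_univ b, not_le.1 hc⟩)
    by_cases hbA : b ∈ A
    · have : b ∈ A ∆ C := by rw [hmem]; tauto
      rw [sg, if_pos this, sg, if_pos hbA, abs_of_nonneg hpos]
    · have : b ∉ A ∆ C := by rw [hmem]; tauto
      rw [sg, if_neg this, sg, if_neg hbA, abs_of_nonneg hpos]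

lemma sum_abs_flip (m : Fin n → ℝ) :
    ∑ A : Finset (Fin n), |∑ b, m b * sg A b|
      = ∑ A : Finset (Fin n), |∑ b, |m b| * sg A b| := by
  set C := Finset.univ.filter (fun b => m b < 0) with hC
  have hinv : Function.Involutive (fun A : Finset (Fin n) => A ∆ C) := by
    intro A; exact symmDiff_symmDiff_cancel_right C A
  rw [← Function.Bijective.sum_comp (hinv.bijective)
    (fun A => |∑ b, m b * sg A b|)]
  apply Finset.sum_congr rfl
  intro A _
  show |∑ b, m b * sg (A ∆ C) b| = _
  rw [hC, flip_eq]

/-- the coefficient `c b` is independent of `b`. -/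
lemma coeff_const (b b' : Fin n) :
    ∑ A : Finset (Fin n), sg A b * rsgn (Ssum A)
      = ∑ A : Finset (Fin n), sg A b' * rsgn (Ssum A) := by
  classical
  set π := Equiv.swap b b' with hπ
  have hbij : Function.Bijective (fun A : Finset (Fin n) => A.map π.toEmbedding) :=
    (π.finsetCongr).bijective
  rw [← Function.Bijective.sum_comp hbij (fun A => sg A b' * rsgn (Ssum A))]
  apply Finset.sum_congr rfl
  intro A _
  show sg A b * rsgn (Ssum A)
      = sg (A.map π.toEmbedding) b' * rsgn (Ssum (A.map π.toEmbedding))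
  have hmem : ∀ x, x ∈ A.map π.toEmbedding ↔ π.symm x ∈ A := by
    intro x; exact Finset.mem_map_equiv
  have hS : Ssum (A.map π.toEmbedding) = Ssum A := by
    unfold Ssum
    rw [← Equiv.sum_comp π (fun x => sg (A.map π.toEmbedding) x)]
    apply Finset.sum_congr rfl
    intro x _
    simp only [sg, hmem, Equiv.symm_apply_apply]
  rw [hS]
  congr 1
  simp only [sg, hmem, hπ, Finset.mem_map_equiv, Equiv.symm_swap, Equiv.swap_apply_right]

/-- Khintchine-type bound in product form. -/
lemma row_bound (hn : 1 ≤ n) (m : Fin n → ℝ) :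
    (∑ b, |m b|) * (∑ A : Finset (Fin n), |Ssum A|)
      ≤ (n:ℝ) * ∑ A : Finset (Fin n), |∑ b, m b * sg A b| := by
  classical
  rw [sum_abs_flip]
  set m' : Fin n → ℝ := fun b => |m b| with hm'
  have hm'nn : ∀ b, 0 ≤ m' b := fun b => abs_nonneg _
  set b₀ : Fin n := ⟨0, by omega⟩ with hb₀
  set c : ℝ := ∑ A : Finset (Fin n), sg A b₀ * rsgn (Ssum A) with hc
  have hnc : (n:ℝ) * c = ∑ A : Finset (Fin n), |Ssum A| := by
    have h1 : ∑ b : Fin n, (∑ A : Finset (Fin n), sg A b * rsgn (Ssum A)) = (n:ℝ) * c := by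
      rw [Finset.sum_congr rfl (fun b _ => coeff_const b b₀)]
      rw [Finset.sum_const, Finset.card_univ, Fintype.card_fin, nsmul_eq_mul]
    rw [← h1, Finset.sum_comm]
    apply Finset.sum_congr rfl
    intro A _
    rw [← Finset.sum_mul, ← Ssum, mul_rsgn]
  have hcnn : 0 ≤ c := by
    have h2 : 0 ≤ (n:ℝ) * c := hnc ▸ Finset.sum_nonneg (fun A _ => abs_nonneg _)
    have hn' : (0:ℝ) < n := by exact_mod_cast hn
    nlinarith
  have key : ∑ b, m' b * c ≤ ∑ A : Finset (Fin n), |∑ b, m' b * sg A b| := by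
    have h3 : ∑ A : Finset (Fin n), (∑ b, m' b * sg A b) * rsgn (Ssum A)
        = ∑ b, m' b * c := by
      have hsw : ∀ A : Finset (Fin n), (∑ b, m' b * sg A b) * rsgn (Ssum A)
          = ∑ b, m' b * (sg A b * rsgn (Ssum A)) := by
        intro A; rw [Finset.sum_mul]
        exact Finset.sum_congr rfl (fun b _ => by ring)
      rw [Finset.sum_congr rfl (fun A _ => hsw A), Finset.sum_comm]
      apply Finset.sum_congr rfl
      intro b _
      rw [← Finset.mul_sum, coeff_const b b₀]
    rw [← h3]
    apply Finset.sum_le_sum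
    intro A _
    calc (∑ b, m' b * sg A b) * rsgn (Ssum A)
        ≤ |(∑ b, m' b * sg A b) * rsgn (Ssum A)| := le_abs_self _
      _ = |∑ b, m' b * sg A b| * |rsgn (Ssum A)| := abs_mul _ _
      _ ≤ |∑ b, m' b * sg A b| * 1 :=
          mul_le_mul_of_nonneg_left (abs_rsgn_le _) (abs_nonneg _)
      _ = |∑ b, m' b * sg A b| := mul_one _
  calc (∑ b, |m b|) * (∑ A : Finset (Fin n), |Ssum A|)
      = (∑ b, m' b) * ((n:ℝ) * c) := by rw [hnc]
    _ = (n:ℝ) * (∑ b, m' b * c) := by rw [← Finset.sum_mul]; ring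
    _ ≤ (n:ℝ) * ∑ A : Finset (Fin n), |∑ b, m' b * sg A b| := by
        apply mul_le_mul_of_nonneg_left key (by positivity)

end Sgn

namespace Sgn

lemma split2 {x y c : ℝ} (h : c ≤ |x - y|) : c ≤ 2*|x| ∨ c ≤ 2*|y| := by
  by_contra hc
  push_neg at hc
  have habs : |x - y| ≤ |x| + |y| := by
    calc |x - y| = |x + -y| := by ring_nf
      _ ≤ |x| + |-y| := abs_add_le _ _
      _ = |x| + |y| := by rw [abs_neg]
  linarith [hc.1, hc.2]

lemma matrix_bound {q₁ n : ℕ} (hn : 1 ≤ n) (M : Fin q₁ → Fin n → ℝ) :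
    ∃ (S : Finset (Fin q₁)) (T : Finset (Fin n)),
      ∑ a, ∑ b, |M a b| ≤ 4 * Real.sqrt (2*n) * |∑ a ∈ S, ∑ b ∈ T, M a b| := by
  classical
  have htpos : 0 < Real.sqrt (2*(n:ℝ)) := Real.sqrt_pos.2 (by
    have : (1:ℝ) ≤ (n:ℝ) := by exact_mod_cast hn
    linarith)
  set t := Real.sqrt (2*(n:ℝ)) with ht0
  set Tn := ∑ A : Finset (Fin n), |Ssum A| with hTn
  have hTb : (2:ℝ)^n * n ≤ t * Tn := by
    rw [hTn, sum_abs_Ssum]; exact SKAux.Tbound n hn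
  set L := ∑ a, ∑ b, |M a b| with hL
  have hLnn : 0 ≤ L := Finset.sum_nonneg fun a _ =>
    Finset.sum_nonneg fun b _ => abs_nonneg _
  set G : Finset (Fin n) → ℝ := fun A => ∑ a, |∑ b, M a b * sg A b| with hG
  have hGnn : ∀ A, 0 ≤ G A := fun A => Finset.sum_nonneg fun a _ => abs_nonneg _
  have hrows : L * Tn ≤ (n:ℝ) * ∑ A : Finset (Fin n), G A := by
    calc L * Tn = ∑ a, ((∑ b, |M a b|) * Tn) := by rw [Finset.sum_mul]
      _ ≤ ∑ a, ((n:ℝ) * ∑ A : Finset (Fin n), |∑ b, M a b * sg A b|) :=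
          Finset.sum_le_sum (fun a _ => row_bound hn (M a))
      _ = (n:ℝ) * ∑ A : Finset (Fin n), G A := by
          rw [← Finset.mul_sum]
          congr 1
          rw [Finset.sum_comm]
  have hcard : ((Finset.univ : Finset (Finset (Fin n))).card : ℝ) = 2^n := by
    rw [Finset.card_univ, Fintype.card_finset, Fintype.card_fin]; push_cast; ring
  have hpow : (0:ℝ) < 2^n := by positivity
  obtain ⟨A₀, -, hA₀⟩ : ∃ A₀ ∈ (Finset.univ : Finset (Finset (Fin n))),
      (∑ A : Finset (Fin n), G A) / 2^n ≤ G A₀ := by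
    apply Finset.exists_le_of_sum_le Finset.univ_nonempty
    rw [Finset.sum_const, nsmul_eq_mul, hcard, mul_div_cancel₀ _ (ne_of_gt hpow)]
  have hA₀' : ∑ A : Finset (Fin n), G A ≤ 2^n * G A₀ := by
    rw [div_le_iff₀ hpow] at hA₀; linarith
  have hLt : L ≤ t * G A₀ := by
    have hnn : (0:ℝ) ≤ (n:ℝ) := Nat.cast_nonneg n
    have s1 : L * ((2:ℝ)^n * n) ≤ L * (t * Tn) := mul_le_mul_of_nonneg_left hTb hLnn
    have s2 : t * (L * Tn) ≤ t * ((n:ℝ) * ∑ A : Finset (Fin n), G A) :=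
      mul_le_mul_of_nonneg_left hrows htpos.le
    have s3 : t * ((n:ℝ) * ∑ A : Finset (Fin n), G A)
        ≤ t * ((n:ℝ) * (2^n * G A₀)) :=
      mul_le_mul_of_nonneg_left (mul_le_mul_of_nonneg_left hA₀' hnn) htpos.le
    have s4 : L * ((2:ℝ)^n * n) ≤ (t * G A₀) * ((2:ℝ)^n * n) := by nlinarith
    have hP : (0:ℝ) < (2:ℝ)^n * n := by
      have : (1:ℝ) ≤ (n:ℝ) := by exact_mod_cast hn
      positivity
    exact le_of_mul_le_mul_right s4 hP
  set d : Fin q₁ → ℝ := fun a => ∑ b, M a b * sg A₀ b with hd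
  have hsplit : ∀ S' : Finset (Fin q₁),
      ∑ a ∈ S', d a = (∑ a ∈ S', ∑ b ∈ A₀, M a b) - (∑ a ∈ S', ∑ b ∈ A₀ᶜ, M a b) := by
    intro S'
    rw [← Finset.sum_sub_distrib]
    apply Finset.sum_congr rfl
    intro a _
    show ∑ b, M a b * sg A₀ b = _
    have h1 : ∑ b, M a b * sg A₀ b
        = (∑ b ∈ A₀, M a b * sg A₀ b) + ∑ b ∈ A₀ᶜ, M a b * sg A₀ b :=
      (Finset.sum_add_sum_compl A₀ _).symm
    rw [h1]
    congr 1
    · apply Finset.sum_congr rfl; intro b hb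
      rw [sg, if_pos hb, mul_one]
    · rw [← Finset.sum_neg_distrib]
      apply Finset.sum_congr rfl; intro b hb
      rw [sg, if_neg (Finset.mem_compl.1 hb), mul_neg_one]
  set P : Finset (Fin q₁) := Finset.univ.filter (fun a => 0 ≤ d a) with hP
  have hGd : G A₀ = (∑ a ∈ P, d a) - ∑ a ∈ Pᶜ, d a := by
    rw [hG]
    have h2 : ∑ a, |d a| = (∑ a ∈ P, |d a|) + ∑ a ∈ Pᶜ, |d a| :=
      (Finset.sum_add_sum_compl P _).symm
    have h3 : ∑ a ∈ P, |d a| = ∑ a ∈ P, d a :=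
      Finset.sum_congr rfl fun a ha => abs_of_nonneg (Finset.mem_filter.1 ha).2
    have h4 : ∑ a ∈ Pᶜ, |d a| = -∑ a ∈ Pᶜ, d a := by
      rw [← Finset.sum_neg_distrib]
      apply Finset.sum_congr rfl
      intro a ha
      have : ¬ (0 ≤ d a) := by
        have := Finset.mem_compl.1 ha
        simpa [hP] using this
      rw [abs_of_neg (not_le.1 this)]
    show ∑ a, |d a| = _
    rw [h2, h3, h4]; ring
  have hstep1 : G A₀ ≤ |(∑ a ∈ P, d a) - ∑ a ∈ Pᶜ, d a| := by
    rw [hGd]; exact le_abs_self _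
  suffices hsuff : ∀ S' : Finset (Fin q₁), G A₀ ≤ 2*|∑ a ∈ S', d a| →
      ∃ (S : Finset (Fin q₁)) (T : Finset (Fin n)),
        L ≤ 4 * t * |∑ a ∈ S, ∑ b ∈ T, M a b| by
    rcases split2 hstep1 with hS|hS
    exacts [hsuff P hS, hsuff Pᶜ hS]
  intro S' hS'
  have heq : |∑ a ∈ S', d a|
      = |(∑ a ∈ S', ∑ b ∈ A₀, M a b) - (∑ a ∈ S', ∑ b ∈ A₀ᶜ, M a b)| := by
    rw [hsplit S']
  have h2 : G A₀ / 2 ≤ |(∑ a ∈ S', ∑ b ∈ A₀, M a b) - (∑ a ∈ S', ∑ b ∈ A₀ᶜ, M a b)| := by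
    rw [← heq]; linarith
  rcases split2 h2 with h3|h3
  · refine ⟨S', A₀, ?_⟩
    have h4 : G A₀ ≤ 4 * |∑ a ∈ S', ∑ b ∈ A₀, M a b| := by linarith
    have h5 := mul_le_mul_of_nonneg_left h4 htpos.le
    linarith
  · refine ⟨S', A₀ᶜ, ?_⟩
    have h4 : G A₀ ≤ 4 * |∑ a ∈ S', ∑ b ∈ A₀ᶜ, M a b| := by linarith
    have h5 := mul_le_mul_of_nonneg_left h4 htpos.le
    linarith

end Sgn

namespace Meas

open MeasureTheory

lemma piecewise_integral {q : ℕ} (φ : ℝ → Fin q) (hφ : Measurable φ)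
    (Z : Set ℝ) (hZ : MeasurableSet Z) (hZfin : volume Z < ⊤) (g : Fin q → ℝ) :
    ∫ y in Z, g (φ y) = ∑ c, g c * (volume (Z ∩ φ ⁻¹' {c})).toReal := by
  have hmeas : ∀ c : Fin q, MeasurableSet (Z ∩ φ ⁻¹' {c}) :=
    fun c => hZ.inter (hφ (measurableSet_singleton c))
  have hdisj : Pairwise (Function.onFun Disjoint fun c : Fin q => Z ∩ φ ⁻¹' {c}) := by
    intro c c' hcc
    simp only [Function.onFun]
    apply Set.disjoint_left.2
    rintro y ⟨-, hy⟩ ⟨-, hy'⟩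
    exact hcc ((Set.mem_singleton_iff.1 hy).symm.trans (Set.mem_singleton_iff.1 hy'))
  have hcover : Z = ⋃ c : Fin q, (Z ∩ φ ⁻¹' {c}) := by
    ext y
    constructor
    · intro hy
      exact Set.mem_iUnion.2 ⟨φ y, hy, rfl⟩
    · rintro hy
      obtain ⟨c, hc, -⟩ := Set.mem_iUnion.1 hy
      exact hc
  have hmg : Measurable (fun y => g (φ y)) := (Measurable.of_discrete (f := g)).comp hφ
  have hint : IntegrableOn (fun y => g (φ y)) Z := by
    have : IsFiniteMeasure (volume.restrict Z) :=
      ⟨by rwa [Measure.restrict_apply_univ]⟩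
    apply Integrable.mono' (integrable_const (∑ c, |g c|))
      hmg.aestronglyMeasurable
    filter_upwards with y
    calc ‖g (φ y)‖ = |g (φ y)| := rfl
      _ ≤ ∑ c, |g c| := Finset.single_le_sum (fun c _ => abs_nonneg (g c))
          (Finset.mem_univ (φ y))
  have key := integral_iUnion hmeas hdisj (hcover ▸ hint)
  rw [← hcover] at key
  rw [key, tsum_fintype]
  apply Finset.sum_congr rfl
  intro c _
  rw [setIntegral_congr_fun (hmeas c)
    (fun y hy => by show g (φ y) = g c; rw [(Set.mem_singleton_iff.1 hy.2)]),
    setIntegral_const, smul_eq_mul, mul_comm]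
  rfl

end Meas

namespace Meas

lemma piece_set {q : ℕ} (φ : ℝ → Fin q) (Z : Set ℝ) (T : Finset (Fin q)) (b : Fin q) :
    (Z ∩ φ ⁻¹' ↑T) ∩ φ ⁻¹' {b} = if b ∈ T then Z ∩ φ ⁻¹' {b} else ∅ := by
  by_cases hb : b ∈ T
  · rw [if_pos hb]
    ext y
    simp only [Set.mem_inter_iff, Set.mem_preimage, Set.mem_singleton_iff, Finset.mem_coe,
      Set.mem_empty_iff_false]
    constructor
    · rintro ⟨⟨h1, h2⟩, h3⟩; exact ⟨h1, h3⟩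
    · rintro ⟨h1, h3⟩; exact ⟨⟨h1, by rw [h3]; exact hb⟩, h3⟩
  · rw [if_neg hb]
    ext y
    simp only [Set.mem_inter_iff, Set.mem_preimage, Set.mem_singleton_iff, Finset.mem_coe,
      Set.mem_empty_iff_false, iff_false]
    rintro ⟨⟨h1, h2⟩, h3⟩
    exact hb (h3 ▸ h2)

lemma sum_if_mem {q : ℕ} (f g : Fin q → ℝ) (T : Finset (Fin q)) :
    ∑ b, f b * (if b ∈ T then g b else 0) = ∑ b ∈ T, f b * g b := by
  simp only [mul_ite, mul_zero]
  rw [Finset.sum_ite_mem, Finset.univ_inter]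

end Meas

section Main

open MeasureTheory

theorem step_kernel_cutNorm_ge_l1' {q₁ q₂ : ℕ} (𝒳 𝒴 : Set ℝ)
    (hX : MeasurableSet 𝒳) (hY : MeasurableSet 𝒴)
    (hXb : Bornology.IsBounded 𝒳) (hYb : Bornology.IsBounded 𝒴)
    (Q : Fin q₁ → Fin q₂ → ℝ) (hQ : ∀ a b, |Q a b| ≤ 1)
    (φ₁ : ℝ → Fin q₁) (φ₂ : ℝ → Fin q₂)
    (hφ₁ : Measurable φ₁) (hφ₂ : Measurable φ₂)
    (U : ℝ → ℝ → ℝ) (hU : ∀ x y, U x y = Q (φ₁ x) (φ₂ y)) :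
    (1 / (4 * Real.sqrt (2 * q₂))) *
      (∫ x in 𝒳, ∫ y in 𝒴, |U x y|) ≤
    sSup {r : ℝ | ∃ X Y : Set ℝ, MeasurableSet X ∧ MeasurableSet Y ∧
      X ⊆ 𝒳 ∧ Y ⊆ 𝒴 ∧ r = |∫ x in X, ∫ y in Y, U x y|} := by
  classical
  have hq₂ : 1 ≤ q₂ := (φ₂ 0).pos
  have hXfin : volume 𝒳 < ⊤ := hXb.measure_lt_top
  have hYfin : volume 𝒴 < ⊤ := hYb.measure_lt_top
  set v : Fin q₁ → ℝ := fun a => (volume (𝒳 ∩ φ₁ ⁻¹' {a})).toReal with hv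
  set w : Fin q₂ → ℝ := fun b => (volume (𝒴 ∩ φ₂ ⁻¹' {b})).toReal with hw
  have hvnn : ∀ a, 0 ≤ v a := fun a => ENNReal.toReal_nonneg
  have hwnn : ∀ b, 0 ≤ w b := fun b => ENNReal.toReal_nonneg
  -- Step A : the L¹ norm as a matrix sum
  have hl1 : ∫ x in 𝒳, ∫ y in 𝒴, |U x y| = ∑ a, ∑ b, |Q a b * (v a * w b)| := by
    have hinner : ∀ x : ℝ, ∫ y in 𝒴, |U x y| = ∑ b, |Q (φ₁ x) b| * w b := by
      intro x
      have h1 : ∀ y : ℝ, |U x y| = |Q (φ₁ x) (φ₂ y)| := fun y => by rw [hU]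
      simp only [h1]
      exact Meas.piecewise_integral φ₂ hφ₂ 𝒴 hY hYfin (fun b => |Q (φ₁ x) b|)
    simp only [hinner]
    rw [Meas.piecewise_integral φ₁ hφ₁ 𝒳 hX hXfin (fun a => ∑ b, |Q a b| * w b)]
    apply Finset.sum_congr rfl
    intro a _
    rw [Finset.sum_mul]
    apply Finset.sum_congr rfl
    intro b _
    rw [abs_mul, abs_of_nonneg (mul_nonneg (hvnn a) (hwnn b))]
    ring
  -- Step B : value of the cut integral on step sets
  have hval : ∀ (S : Finset (Fin q₁)) (T : Finset (Fin q₂)),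
      ∫ x in (𝒳 ∩ φ₁ ⁻¹' ↑S), ∫ y in (𝒴 ∩ φ₂ ⁻¹' ↑T), U x y
        = ∑ a ∈ S, ∑ b ∈ T, Q a b * (v a * w b) := by
    intro S T
    have hYTm : MeasurableSet (𝒴 ∩ φ₂ ⁻¹' ↑T) := hY.inter (hφ₂ .of_discrete)
    have hYTf : volume (𝒴 ∩ φ₂ ⁻¹' ↑T) < ⊤ :=
      lt_of_le_of_lt (measure_mono Set.inter_subset_left) hYfin
    have hXSm : MeasurableSet (𝒳 ∩ φ₁ ⁻¹' ↑S) := hX.inter (hφ₁ .of_discrete)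
    have hXSf : volume (𝒳 ∩ φ₁ ⁻¹' ↑S) < ⊤ :=
      lt_of_le_of_lt (measure_mono Set.inter_subset_left) hXfin
    have hpiece : ∀ b : Fin q₂, (volume ((𝒴 ∩ φ₂ ⁻¹' ↑T) ∩ φ₂ ⁻¹' {b})).toReal
        = if b ∈ T then w b else 0 := by
      intro b
      rw [Meas.piece_set]
      by_cases hb : b ∈ T
      · rw [if_pos hb, if_pos hb]
      · rw [if_neg hb, if_neg hb, measure_empty, ENNReal.toReal_zero]
    have hinner : ∀ x : ℝ, ∫ y in (𝒴 ∩ φ₂ ⁻¹' ↑T), U x y = ∑ b ∈ T, Q (φ₁ x) b * w b := by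
      intro x
      have h1 : ∀ y : ℝ, U x y = Q (φ₁ x) (φ₂ y) := hU x
      simp only [h1]
      rw [Meas.piecewise_integral φ₂ hφ₂ _ hYTm hYTf (fun b => Q (φ₁ x) b)]
      simp only [hpiece]
      exact Meas.sum_if_mem (fun b => Q (φ₁ x) b) w T
    simp only [hinner]
    have hpiece' : ∀ a : Fin q₁, (volume ((𝒳 ∩ φ₁ ⁻¹' ↑S) ∩ φ₁ ⁻¹' {a})).toReal
        = if a ∈ S then v a else 0 := by
      intro a
      rw [Meas.piece_set]
      by_cases ha : a ∈ S
      · rw [if_pos ha, if_pos ha]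
      · rw [if_neg ha, if_neg ha, measure_empty, ENNReal.toReal_zero]
    rw [Meas.piecewise_integral φ₁ hφ₁ _ hXSm hXSf (fun a => ∑ b ∈ T, Q a b * w b)]
    simp only [hpiece']
    rw [Meas.sum_if_mem (fun a => ∑ b ∈ T, Q a b * w b) v S]
    apply Finset.sum_congr rfl
    intro a _
    rw [Finset.sum_mul]
    apply Finset.sum_congr rfl
    intro b _
    ring
  -- Step C : the sup set is bounded above
  have hbdd : BddAbove {r : ℝ | ∃ X Y : Set ℝ, MeasurableSet X ∧ MeasurableSet Y ∧
      X ⊆ 𝒳 ∧ Y ⊆ 𝒴 ∧ r = |∫ x in X, ∫ y in Y, U x y|} := by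
    refine ⟨(volume 𝒴).toReal * (volume 𝒳).toReal, ?_⟩
    rintro r ⟨X', Y', hX'm, hY'm, hX's, hY's, rfl⟩
    have hX'f : volume X' < ⊤ := lt_of_le_of_lt (measure_mono hX's) hXfin
    have hY'f : volume Y' < ⊤ := lt_of_le_of_lt (measure_mono hY's) hYfin
    have hinner : ∀ x : ℝ, ‖∫ y in Y', U x y‖ ≤ (volume 𝒴).toReal := by
      intro x
      have h1 : ‖∫ y in Y', U x y‖ ≤ 1 * (volume Y').toReal := by
        apply norm_setIntegral_le_of_norm_le_const hY'f
        · intro y _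
          rw [Real.norm_eq_abs, hU]
          exact hQ _ _
      have h3 : (volume Y').toReal ≤ (volume 𝒴).toReal :=
        ENNReal.toReal_mono (ne_of_lt hYfin) (measure_mono hY's)
      linarith
    have h4 : ‖∫ x in X', ∫ y in Y', U x y‖ ≤ (volume 𝒴).toReal * (volume X').toReal := by
      apply norm_setIntegral_le_of_norm_le_const hX'f (fun x _ => hinner x)
    rw [Real.norm_eq_abs] at h4
    calc |∫ x in X', ∫ y in Y', U x y| ≤ (volume 𝒴).toReal * (volume X').toReal := h4
      _ ≤ (volume 𝒴).toReal * (volume 𝒳).toReal := by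
          apply mul_le_mul_of_nonneg_left _ ENNReal.toReal_nonneg
          exact ENNReal.toReal_mono (ne_of_lt hXfin) (measure_mono hX's)
  -- Step D : assemble
  obtain ⟨S, T, hST⟩ := Sgn.matrix_bound (q₁ := q₁) hq₂ (fun a b => Q a b * (v a * w b))

  have hmem : |∑ a ∈ S, ∑ b ∈ T, Q a b * (v a * w b)|
      ∈ {r : ℝ | ∃ X Y : Set ℝ, MeasurableSet X ∧ MeasurableSet Y ∧
        X ⊆ 𝒳 ∧ Y ⊆ 𝒴 ∧ r = |∫ x in X, ∫ y in Y, U x y|} := by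
    refine ⟨𝒳 ∩ φ₁ ⁻¹' ↑S, 𝒴 ∩ φ₂ ⁻¹' ↑T, hX.inter (hφ₁ .of_discrete),
      hY.inter (hφ₂ .of_discrete), Set.inter_subset_left, Set.inter_subset_left, ?_⟩
    rw [hval S T]
  have hle := le_csSup hbdd hmem
  have hcpos : (0:ℝ) < 4 * Real.sqrt (2 * q₂) := by
    have h6 : (0:ℝ) < Real.sqrt (2 * q₂) := Real.sqrt_pos.2 (by
      have : (1:ℝ) ≤ (q₂:ℝ) := by exact_mod_cast hq₂
      linarith)
    linarith
  rw [hl1]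
  set cs := sSup {r : ℝ | ∃ X Y : Set ℝ, MeasurableSet X ∧ MeasurableSet Y ∧
      X ⊆ 𝒳 ∧ Y ⊆ 𝒴 ∧ r = |∫ x in X, ∫ y in Y, U x y|} with hcs
  have hfin : ∑ a, ∑ b, |Q a b * (v a * w b)| ≤ 4 * Real.sqrt (2 * q₂) * cs := by
    calc ∑ a, ∑ b, |Q a b * (v a * w b)|
        ≤ 4 * Real.sqrt (2 * q₂) * |∑ a ∈ S, ∑ b ∈ T, Q a b * (v a * w b)| := hST
      _ ≤ 4 * Real.sqrt (2 * q₂) * cs := mul_le_mul_of_nonneg_left hle hcpos.le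
  calc (1 / (4 * Real.sqrt (2 * q₂))) * ∑ a, ∑ b, |Q a b * (v a * w b)|
      ≤ (1 / (4 * Real.sqrt (2 * q₂))) * (4 * Real.sqrt (2 * q₂) * cs) :=
        mul_le_mul_of_nonneg_left hfin (by positivity)
    _ = cs := by field_simp

end Main


open MeasureTheory

/-- Cut norm of a kernel over the domain `𝒳 × 𝒴`: supremum over measurable subsets
`X ⊆ 𝒳`, `Y ⊆ 𝒴` of `|∫_{X×Y} U|`. -/
noncomputable def cutNormOn (𝒳 𝒴 : Set ℝ) (U : ℝ → ℝ → ℝ) : ℝ :=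
  sSup {r : ℝ | ∃ X Y : Set ℝ, MeasurableSet X ∧ MeasurableSet Y ∧
    X ⊆ 𝒳 ∧ Y ⊆ 𝒴 ∧ r = |∫ x in X, ∫ y in Y, U x y|}

/-- `L¹` norm of a kernel over the domain `𝒳 × 𝒴`. -/
noncomputable def l1NormOn (𝒳 𝒴 : Set ℝ) (U : ℝ → ℝ → ℝ) : ℝ :=
  ∫ x in 𝒳, ∫ y in 𝒴, |U x y|

/-- For a measurable `q₁ × q₂`-step kernel `U : 𝒳 × 𝒴 → [-1,1]` on bounded measurable
subsets of `ℝ`, the cut norm satisfies `‖U‖_□ ≥ (1/(4·√(2 q₂)))·‖U‖₁`. -/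
theorem step_kernel_cutNorm_ge_l1 {q₁ q₂ : ℕ} (𝒳 𝒴 : Set ℝ)
    (hX : MeasurableSet 𝒳) (hY : MeasurableSet 𝒴)
    (hXb : Bornology.IsBounded 𝒳) (hYb : Bornology.IsBounded 𝒴)
    (Q : Fin q₁ → Fin q₂ → ℝ) (hQ : ∀ a b, |Q a b| ≤ 1)
    (φ₁ : ℝ → Fin q₁) (φ₂ : ℝ → Fin q₂)
    (hφ₁ : Measurable φ₁) (hφ₂ : Measurable φ₂)
    (U : ℝ → ℝ → ℝ) (hU : ∀ x y, U x y = Q (φ₁ x) (φ₂ y)) :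
    (1 / (4 * Real.sqrt (2 * q₂))) * l1NormOn 𝒳 𝒴 U ≤ cutNormOn 𝒳 𝒴 U := by
  unfold l1NormOn cutNormOn
  exact step_kernel_cutNorm_ge_l1' 𝒳 𝒴 hX hY hXb hYb Q hQ φ₁ φ₂ hφ₁ hφ₂ U hU
end

section
/- Let W : [0,1]² → [0,1] be a k-step kernel of the form W(x,y) = ∑_{a,b∈[k]} Q_{ab} 1_{S_a×T_b}(x,y), with Q ∈ [0,1]^{k×k} and (S_a), (T_b) measurable partitions of [0,1]. For every integer q₀ ≥ 2 there exists a q₀-step kernel W^{(ap)} : [0,1]² → [0,1] such that (i) W^{(ap)} is constant on each S_a × T_b, and (ii) ‖W − W^{(ap)}‖_□ ≤ C/√(log q₀) for a universal constant C. -/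
open MeasureTheory

set_option linter.unusedSectionVars false

namespace WR

variable {k : ℕ} {β γ : Type} [Fintype β] [DecidableEq β] [Fintype γ] [DecidableEq γ]

def cw (μ : Fin k → ℝ) (f : Fin k → β) (i : β) : ℝ := ∑ a, if f a = i then μ a else 0

def num (μ ν : Fin k → ℝ) (Q : Fin k → Fin k → ℝ) (f g : Fin k → β) (i j : β) : ℝ :=
  ∑ a, ∑ b, if f a = i ∧ g b = j then μ a * ν b * Q a b else 0

noncomputable def qavg (μ ν : Fin k → ℝ) (Q : Fin k → Fin k → ℝ) (f g : Fin k → β)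
    (i j : β) : ℝ :=
  num μ ν Q f g i j / (cw μ f i * cw ν g j)

noncomputable def app (μ ν : Fin k → ℝ) (Q : Fin k → Fin k → ℝ) (f g : Fin k → β)
    (a b : Fin k) : ℝ := qavg μ ν Q f g (f a) (g b)

noncomputable def energy (μ ν : Fin k → ℝ) (Q : Fin k → Fin k → ℝ) (f g : Fin k → β) : ℝ :=
  ∑ a, ∑ b, μ a * ν b * (app μ ν Q f g a b)^2

variable {μ ν : Fin k → ℝ} {Q : Fin k → Fin k → ℝ}

lemma collect (f g : Fin k → β) (a b : Fin k) (h : β → β → ℝ) :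
    ∑ i, ∑ j, (if f a = i ∧ g b = j then h i j else 0) = h (f a) (g b) := by
  rw [Finset.sum_eq_single (f a)]
  · rw [Finset.sum_eq_single (g b)]
    · simp
    · intro j _ hj
      exact if_neg fun hc => hj hc.2.symm
    · intro hnot; exact absurd (Finset.mem_univ _) hnot
  · intro i _ hi
    exact Finset.sum_eq_zero fun j _ => if_neg fun hc => hi hc.1.symm
  · intro hnot; exact absurd (Finset.mem_univ _) hnot

lemma sum4_comm (F : Fin k → Fin k → β → β → ℝ) :
    ∑ a, ∑ b, ∑ i, ∑ j, F a b i j = ∑ i, ∑ j, ∑ a, ∑ b, F a b i j :=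
  calc ∑ a, ∑ b, ∑ i, ∑ j, F a b i j
      = ∑ a, ∑ i, ∑ b, ∑ j, F a b i j :=
        Finset.sum_congr rfl fun a _ => Finset.sum_comm
    _ = ∑ i, ∑ a, ∑ b, ∑ j, F a b i j := Finset.sum_comm
    _ = ∑ i, ∑ a, ∑ j, ∑ b, F a b i j :=
        Finset.sum_congr rfl fun i _ => Finset.sum_congr rfl fun a _ => Finset.sum_comm
    _ = ∑ i, ∑ j, ∑ a, ∑ b, F a b i j :=
        Finset.sum_congr rfl fun i _ => Finset.sum_comm

lemma mul_cw (f g : Fin k → β) (i j : β) :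
    cw μ f i * cw ν g j = ∑ a, ∑ b, if f a = i ∧ g b = j then μ a * ν b else 0 := by
  rw [cw, cw, Finset.sum_mul_sum]
  refine Finset.sum_congr rfl fun a _ => Finset.sum_congr rfl fun b _ => ?_
  split_ifs with h1 h2 h3 <;> simp_all

section hyps
variable (hμ : ∀ a, 0 ≤ μ a) (hν : ∀ b, 0 ≤ ν b) (hQ : ∀ a b, Q a b ∈ Set.Icc (0:ℝ) 1)

include hμ hν hQ

lemma num_nonneg (f g : Fin k → β) (i j : β) : 0 ≤ num μ ν Q f g i j := by
  refine Finset.sum_nonneg fun a _ => Finset.sum_nonneg fun b _ => ?_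
  split_ifs with h
  · exact mul_nonneg (mul_nonneg (hμ a) (hν b)) (hQ a b).1
  · exact le_rfl

lemma num_le (f g : Fin k → β) (i j : β) :
    num μ ν Q f g i j ≤ cw μ f i * cw ν g j := by
  rw [mul_cw]
  refine Finset.sum_le_sum fun a _ => Finset.sum_le_sum fun b _ => ?_
  split_ifs with h
  · calc μ a * ν b * Q a b ≤ μ a * ν b * 1 :=
        mul_le_mul_of_nonneg_left (hQ a b).2 (mul_nonneg (hμ a) (hν b))
      _ = μ a * ν b := by ring
  · exact le_rfl

lemma qavg_mem (f g : Fin k → β) (i j : β) : qavg μ ν Q f g i j ∈ Set.Icc (0:ℝ) 1 := by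
  rw [qavg]
  by_cases hd : cw μ f i * cw ν g j = 0
  · have h0 : num μ ν Q f g i j = 0 :=
      le_antisymm (hd ▸ num_le hμ hν hQ f g i j) (num_nonneg hμ hν hQ f g i j)
    simp [h0]
  · have hdpos : 0 < cw μ f i * cw ν g j :=
      lt_of_le_of_ne (le_trans (num_nonneg hμ hν hQ f g i j) (num_le hμ hν hQ f g i j))
        (Ne.symm hd)
    exact ⟨div_nonneg (num_nonneg hμ hν hQ f g i j) hdpos.le,
      (div_le_one hdpos).2 (num_le hμ hν hQ f g i j)⟩

lemma app_mem (f g : Fin k → β) (a b : Fin k) : app μ ν Q f g a b ∈ Set.Icc (0:ℝ) 1 :=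
  qavg_mem hμ hν hQ f g (f a) (g b)

lemma num_eq (f g : Fin k → β) (i j : β) :
    num μ ν Q f g i j = qavg μ ν Q f g i j * (cw μ f i * cw ν g j) := by
  by_cases hd : cw μ f i * cw ν g j = 0
  · have h0 : num μ ν Q f g i j = 0 :=
      le_antisymm (hd ▸ num_le hμ hν hQ f g i j) (num_nonneg hμ hν hQ f g i j)
    simp [h0, hd]
  · rw [qavg, div_mul_cancel₀ _ hd]

lemma orth (f g : Fin k → β) (X : β → β → ℝ) :
    ∑ a, ∑ b, μ a * ν b * (Q a b - app μ ν Q f g a b) * X (f a) (g b) = 0 := by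
  calc ∑ a, ∑ b, μ a * ν b * (Q a b - app μ ν Q f g a b) * X (f a) (g b)
      = ∑ a, ∑ b, ∑ i, ∑ j, (if f a = i ∧ g b = j then
          μ a * ν b * (Q a b - qavg μ ν Q f g i j) * X i j else 0) :=
        Finset.sum_congr rfl fun a _ => Finset.sum_congr rfl fun b _ =>
          (collect f g a b (fun i j => μ a * ν b * (Q a b - qavg μ ν Q f g i j) * X i j)).symm
    _ = ∑ i, ∑ j, ∑ a, ∑ b, (if f a = i ∧ g b = j then
          μ a * ν b * (Q a b - qavg μ ν Q f g i j) * X i j else 0) :=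
        sum4_comm _
    _ = 0 := by
        refine Finset.sum_eq_zero fun i _ => Finset.sum_eq_zero fun j _ => ?_
        have expand : ∀ a b : Fin k, (if f a = i ∧ g b = j then
            μ a * ν b * (Q a b - qavg μ ν Q f g i j) * X i j else 0)
            = (if f a = i ∧ g b = j then μ a * ν b * Q a b else 0) * X i j
              - (if f a = i ∧ g b = j then μ a * ν b else 0)
                * (qavg μ ν Q f g i j * X i j) := by
          intro a b; split_ifs <;> ring
        calc ∑ a, ∑ b, (if f a = i ∧ g b = j then
              μ a * ν b * (Q a b - qavg μ ν Q f g i j) * X i j else 0)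
            = ∑ a, ∑ b, ((if f a = i ∧ g b = j then μ a * ν b * Q a b else 0) * X i j
              - (if f a = i ∧ g b = j then μ a * ν b else 0)
                * (qavg μ ν Q f g i j * X i j)) :=
              Finset.sum_congr rfl fun a _ => Finset.sum_congr rfl fun b _ => expand a b
          _ = (num μ ν Q f g i j) * X i j
              - (cw μ f i * cw ν g j) * (qavg μ ν Q f g i j * X i j) := by
              rw [mul_cw, num]
              simp only [Finset.sum_sub_distrib, ← Finset.sum_mul]
          _ = 0 := by rw [num_eq hμ hν hQ]; ring


lemma key_cross (f' g' : Fin k → γ) (F G : γ → β) :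
    ∑ a, ∑ b, μ a * ν b * (app μ ν Q f' g' a b - app μ ν Q (F ∘ f') (G ∘ g') a b)
      * app μ ν Q (F ∘ f') (G ∘ g') a b = 0 := by
  have e1 := orth hμ hν hQ (F ∘ f') (G ∘ g') (qavg μ ν Q (F ∘ f') (G ∘ g'))
  have e2 := orth hμ hν hQ f' g'
    (fun i j => qavg μ ν Q (F ∘ f') (G ∘ g') (F i) (G j))
  have expand : ∀ a b : Fin k,
      μ a * ν b * (app μ ν Q f' g' a b - app μ ν Q (F ∘ f') (G ∘ g') a b)
        * app μ ν Q (F ∘ f') (G ∘ g') a b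
      = μ a * ν b * (Q a b - app μ ν Q (F ∘ f') (G ∘ g') a b)
          * qavg μ ν Q (F ∘ f') (G ∘ g') ((F ∘ f') a) ((G ∘ g') b)
        - μ a * ν b * (Q a b - app μ ν Q f' g' a b)
          * qavg μ ν Q (F ∘ f') (G ∘ g') (F (f' a)) (G (g' b)) := by
    intro a b
    show _ = _ - μ a * ν b * (Q a b - app μ ν Q f' g' a b)
      * app μ ν Q (F ∘ f') (G ∘ g') a b
    rw [app, app]
    ring
  calc ∑ a, ∑ b, μ a * ν b * (app μ ν Q f' g' a b - app μ ν Q (F ∘ f') (G ∘ g') a b)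
      * app μ ν Q (F ∘ f') (G ∘ g') a b
      = ∑ a, ∑ b, (μ a * ν b * (Q a b - app μ ν Q (F ∘ f') (G ∘ g') a b)
          * qavg μ ν Q (F ∘ f') (G ∘ g') ((F ∘ f') a) ((G ∘ g') b)
        - μ a * ν b * (Q a b - app μ ν Q f' g' a b)
          * qavg μ ν Q (F ∘ f') (G ∘ g') (F (f' a)) (G (g' b))) :=
        Finset.sum_congr rfl fun a _ => Finset.sum_congr rfl fun b _ => expand a b
    _ = 0 := by
        simp only [Finset.sum_sub_distrib]
        rw [e1, e2]
        ring

lemma energy_split (f' g' : Fin k → γ) (F G : γ → β) :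
    energy μ ν Q f' g' = energy μ ν Q (F ∘ f') (G ∘ g')
      + ∑ a, ∑ b, μ a * ν b *
          (app μ ν Q f' g' a b - app μ ν Q (F ∘ f') (G ∘ g') a b)^2 := by
  have key := key_cross hμ hν hQ f' g' F G
  have expand : ∀ a b : Fin k, μ a * ν b * (app μ ν Q f' g' a b)^2
      = μ a * ν b * (app μ ν Q (F ∘ f') (G ∘ g') a b)^2
        + μ a * ν b * (app μ ν Q f' g' a b - app μ ν Q (F ∘ f') (G ∘ g') a b)^2
        + 2 * (μ a * ν b * (app μ ν Q f' g' a b - app μ ν Q (F ∘ f') (G ∘ g') a b)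
            * app μ ν Q (F ∘ f') (G ∘ g') a b) := by
    intro a b; ring
  calc energy μ ν Q f' g'
      = ∑ a, ∑ b, (μ a * ν b * (app μ ν Q (F ∘ f') (G ∘ g') a b)^2
        + μ a * ν b * (app μ ν Q f' g' a b - app μ ν Q (F ∘ f') (G ∘ g') a b)^2
        + 2 * (μ a * ν b * (app μ ν Q f' g' a b - app μ ν Q (F ∘ f') (G ∘ g') a b)
            * app μ ν Q (F ∘ f') (G ∘ g') a b)) :=
        Finset.sum_congr rfl fun a _ => Finset.sum_congr rfl fun b _ => expand a b
    _ = energy μ ν Q (F ∘ f') (G ∘ g')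
        + ∑ a, ∑ b, μ a * ν b *
            (app μ ν Q f' g' a b - app μ ν Q (F ∘ f') (G ∘ g') a b)^2
        + 2 * ∑ a, ∑ b, (μ a * ν b
            * (app μ ν Q f' g' a b - app μ ν Q (F ∘ f') (G ∘ g') a b)
            * app μ ν Q (F ∘ f') (G ∘ g') a b) := by
        simp only [Finset.sum_add_distrib, energy, ← Finset.mul_sum]
    _ = _ := by rw [key]; ring


variable (hμ1 : ∑ a, μ a ≤ 1) (hν1 : ∑ b, ν b ≤ 1)
include hμ1 hν1

lemma energy_le_one (f g : Fin k → β) : energy μ ν Q f g ≤ 1 := by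
  have h1 : energy μ ν Q f g ≤ ∑ a, ∑ b, μ a * ν b := by
    refine Finset.sum_le_sum fun a _ => Finset.sum_le_sum fun b _ => ?_
    have hm := app_mem hμ hν hQ f g a b
    calc μ a * ν b * (app μ ν Q f g a b)^2 ≤ μ a * ν b * 1 := by
          refine mul_le_mul_of_nonneg_left ?_ (mul_nonneg (hμ a) (hν b))
          calc (app μ ν Q f g a b)^2 ≤ 1^2 := by
                refine pow_le_pow_left₀ hm.1 hm.2 2
            _ = 1 := one_pow 2
      _ = μ a * ν b := mul_one _
  have h2 : ∑ a, ∑ b, μ a * ν b ≤ 1 := by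
    rw [← Finset.sum_mul_sum]
    calc (∑ a, μ a) * (∑ b, ν b) ≤ 1 * 1 := by
          refine mul_le_mul hμ1 hν1 (Finset.sum_nonneg fun b _ => hν b)
            (le_trans (Finset.sum_nonneg fun a _ => hμ a) hμ1)
      _ = 1 := one_mul 1
  exact le_trans h1 h2

lemma increment (f g : Fin k → β) (s t : Fin k → Bool) (ε : ℝ) (hε : 0 ≤ ε)
    (h : ε < |∑ a, ∑ b, (if s a then μ a else 0) * (if t b then ν b else 0)
      * (Q a b - app μ ν Q f g a b)|) :
    energy μ ν Q f g + ε^2 < energy μ ν Q (fun a => (f a, s a)) (fun b => (g b, t b)) := by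
  classical
  set f' : Fin k → β × Bool := fun a => (f a, s a) with hf'
  set g' : Fin k → β × Bool := fun b => (g b, t b) with hg'
  have hff : f = Prod.fst ∘ f' := rfl
  have hgg : g = Prod.fst ∘ g' := rfl
  set A : Fin k → Fin k → ℝ := app μ ν Q f g with hA
  set A' : Fin k → Fin k → ℝ := app μ ν Q f' g' with hA'
  -- the witness sum equals an inner product with Δ := A' - A
  have e2 := orth hμ hν hQ f' g'
    (fun p q => (if p.2 then (1:ℝ) else 0) * (if q.2 then (1:ℝ) else 0))
  have hS : ∑ a, ∑ b, (if s a then μ a else 0) * (if t b then ν b else 0)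
      * (Q a b - A a b)
      = ∑ a, ∑ b, μ a * ν b * ((if s a then (1:ℝ) else 0) * (if t b then (1:ℝ) else 0))
          * (A' a b - A a b) := by
    have expand : ∀ a b : Fin k,
        (if s a then μ a else 0) * (if t b then ν b else 0) * (Q a b - A a b)
        = μ a * ν b * (Q a b - A' a b)
            * ((if (f' a).2 then (1:ℝ) else 0) * (if (g' b).2 then (1:ℝ) else 0))
          + μ a * ν b * ((if s a then (1:ℝ) else 0) * (if t b then (1:ℝ) else 0))
            * (A' a b - A a b) := by
      intro a b
      show (if s a then μ a else 0) * (if t b then ν b else 0) * (Q a b - A a b)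
        = μ a * ν b * (Q a b - A' a b)
            * ((if s a then (1:ℝ) else 0) * (if t b then (1:ℝ) else 0))
          + μ a * ν b * ((if s a then (1:ℝ) else 0) * (if t b then (1:ℝ) else 0))
            * (A' a b - A a b)
      split_ifs <;> ring
    calc ∑ a, ∑ b, (if s a then μ a else 0) * (if t b then ν b else 0) * (Q a b - A a b)
        = ∑ a, ∑ b, (μ a * ν b * (Q a b - A' a b)
            * ((if (f' a).2 then (1:ℝ) else 0) * (if (g' b).2 then (1:ℝ) else 0))
          + μ a * ν b * ((if s a then (1:ℝ) else 0) * (if t b then (1:ℝ) else 0))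
            * (A' a b - A a b)) :=
          Finset.sum_congr rfl fun a _ => Finset.sum_congr rfl fun b _ => expand a b
      _ = _ := by
          simp only [Finset.sum_add_distrib]
          rw [show ∑ a, ∑ b, μ a * ν b * (Q a b - A' a b)
              * ((if (f' a).2 then (1:ℝ) else 0) * (if (g' b).2 then (1:ℝ) else 0)) = 0
            from e2]
          ring
  -- Cauchy-Schwarz
  have hCS : (∑ a, ∑ b, μ a * ν b
        * ((if s a then (1:ℝ) else 0) * (if t b then (1:ℝ) else 0)) * (A' a b - A a b))^2
      ≤ ∑ a, ∑ b, μ a * ν b * (A' a b - A a b)^2 := by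
    set e : Fin k → ℝ := fun a => if s a then 1 else 0 with he
    set h' : Fin k → ℝ := fun b => if t b then 1 else 0 with hh'
    have cs := Finset.sum_mul_sq_le_sq_mul_sq Finset.univ
      (fun p : Fin k × Fin k => Real.sqrt (μ p.1 * ν p.2) * (e p.1 * h' p.2))
      (fun p : Fin k × Fin k => Real.sqrt (μ p.1 * ν p.2) * (A' p.1 p.2 - A p.1 p.2))
    have hw : ∀ p : Fin k × Fin k, Real.sqrt (μ p.1 * ν p.2) * Real.sqrt (μ p.1 * ν p.2)
        = μ p.1 * ν p.2 := fun p => Real.mul_self_sqrt (mul_nonneg (hμ _) (hν _))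
    have l1 : ∑ p : Fin k × Fin k, (Real.sqrt (μ p.1 * ν p.2) * (e p.1 * h' p.2))
        * (Real.sqrt (μ p.1 * ν p.2) * (A' p.1 p.2 - A p.1 p.2))
        = ∑ a, ∑ b, μ a * ν b * (e a * h' b) * (A' a b - A a b) := by
      rw [Fintype.sum_prod_type]
      refine Finset.sum_congr rfl fun a _ => Finset.sum_congr rfl fun b _ => ?_
      have := hw (a, b)
      calc (Real.sqrt (μ a * ν b) * (e a * h' b))
          * (Real.sqrt (μ a * ν b) * (A' a b - A a b))
          = (Real.sqrt (μ a * ν b) * Real.sqrt (μ a * ν b)) * (e a * h' b)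
            * (A' a b - A a b) := by ring
        _ = μ a * ν b * (e a * h' b) * (A' a b - A a b) := by rw [this]
    have l2 : ∑ p : Fin k × Fin k, (Real.sqrt (μ p.1 * ν p.2) * (e p.1 * h' p.2))^2
        ≤ 1 := by
      have leq : ∀ p : Fin k × Fin k, (Real.sqrt (μ p.1 * ν p.2) * (e p.1 * h' p.2))^2
          ≤ μ p.1 * ν p.2 := by
        intro p
        have h1 : (e p.1 * h' p.2)^2 ≤ 1 := by
          simp only [he, hh', mul_pow]
          split_ifs <;> norm_num
        calc (Real.sqrt (μ p.1 * ν p.2) * (e p.1 * h' p.2))^2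
            = (μ p.1 * ν p.2) * (e p.1 * h' p.2)^2 := by
              rw [mul_pow, pow_two, hw p]
          _ ≤ (μ p.1 * ν p.2) * 1 :=
              mul_le_mul_of_nonneg_left h1 (mul_nonneg (hμ _) (hν _))
          _ = μ p.1 * ν p.2 := mul_one _
      calc ∑ p : Fin k × Fin k, (Real.sqrt (μ p.1 * ν p.2) * (e p.1 * h' p.2))^2
          ≤ ∑ p : Fin k × Fin k, μ p.1 * ν p.2 :=
            Finset.sum_le_sum fun p _ => leq p
        _ = (∑ a, μ a) * (∑ b, ν b) := by
            rw [Fintype.sum_prod_type, Finset.sum_mul_sum]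
        _ ≤ 1 * 1 := mul_le_mul hμ1 hν1 (Finset.sum_nonneg fun b _ => hν b)
            (le_trans (Finset.sum_nonneg fun a _ => hμ a) hμ1)
        _ = 1 := one_mul 1
    have l3 : ∑ p : Fin k × Fin k, (Real.sqrt (μ p.1 * ν p.2) * (A' p.1 p.2 - A p.1 p.2))^2
        = ∑ a, ∑ b, μ a * ν b * (A' a b - A a b)^2 := by
      rw [Fintype.sum_prod_type]
      refine Finset.sum_congr rfl fun a _ => Finset.sum_congr rfl fun b _ => ?_
      rw [mul_pow, pow_two (Real.sqrt _), hw (a, b)]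
    have hΔnn : 0 ≤ ∑ a, ∑ b, μ a * ν b * (A' a b - A a b)^2 :=
      Finset.sum_nonneg fun a _ => Finset.sum_nonneg fun b _ =>
        mul_nonneg (mul_nonneg (hμ a) (hν b)) (sq_nonneg _)
    calc (∑ a, ∑ b, μ a * ν b * (e a * h' b) * (A' a b - A a b))^2
        ≤ (∑ p : Fin k × Fin k, (Real.sqrt (μ p.1 * ν p.2) * (e p.1 * h' p.2))^2)
          * ∑ p : Fin k × Fin k, (Real.sqrt (μ p.1 * ν p.2) * (A' p.1 p.2 - A p.1 p.2))^2 := by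
          rw [← l1]; exact cs
      _ ≤ 1 * ∑ a, ∑ b, μ a * ν b * (A' a b - A a b)^2 := by
          rw [l3]; exact mul_le_mul_of_nonneg_right l2 hΔnn
      _ = _ := one_mul _
  -- conclude
  have hsplit := energy_split hμ hν hQ f' g' (Prod.fst : β × Bool → β)
    (Prod.fst : β × Bool → β)
  have hE : energy μ ν Q f' g'
      = energy μ ν Q f g + ∑ a, ∑ b, μ a * ν b * (A' a b - A a b)^2 := hsplit
  have hlt : ε^2 < ∑ a, ∑ b, μ a * ν b * (A' a b - A a b)^2 := by
    have h2 : ε < |∑ a, ∑ b, μ a * ν b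
        * ((if s a then (1:ℝ) else 0) * (if t b then (1:ℝ) else 0)) * (A' a b - A a b)| := by
      rw [← hS]; exact h
    calc ε^2 < (∑ a, ∑ b, μ a * ν b
          * ((if s a then (1:ℝ) else 0) * (if t b then (1:ℝ) else 0)) * (A' a b - A a b))^2 := by
          exact lt_of_lt_of_eq (pow_lt_pow_left₀ h2 hε (by norm_num : (2:ℕ) ≠ 0)) (sq_abs _)
      _ ≤ _ := hCS
  rw [hE]
  linarith

end hyps

def BoxBound (μ ν : Fin k → ℝ) (D : Fin k → Fin k → ℝ) (ε : ℝ) : Prop :=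
  ∀ x y : Fin k → ℝ, (∀ a, 0 ≤ x a ∧ x a ≤ μ a) → (∀ b, 0 ≤ y b ∧ y b ≤ ν b) →
    |∑ a, ∑ b, x a * y b * D a b| ≤ ε

lemma lin_vertex (w c x : Fin k → ℝ) (hx : ∀ a, 0 ≤ x a ∧ x a ≤ w a) :
    ∃ s : Fin k → Bool, |∑ a, x a * c a| ≤ |∑ a, (if s a then w a else 0) * c a| := by
  classical
  have hU : ∑ a, x a * c a ≤ ∑ a, (if 0 ≤ c a then w a else 0) * c a :=
    Finset.sum_le_sum fun a _ => by
      by_cases hc : 0 ≤ c a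
      · simp only [if_pos hc]; exact mul_le_mul_of_nonneg_right (hx a).2 hc
      · simp only [if_neg hc]; push_neg at hc
        rw [zero_mul]
        exact mul_nonpos_of_nonneg_of_nonpos (hx a).1 hc.le
  have hL : ∑ a, (if 0 ≤ c a then 0 else w a) * c a ≤ ∑ a, x a * c a :=
    Finset.sum_le_sum fun a _ => by
      by_cases hc : 0 ≤ c a
      · simp only [if_pos hc]; rw [zero_mul]; exact mul_nonneg (hx a).1 hc
      · simp only [if_neg hc]; push_neg at hc
        exact mul_le_mul_of_nonpos_right (hx a).2 hc.le
  have habs := abs_le_max_abs_abs hL hU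
  rcases le_max_iff.1 habs with hcase | hcase
  · refine ⟨fun a => if 0 ≤ c a then false else true, ?_⟩
    have heq : ∑ a, (if (if 0 ≤ c a then false else true) = true then w a else 0) * c a
        = ∑ a, (if 0 ≤ c a then 0 else w a) * c a :=
      Finset.sum_congr rfl fun a _ => by by_cases hc : 0 ≤ c a <;> simp [hc]
    rw [heq]; exact hcase
  · refine ⟨fun a => if 0 ≤ c a then true else false, ?_⟩
    have heq : ∑ a, (if (if 0 ≤ c a then true else false) = true then w a else 0) * c a
        = ∑ a, (if 0 ≤ c a then w a else 0) * c a :=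
      Finset.sum_congr rfl fun a _ => by by_cases hc : 0 ≤ c a <;> simp [hc]
    rw [heq]; exact hcase

lemma vertex (μ ν : Fin k → ℝ) (D : Fin k → Fin k → ℝ) (x y : Fin k → ℝ)
    (hx : ∀ a, 0 ≤ x a ∧ x a ≤ μ a) (hy : ∀ b, 0 ≤ y b ∧ y b ≤ ν b) :
    ∃ s t : Fin k → Bool, |∑ a, ∑ b, x a * y b * D a b| ≤
      |∑ a, ∑ b, (if s a then μ a else 0) * (if t b then ν b else 0) * D a b| := by
  obtain ⟨s, hs⟩ := lin_vertex μ (fun a => ∑ b, y b * D a b) x hx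
  obtain ⟨t, ht⟩ := lin_vertex ν (fun b => ∑ a, (if s a then μ a else 0) * D a b) y hy
  refine ⟨s, t, ?_⟩
  calc |∑ a, ∑ b, x a * y b * D a b|
      = |∑ a, x a * ∑ b, y b * D a b| := by
        congr 1
        refine Finset.sum_congr rfl fun a _ => ?_
        rw [Finset.mul_sum]
        exact Finset.sum_congr rfl fun b _ => by ring
    _ ≤ |∑ a, (if s a then μ a else 0) * ∑ b, y b * D a b| := hs
    _ = |∑ b, y b * ∑ a, (if s a then μ a else 0) * D a b| := by
        congr 1
        calc ∑ a, (if s a then μ a else 0) * ∑ b, y b * D a b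
            = ∑ a, ∑ b, y b * ((if s a then μ a else 0) * D a b) := by
              refine Finset.sum_congr rfl fun a _ => ?_
              rw [Finset.mul_sum]
              exact Finset.sum_congr rfl fun b _ => by ring
          _ = ∑ b, ∑ a, y b * ((if s a then μ a else 0) * D a b) := Finset.sum_comm
          _ = ∑ b, y b * ∑ a, (if s a then μ a else 0) * D a b := by
              refine Finset.sum_congr rfl fun b _ => ?_
              rw [Finset.mul_sum]
    _ ≤ |∑ b, (if t b then ν b else 0) * ∑ a, (if s a then μ a else 0) * D a b| := ht
    _ = |∑ a, ∑ b, (if s a then μ a else 0) * (if t b then ν b else 0) * D a b| := by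
        congr 1
        calc ∑ b, (if t b then ν b else 0) * ∑ a, (if s a then μ a else 0) * D a b
            = ∑ b, ∑ a, (if s a then μ a else 0) * (if t b then ν b else 0) * D a b := by
              refine Finset.sum_congr rfl fun b _ => ?_
              rw [Finset.mul_sum]
              exact Finset.sum_congr rfl fun a _ => by ring
          _ = ∑ a, ∑ b, (if s a then μ a else 0) * (if t b then ν b else 0) * D a b :=
              Finset.sum_comm

lemma app_relabel (e : β → γ) (he : Function.Injective e)
    (μ ν : Fin k → ℝ) (Q : Fin k → Fin k → ℝ) (f g : Fin k → β) :
    app μ ν Q (e ∘ f) (e ∘ g) = app μ ν Q f g := by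
  funext a b
  show qavg μ ν Q (e ∘ f) (e ∘ g) (e (f a)) (e (g b)) = qavg μ ν Q f g (f a) (g b)
  rw [qavg, qavg]
  congr 1
  · rw [num, num]
    refine Finset.sum_congr rfl fun a' _ => Finset.sum_congr rfl fun b' _ => ?_
    simp [Function.comp, he.eq_iff]
  · rw [cw, cw, cw, cw]
    congr 1
    · exact Finset.sum_congr rfl fun a' _ => by simp [Function.comp, he.eq_iff]
    · exact Finset.sum_congr rfl fun b' _ => by simp [Function.comp, he.eq_iff]

section main
variable {μ ν : Fin k → ℝ} {Q : Fin k → Fin k → ℝ}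
variable (hμ : ∀ a, 0 ≤ μ a) (hν : ∀ b, 0 ≤ ν b) (hQ : ∀ a b, Q a b ∈ Set.Icc (0:ℝ) 1)
variable (hμ1 : ∑ a, μ a ≤ 1) (hν1 : ∑ b, ν b ≤ 1)
include hμ hν hQ hμ1 hν1

lemma iterate (ε : ℝ) (hε : 0 ≤ ε) : ∀ m : ℕ,
    (∃ (β : Type) (_ : Fintype β) (_ : DecidableEq β) (f g : Fin k → β),
      Fintype.card β ≤ 2^m ∧
      BoxBound μ ν (fun a b => Q a b - app μ ν Q f g a b) ε) ∨
    (∃ (β : Type) (_ : Fintype β) (_ : DecidableEq β) (f g : Fin k → β),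
      Fintype.card β ≤ 2^m ∧ (m : ℝ) * ε^2 ≤ energy μ ν Q f g) := by
  intro m
  induction m with
  | zero =>
    right
    refine ⟨PUnit, inferInstance, inferInstance, fun _ => PUnit.unit, fun _ => PUnit.unit,
      by simp, ?_⟩
    simp only [Nat.cast_zero, zero_mul]
    exact Finset.sum_nonneg fun a _ => Finset.sum_nonneg fun b _ =>
      mul_nonneg (mul_nonneg (hμ a) (hν b)) (sq_nonneg _)
  | succ m ih =>
    have hpow : (2:ℕ)^m ≤ 2^(m+1) := Nat.pow_le_pow_right (by norm_num) (Nat.le_succ m)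
    rcases ih with ⟨β', i1, i2, f, g, hc, hb⟩ | ⟨β', i1, i2, f, g, hc, hE⟩
    · exact Or.inl ⟨β', i1, i2, f, g, le_trans hc hpow, hb⟩
    · by_cases hbb : BoxBound μ ν (fun a b => Q a b - app μ ν Q f g a b) ε
      · exact Or.inl ⟨β', i1, i2, f, g, le_trans hc hpow, hbb⟩
      · right
        rw [BoxBound] at hbb
        push_neg at hbb
        obtain ⟨x, y, hx, hy, hgt⟩ := hbb
        obtain ⟨s, t, hst⟩ := vertex μ ν (fun a b => Q a b - app μ ν Q f g a b) x y hx hy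
        have hinc := increment hμ hν hQ hμ1 hν1 f g s t ε hε (lt_of_lt_of_le hgt hst)
        refine ⟨β' × Bool, inferInstance, inferInstance,
          (fun a => (f a, s a)), (fun b => (g b, t b)), ?_, ?_⟩
        · rw [Fintype.card_prod, Fintype.card_bool]
          omega
        · push_cast
          nlinarith [hE, hinc]

lemma matrix_weak_reg (q₀ : ℕ) (hq : 2 ≤ q₀) :
    ∃ (F G : Fin k → Fin q₀) (Qap : Fin q₀ → Fin q₀ → ℝ),
      (∀ i j, Qap i j ∈ Set.Icc (0:ℝ) 1) ∧
      (∀ a b, Qap (F a) (G b) = app μ ν Q F G a b) ∧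
      BoxBound μ ν (fun a b => Q a b - Qap (F a) (G b))
        (2 / Real.sqrt (Real.log q₀)) := by
  classical
  set m : ℕ := Nat.log 2 q₀ with hm
  have hm1 : 1 ≤ m := by
    rw [hm]
    exact Nat.log_pos (by norm_num) hq
  have hmR : (1:ℝ) ≤ (m:ℝ) := by exact_mod_cast hm1
  have hmpos : (0:ℝ) < m := lt_of_lt_of_le one_pos hmR
  set ε : ℝ := Real.sqrt (2 / m) with hε
  have hε0 : 0 ≤ ε := Real.sqrt_nonneg _
  have hε2 : ε^2 = 2 / m := Real.sq_sqrt (by positivity)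
  rcases iterate hμ hν hQ hμ1 hν1 ε hε0 m with
    ⟨β', i1, i2, f, g, hc, hb⟩ | ⟨β', i1, i2, f, g, hc, hE⟩
  swap
  · exfalso
    have h1 : energy μ ν Q f g ≤ 1 := energy_le_one hμ hν hQ hμ1 hν1 f g
    rw [hε2] at hE
    have : (m:ℝ) * (2 / m) = 2 := by field_simp
    rw [this] at hE
    linarith
  · -- embed β' into Fin q₀
    have hcard : Fintype.card β' ≤ q₀ := le_trans hc (Nat.pow_log_le_self 2 (by omega))
    let e : β' → Fin q₀ := fun i => Fin.castLE hcard ((Fintype.equivFin β') i)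
    have he : Function.Injective e :=
      (Fin.castLE_injective hcard).comp (Fintype.equivFin β').injective
    refine ⟨e ∘ f, e ∘ g, qavg μ ν Q (e ∘ f) (e ∘ g), fun i j => qavg_mem hμ hν hQ _ _ i j,
      fun a b => rfl, ?_⟩
    have happ : ∀ a b, qavg μ ν Q (e ∘ f) (e ∘ g) ((e ∘ f) a) ((e ∘ g) b)
        = app μ ν Q f g a b := by
      intro a b
      show app μ ν Q (e ∘ f) (e ∘ g) a b = app μ ν Q f g a b
      rw [app_relabel e he]
    -- bound ε ≤ 2 / sqrt (log q₀)
    have hq1 : (1:ℝ) < q₀ := by exact_mod_cast (by omega : 1 < q₀)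
    have hlogpos : 0 < Real.log q₀ := Real.log_pos hq1
    have hlog : Real.log q₀ ≤ 2 * m := by
      have hq2 : (q₀ : ℝ) ≤ 2^(m+1) := by
        have := Nat.lt_pow_succ_log_self (by norm_num : 1 < 2) q₀
        exact_mod_cast this.le
      calc Real.log q₀ ≤ Real.log (2^(m+1)) :=
            Real.log_le_log (by positivity) hq2
        _ = (m+1) * Real.log 2 := by
            rw [Real.log_pow]; push_cast; ring
        _ ≤ (m+1) * 1 := by
            refine mul_le_mul_of_nonneg_left ?_ (by positivity)
            linarith [Real.log_two_lt_d9]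
        _ ≤ 2 * m := by linarith
    have hεle : ε ≤ 2 / Real.sqrt (Real.log q₀) := by
      rw [le_div_iff₀ (Real.sqrt_pos.2 hlogpos)]
      calc ε * Real.sqrt (Real.log q₀)
          ≤ Real.sqrt (2 / m) * Real.sqrt (2 * m) := by
            refine mul_le_mul_of_nonneg_left ?_ hε0
            exact Real.sqrt_le_sqrt hlog
        _ = Real.sqrt ((2 / m) * (2 * m)) := (Real.sqrt_mul (by positivity) _).symm
        _ = Real.sqrt 4 := by
            congr 1
            field_simp
            ring
        _ = 2 := by
            rw [show (4:ℝ) = 2^2 by norm_num, Real.sqrt_sq (by norm_num)]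
    intro x y hx hy
    refine le_trans ?_ hεle
    have := hb x y hx hy
    have heq : ∑ a, ∑ b, x a * y b * (Q a b - qavg μ ν Q (e ∘ f) (e ∘ g) ((e ∘ f) a) ((e ∘ g) b))
        = ∑ a, ∑ b, x a * y b * (Q a b - app μ ν Q f g a b) :=
      Finset.sum_congr rfl fun a _ => Finset.sum_congr rfl fun b _ => by rw [happ]
    rw [heq]
    exact this

end main

end WR


section Assembly

open WR

-- collapse of a double indicator sum at a point with known classes
lemma indicator_collapse {k : ℕ} {S T : Fin k → Set ℝ}
    (hSd : Pairwise (Function.onFun Disjoint S)) (hTd : Pairwise (Function.onFun Disjoint T))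
    (R : Fin k → Fin k → ℝ) {x y : ℝ} {a b : Fin k} (hxa : x ∈ S a) (hyb : y ∈ T b) :
    ∑ a', ∑ b', Set.indicator (S a') 1 x * Set.indicator (T b') 1 y * R a' b' = R a b := by
  rw [Finset.sum_eq_single a]
  · rw [Finset.sum_eq_single b]
    · rw [Set.indicator_of_mem hxa, Set.indicator_of_mem hyb]; simp
    · intro b' _ hb'
      rw [Set.indicator_of_notMem (Set.disjoint_left.1 (hTd (id (Ne.symm hb'))) hyb)]
      ring
    · intro hnot; exact absurd (Finset.mem_univ _) hnot
  · intro a' _ ha'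
    refine Finset.sum_eq_zero fun b' _ => ?_
    rw [Set.indicator_of_notMem (Set.disjoint_left.1 (hSd (id (Ne.symm ha'))) hxa)]
    ring
  · intro hnot; exact absurd (Finset.mem_univ _) hnot

lemma single_collapse {k : ℕ} {T : Fin k → Set ℝ}
    (hTd : Pairwise (Function.onFun Disjoint T))
    (c : Fin k → ℝ) {y : ℝ} {b : Fin k} (hyb : y ∈ T b) :
    ∑ b', Set.indicator (T b') 1 y * c b' = c b := by
  rw [Finset.sum_eq_single b]
  · rw [Set.indicator_of_mem hyb]; simp
  · intro b' _ hb'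
    rw [Set.indicator_of_notMem (Set.disjoint_left.1 (hTd (id (Ne.symm hb'))) hyb)]
    ring
  · intro hnot; exact absurd (Finset.mem_univ _) hnot



/-- Weak regularity lemma for step kernels: a `k`-step kernel `W : [0,1]² → [0,1]` can
be approximated in cut norm, within `C/√(log q₀)`, by a `q₀`-step kernel which is
constant on each block `S a × T b` of the original partition. -/
theorem weak_regularity_step_kernel :
    ∃ C : ℝ, 0 < C ∧
      ∀ (k q₀ : ℕ), 2 ≤ q₀ →
      ∀ (Q : Fin k → Fin k → ℝ), (∀ a b, Q a b ∈ Set.Icc (0:ℝ) 1) →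
      ∀ (S T : Fin k → Set ℝ),
        (∀ a, MeasurableSet (S a)) → (∀ b, MeasurableSet (T b)) →
        Pairwise (Function.onFun Disjoint S) → Pairwise (Function.onFun Disjoint T) →
        (⋃ a, S a) = Set.Icc (0:ℝ) 1 → (⋃ b, T b) = Set.Icc (0:ℝ) 1 →
      ∀ (W : ℝ → ℝ → ℝ),
        (∀ x y, W x y =
          ∑ a, ∑ b, Set.indicator (S a) 1 x * Set.indicator (T b) 1 y * Q a b) →
      ∃ (Wap : ℝ → ℝ → ℝ) (ψ₁ ψ₂ : ℝ → Fin q₀) (Qap : Fin q₀ → Fin q₀ → ℝ),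
        Measurable ψ₁ ∧ Measurable ψ₂ ∧
        (∀ x y, Wap x y = Qap (ψ₁ x) (ψ₂ y)) ∧
        (∀ x y, Wap x y ∈ Set.Icc (0:ℝ) 1) ∧
        (∀ a b, ∀ x ∈ S a, ∀ x' ∈ S a, ∀ y ∈ T b, ∀ y' ∈ T b, Wap x y = Wap x' y') ∧
        cutNormOn (Set.Icc 0 1) (Set.Icc 0 1) (fun x y => W x y - Wap x y) ≤
          C / Real.sqrt (Real.log q₀) := by
  classical
  refine ⟨2, by norm_num, ?_⟩
  intro k q₀ hq Q hQ S T hSm hTm hSd hTd hSU hTU W hW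
  -- nonemptiness of the index type
  obtain ⟨a₀, ha₀⟩ : ∃ a₀ : Fin k, (0:ℝ) ∈ S a₀ := by
    have h0 : (0:ℝ) ∈ ⋃ a, S a := by rw [hSU]; exact ⟨le_refl 0, by norm_num⟩
    simpa using h0
  obtain ⟨b₀, hb₀⟩ : ∃ b₀ : Fin k, (0:ℝ) ∈ T b₀ := by
    have h0 : (0:ℝ) ∈ ⋃ b, T b := by rw [hTU]; exact ⟨le_refl 0, by norm_num⟩
    simpa using h0
  set μ : Fin k → ℝ := fun a => (volume (S a)).toReal with hμdef
  set ν : Fin k → ℝ := fun b => (volume (T b)).toReal with hνdef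
  have hSsub : ∀ a, S a ⊆ Set.Icc (0:ℝ) 1 := fun a => hSU ▸ Set.subset_iUnion S a
  have hTsub : ∀ b, T b ⊆ Set.Icc (0:ℝ) 1 := fun b => hTU ▸ Set.subset_iUnion T b
  have hIccfin : volume (Set.Icc (0:ℝ) 1) < ⊤ := by
    rw [Real.volume_Icc]; exact ENNReal.ofReal_lt_top
  have hSfin : ∀ a, volume (S a) ≠ ⊤ :=
    fun a => ne_of_lt (lt_of_le_of_lt (measure_mono (hSsub a)) hIccfin)
  have hTfin : ∀ b, volume (T b) ≠ ⊤ :=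
    fun b => ne_of_lt (lt_of_le_of_lt (measure_mono (hTsub b)) hIccfin)
  have hμnn : ∀ a, 0 ≤ μ a := fun a => ENNReal.toReal_nonneg
  have hνnn : ∀ b, 0 ≤ ν b := fun b => ENNReal.toReal_nonneg
  have hμ1 : ∑ a, μ a ≤ 1 := by
    have h1 : ∑ a, μ a = (volume (⋃ a, S a)).toReal := by
      rw [measure_iUnion hSd hSm, tsum_fintype,
        ENNReal.toReal_sum (fun a _ => hSfin a)]
    rw [h1, hSU, Real.volume_Icc]
    simp
  have hν1 : ∑ b, ν b ≤ 1 := by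
    have h1 : ∑ b, ν b = (volume (⋃ b, T b)).toReal := by
      rw [measure_iUnion hTd hTm, tsum_fintype,
        ENNReal.toReal_sum (fun b _ => hTfin b)]
    rw [h1, hTU, Real.volume_Icc]
    simp
  obtain ⟨F, G, Qap, hQap01, happ, hbox⟩ :=
    WR.matrix_weak_reg (μ := μ) (ν := ν) (Q := Q) hμnn hνnn hQ hμ1 hν1 q₀ hq
  -- the indexing maps
  set idxS : ℝ → Fin k := fun x => if h : ∃ a, x ∈ S a then h.choose else a₀ with hidxSdef
  set idxT : ℝ → Fin k := fun y => if h : ∃ b, y ∈ T b then h.choose else b₀ with hidxTdef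
  have hidxS : ∀ (a : Fin k) (x : ℝ), x ∈ S a → idxS x = a := by
    intro a x hx
    have h : ∃ a', x ∈ S a' := ⟨a, hx⟩
    have h1 : idxS x = h.choose := dif_pos h
    by_contra hne
    rw [h1] at hne
    exact Set.disjoint_left.1 (hSd hne) h.choose_spec hx
  have hidxT : ∀ (b : Fin k) (y : ℝ), y ∈ T b → idxT y = b := by
    intro b y hy
    have h : ∃ b', y ∈ T b' := ⟨b, hy⟩
    have h1 : idxT y = h.choose := dif_pos h
    by_contra hne
    rw [h1] at hne
    exact Set.disjoint_left.1 (hTd hne) h.choose_spec hy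
  have hidxSm : Measurable idxS := by
    apply measurable_to_countable'
    intro a
    have hpre : idxS ⁻¹' {a}
        = S a ∪ ((⋃ a', S a')ᶜ ∩ (if a₀ = a then Set.univ else ∅)) := by
      ext x
      simp only [Set.mem_preimage, Set.mem_singleton_iff, Set.mem_union, Set.mem_inter_iff,
        Set.mem_compl_iff, Set.mem_iUnion]
      constructor
      · intro hx
        by_cases h : ∃ a', x ∈ S a'
        · left
          have h1 : idxS x = h.choose := dif_pos h
          rw [h1] at hx
          rw [← hx]
          exact h.choose_spec
        · right
          refine ⟨by simpa using h, ?_⟩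
          have h1 : idxS x = a₀ := dif_neg h
          rw [h1] at hx
          rw [if_pos hx]
          trivial
      · rintro (hx | ⟨hn, hif⟩)
        · exact hidxS a x hx
        · have h1 : idxS x = a₀ := dif_neg (by simpa using hn)
          by_cases h0 : a₀ = a
          · rw [h1, h0]
          · rw [if_neg h0] at hif
            exact absurd hif (Set.notMem_empty x)
    rw [hpre]
    refine (hSm a).union (MeasurableSet.compl (MeasurableSet.iUnion hSm) |>.inter ?_)
    by_cases h0 : a₀ = a <;> simp [h0]
  have hidxTm : Measurable idxT := by
    apply measurable_to_countable'
    intro b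
    have hpre : idxT ⁻¹' {b}
        = T b ∪ ((⋃ b', T b')ᶜ ∩ (if b₀ = b then Set.univ else ∅)) := by
      ext y
      simp only [Set.mem_preimage, Set.mem_singleton_iff, Set.mem_union, Set.mem_inter_iff,
        Set.mem_compl_iff, Set.mem_iUnion]
      constructor
      · intro hy
        by_cases h : ∃ b', y ∈ T b'
        · left
          have h1 : idxT y = h.choose := dif_pos h
          rw [h1] at hy
          rw [← hy]
          exact h.choose_spec
        · right
          refine ⟨by simpa using h, ?_⟩
          have h1 : idxT y = b₀ := dif_neg h
          rw [h1] at hy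
          rw [if_pos hy]
          trivial
      · rintro (hy | ⟨hn, hif⟩)
        · exact hidxT b y hy
        · have h1 : idxT y = b₀ := dif_neg (by simpa using hn)
          by_cases h0 : b₀ = b
          · rw [h1, h0]
          · rw [if_neg h0] at hif
            exact absurd hif (Set.notMem_empty y)
    rw [hpre]
    refine (hTm b).union (MeasurableSet.compl (MeasurableSet.iUnion hTm) |>.inter ?_)
    by_cases h0 : b₀ = b <;> simp [h0]
  refine ⟨fun x y => Qap (F (idxS x)) (G (idxT y)), fun x => F (idxS x), fun y => G (idxT y),
    Qap, (measurable_of_countable F).comp hidxSm, (measurable_of_countable G).comp hidxTm,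
    fun x y => rfl, fun x y => hQap01 _ _, ?_, ?_⟩
  · intro a b x hx x' hx' y hy y' hy'
    simp only [hidxS a x hx, hidxS a x' hx', hidxT b y hy, hidxT b y' hy']
  · -- the cut norm bound
    set D : Fin k → Fin k → ℝ := fun a b => Q a b - Qap (F a) (G b) with hDdef
    refine Real.sSup_le ?_ (by positivity)
    rintro r ⟨X, Y, hXm, hYm, hXs, hYs, rfl⟩
    set xv : Fin k → ℝ := fun a => (volume (S a ∩ X)).toReal with hxvdef
    set yv : Fin k → ℝ := fun b => (volume (T b ∩ Y)).toReal with hyvdef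
    have hxv : ∀ a, 0 ≤ xv a ∧ xv a ≤ μ a := by
      intro a
      refine ⟨ENNReal.toReal_nonneg, ?_⟩
      refine (ENNReal.toReal_le_toReal ?_ (hSfin a)).2 (measure_mono Set.inter_subset_left)
      exact ne_of_lt (lt_of_le_of_lt (measure_mono Set.inter_subset_left)
        (lt_of_le_of_ne le_top (hSfin a)))
    have hyv : ∀ b, 0 ≤ yv b ∧ yv b ≤ ν b := by
      intro b
      refine ⟨ENNReal.toReal_nonneg, ?_⟩
      refine (ENNReal.toReal_le_toReal ?_ (hTfin b)).2 (measure_mono Set.inter_subset_left)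
      exact ne_of_lt (lt_of_le_of_lt (measure_mono Set.inter_subset_left)
        (lt_of_le_of_ne le_top (hTfin b)))
    -- pointwise description on X × Y
    have hWap : ∀ x y (a b : Fin k), x ∈ S a → y ∈ T b →
        W x y - Qap (F (idxS x)) (G (idxT y)) = D a b := by
      intro x y a b hxa hyb
      rw [hW x y, indicator_collapse hSd hTd Q hxa hyb, hidxS a x hxa, hidxT b y hyb]
    have hmemS : ∀ x ∈ X, ∃ a, x ∈ S a := by
      intro x hx
      have := hXs hx
      rw [← hSU] at this
      simpa using this
    have hmemT : ∀ y ∈ Y, ∃ b, y ∈ T b := by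
      intro y hy
      have := hYs hy
      rw [← hTU] at this
      simpa using this
    -- integrable helpers
    have hintT : ∀ (b : Fin k) (c : ℝ),
        Integrable (fun y => Set.indicator (T b) 1 y * c) (volume.restrict Y) := by
      intro b c
      have heq : (fun y => Set.indicator (T b) 1 y * c) = Set.indicator (T b) (fun _ => c) := by
        funext y
        by_cases h : y ∈ T b <;> simp [h]
      rw [heq, integrable_indicator_iff (hTm b)]
      refine integrableOn_const (ne_of_lt ?_)
      rw [Measure.restrict_apply (hTm b)]
      exact lt_of_le_of_lt (measure_mono Set.inter_subset_left)
        (lt_of_le_of_ne le_top (hTfin b))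
    have hintS : ∀ (a : Fin k) (c : ℝ),
        Integrable (fun x => Set.indicator (S a) 1 x * c) (volume.restrict X) := by
      intro a c
      have heq : (fun x => Set.indicator (S a) 1 x * c) = Set.indicator (S a) (fun _ => c) := by
        funext x
        by_cases h : x ∈ S a <;> simp [h]
      rw [heq, integrable_indicator_iff (hSm a)]
      refine integrableOn_const (ne_of_lt ?_)
      rw [Measure.restrict_apply (hSm a)]
      exact lt_of_le_of_lt (measure_mono Set.inter_subset_left)
        (lt_of_le_of_ne le_top (hSfin a))
    have hvalT : ∀ (b : Fin k) (c : ℝ),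
        ∫ y in Y, Set.indicator (T b) 1 y * c = yv b * c := by
      intro b c
      rw [integral_mul_const]
      congr 1
      rw [integral_indicator_one (hTm b), measureReal_def, Measure.restrict_apply (hTm b)]
    have hvalS : ∀ (a : Fin k) (c : ℝ),
        ∫ x in X, Set.indicator (S a) 1 x * c = xv a * c := by
      intro a c
      rw [integral_mul_const]
      congr 1
      rw [integral_indicator_one (hSm a), measureReal_def, Measure.restrict_apply (hSm a)]
    -- inner integral
    have hinner : ∀ x ∈ X, (∫ y in Y, (W x y - Qap (F (idxS x)) (G (idxT y))))
        = ∑ a, Set.indicator (S a) 1 x * (∑ b, yv b * D a b) := by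
      intro x hx
      obtain ⟨a, hxa⟩ := hmemS x hx
      have h1 : Set.EqOn (fun y => W x y - Qap (F (idxS x)) (G (idxT y)))
          (fun y => ∑ b, Set.indicator (T b) 1 y * D a b) Y := by
        intro y hy
        obtain ⟨b, hyb⟩ := hmemT y hy
        simp only
        rw [hWap x y a b hxa hyb, single_collapse hTd _ hyb]
      rw [setIntegral_congr_fun hYm h1,
        integral_finset_sum Finset.univ (fun b _ => hintT b (D a b))]
      rw [single_collapse hSd (fun a' => ∑ b, yv b * D a' b) hxa]
      exact Finset.sum_congr rfl fun b _ => hvalT b (D a b)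
    -- outer integral
    have houter : (∫ x in X, ∫ y in Y, (W x y - Qap (F (idxS x)) (G (idxT y))))
        = ∑ a, xv a * (∑ b, yv b * D a b) := by
      have h1 : Set.EqOn (fun x => ∫ y in Y, (W x y - Qap (F (idxS x)) (G (idxT y))))
          (fun x => ∑ a, Set.indicator (S a) 1 x * (∑ b, yv b * D a b)) X := fun x hx =>
        hinner x hx
      rw [setIntegral_congr_fun hXm h1,
        integral_finset_sum Finset.univ (fun a _ => hintS a (∑ b, yv b * D a b))]
      exact Finset.sum_congr rfl fun a _ => hvalS a (∑ b, yv b * D a b)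
    rw [houter]
    have hrearr : ∑ a, xv a * (∑ b, yv b * D a b) = ∑ a, ∑ b, xv a * yv b * D a b := by
      refine Finset.sum_congr rfl fun a _ => ?_
      rw [Finset.mul_sum]
      exact Finset.sum_congr rfl fun b _ => by ring
    rw [hrearr]
    exact hbox xv yv hxv hyv

end Assembly
end

section
/- Let W be a k-step kernel on [0,u]×[0,v] with W(x,y) = Q_{φ₁(x),φ₂(y)}, Q ∈ ℝ^{k×k}, and set α_a = λ(φ₁⁻¹(a)), β_b = λ(φ₂⁻¹(b)). For R ⊆ [k] define R^{l,W} = {b : ∑_{a∈R} α_a Q_{ab} > 0}, R^{r,W} = {a : ∑_{b∈R} β_b Q_{ab} > 0}, and W[S,T] = ∑_{a∈S,b∈T} α_a β_b Q_{ab}. Then for every integer 1 ≤ q ≤ k, the one-sided cut norm ‖W‖_□⁺ = sup_{X⊆[0,u],Y⊆[0,v]} ∫_{X×Y} W satisfies ‖W‖_□⁺ ≤ max over R₁,R₂⊆[k] with |R₁|,|R₂| ≤ q of W[R₂^{r,W}, R₁^{l,W}] + (u·√(k·∑_a β_a²) + v·√(k·∑_a α_a²))/√q. -/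
open MeasureTheory
open scoped Classical

/-- One-sided cut norm of a kernel over `[0,u] × [0,v]` (no absolute value). -/
noncomputable def oneSidedCutNorm (u v : ℝ) (W : ℝ → ℝ → ℝ) : ℝ :=
  sSup {r : ℝ | ∃ X Y : Set ℝ, MeasurableSet X ∧ MeasurableSet Y ∧
    X ⊆ Set.Icc 0 u ∧ Y ⊆ Set.Icc 0 v ∧ r = ∫ x in X, ∫ y in Y, W x y}

/-- The weighted block sum `W[S,T] = ∑_{a∈S, b∈T} α_a β_b Q_{ab}`. -/
noncomputable def blockSum {k : ℕ} (α β : Fin k → ℝ) (Q : Fin k → Fin k → ℝ)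
    (S T : Finset (Fin k)) : ℝ :=
  ∑ a ∈ S, ∑ b ∈ T, α a * β b * Q a b

/-- `R^{l,W} = {b : ∑_{a∈R} α_a Q_{ab} > 0}`. -/
noncomputable def leftSet {k : ℕ} (α : Fin k → ℝ) (Q : Fin k → Fin k → ℝ)
    (R : Finset (Fin k)) : Finset (Fin k) :=
  Finset.univ.filter fun b => 0 < ∑ a ∈ R, α a * Q a b

/-- `R^{r,W} = {a : ∑_{b∈R} β_b Q_{ab} > 0}`. -/
noncomputable def rightSet {k : ℕ} (β : Fin k → ℝ) (Q : Fin k → Fin k → ℝ)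
    (R : Finset (Fin k)) : Finset (Fin k) :=
  Finset.univ.filter fun a => 0 < ∑ b ∈ R, β b * Q a b

section AuxLemmas
open Finset

lemma card_filter_superset {α : Type*} [DecidableEq α] {S T : Finset α} (hTS : T ⊆ S)
    {q : ℕ} (hTq : T.card ≤ q) :
    ((S.powersetCard q).filter fun R => T ⊆ R).card = (S.card - T.card).choose (q - T.card) := by
  rw [← Finset.card_sdiff_of_subset hTS, ← Finset.card_powersetCard]
  apply Finset.card_bij' (fun R _ => R \ T) (fun P _ => P ∪ T)
  · intro R hR
    simp only [mem_filter, mem_powersetCard] at hR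
    obtain ⟨⟨hRS, hRcard⟩, hTR⟩ := hR
    simp only [mem_powersetCard]
    exact ⟨sdiff_subset_sdiff hRS (le_refl T), by rw [card_sdiff_of_subset hTR, hRcard]⟩
  · intro P hP
    simp only [mem_powersetCard] at hP
    obtain ⟨hPS, hPcard⟩ := hP
    have hdisj : Disjoint P T := (sdiff_disjoint.mono_left hPS)
    simp only [mem_filter, mem_powersetCard]
    refine ⟨⟨union_subset (hPS.trans sdiff_subset) hTS, ?_⟩, subset_union_right⟩
    rw [card_union_of_disjoint hdisj, hPcard, Nat.sub_add_cancel hTq]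
  · intro R hR
    simp only [mem_filter, mem_powersetCard] at hR
    exact sdiff_union_of_subset hR.2
  · intro P hP
    simp only [mem_powersetCard] at hP
    have hdisj : Disjoint P T := (sdiff_disjoint.mono_left hP.1)
    rw [union_sdiff_cancel_right hdisj]

lemma sum_powersetCard_sum {α : Type*} [DecidableEq α] (S : Finset α) {q : ℕ} (hq : 1 ≤ q)
    (c : α → ℝ) :
    ∑ R ∈ S.powersetCard q, ∑ a ∈ R, c a
      = ((S.card - 1).choose (q - 1) : ℝ) * ∑ a ∈ S, c a := by
  classical
  have h1 : ∀ R ∈ S.powersetCard q, ∑ a ∈ R, c a = ∑ a ∈ S, if a ∈ R then c a else 0 := by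
    intro R hR
    rw [Finset.sum_ite_mem, Finset.inter_eq_right.2 (Finset.mem_powersetCard.1 hR).1]
  rw [Finset.sum_congr rfl h1, Finset.sum_comm]
  rw [Finset.mul_sum]
  refine Finset.sum_congr rfl fun a ha => ?_
  rw [← Finset.sum_filter, Finset.sum_const, nsmul_eq_mul]
  congr 1
  have : (S.powersetCard q).filter (fun R => a ∈ R)
      = (S.powersetCard q).filter (fun R => {a} ⊆ R) := by
    simp [Finset.singleton_subset_iff]
  rw [this, card_filter_superset (Finset.singleton_subset_iff.2 ha)
    (by simpa using hq), Finset.card_singleton]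

lemma sum_powersetCard_sq {α : Type*} [DecidableEq α] (S : Finset α) {q : ℕ} (hq : 2 ≤ q)
    (c : α → ℝ) :
    ∑ R ∈ S.powersetCard q, (∑ a ∈ R, c a)^2
      = ((S.card - 1).choose (q - 1) : ℝ) * ∑ a ∈ S, (c a)^2
        + ((S.card - 2).choose (q - 2) : ℝ) * ∑ a ∈ S, ∑ b ∈ S.erase a, c a * c b := by
  classical
  have hsq : ∀ R : Finset α, (∑ a ∈ R, c a)^2
      = ∑ a ∈ R, (c a)^2 + ∑ a ∈ R, ∑ b ∈ R.erase a, c a * c b := by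
    intro R
    rw [sq, Finset.sum_mul_sum, ← Finset.sum_add_distrib]
    refine Finset.sum_congr rfl fun a ha => ?_
    rw [← Finset.add_sum_erase _ (fun b => c a * c b) ha, sq]
  simp only [hsq, Finset.sum_add_distrib]
  congr 1
  · exact sum_powersetCard_sum S (by omega) _
  · -- pair part
    have key : ∀ R ∈ S.powersetCard q, ∑ a ∈ R, ∑ b ∈ R.erase a, c a * c b
        = ∑ a ∈ S, ∑ b ∈ S.erase a, if {a, b} ⊆ R then c a * c b else 0 := by
      intro R hR
      have hRS : R ⊆ S := (Finset.mem_powersetCard.1 hR).1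
      have houter : ∑ a ∈ R, ∑ b ∈ R.erase a, c a * c b
          = ∑ a ∈ S, if a ∈ R then ∑ b ∈ R.erase a, c a * c b else 0 := by
        rw [Finset.sum_ite_mem, Finset.inter_eq_right.2 hRS]
      rw [houter]
      refine Finset.sum_congr rfl fun a _ => ?_
      by_cases haR : a ∈ R
      · simp only [haR, if_true]
        have : ∑ b ∈ R.erase a, c a * c b
            = ∑ b ∈ S.erase a, if b ∈ R then c a * c b else 0 := by
          rw [Finset.sum_ite_mem]
          apply Finset.sum_congr _ fun _ _ => rfl
          ext b
          simp only [Finset.mem_erase, Finset.mem_inter]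
          constructor
          · rintro ⟨hb, hbR⟩; exact ⟨⟨hb, hRS hbR⟩, hbR⟩
          · rintro ⟨⟨hb, _⟩, hbR⟩; exact ⟨hb, hbR⟩
        rw [this]
        refine Finset.sum_congr rfl fun b _ => ?_
        congr 1
        simp [Finset.insert_subset_iff, haR]
      · simp only [haR, if_false]
        symm
        apply Finset.sum_eq_zero
        intro b _
        rw [if_neg]
        simp [Finset.insert_subset_iff, haR]
    rw [Finset.sum_congr rfl key, Finset.sum_comm, Finset.mul_sum]
    refine Finset.sum_congr rfl fun a ha => ?_
    rw [Finset.sum_comm, Finset.mul_sum]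
    refine Finset.sum_congr rfl fun b hb => ?_
    rw [← Finset.sum_filter, Finset.sum_const, nsmul_eq_mul]
    congr 1
    have hab : a ≠ b := ((Finset.mem_erase.1 hb).1).symm
    have habS : {a, b} ⊆ S := by
      rw [Finset.insert_subset_iff, Finset.singleton_subset_iff]
      exact ⟨ha, (Finset.mem_erase.1 hb).2⟩
    have hcard2 : ({a, b} : Finset α).card = 2 := by
      rw [Finset.card_insert_of_notMem (by simpa using hab), Finset.card_singleton]
    rw [card_filter_superset habS (by rw [hcard2]; exact hq), hcard2]

lemma var_bound {α : Type*} [DecidableEq α] (S : Finset α) {q : ℕ} (hq : 1 ≤ q)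
    (hqs : q < S.card) (c : α → ℝ) :
    ∑ R ∈ S.powersetCard q, ((q : ℝ) * ∑ a ∈ S, c a - (S.card : ℝ) * ∑ a ∈ R, c a)^2
      ≤ (S.card.choose q : ℝ) * q * S.card * ∑ a ∈ S, (c a)^2 := by
  classical
  set sR : ℝ := (S.card : ℝ) with hsR
  set σ : ℝ := ∑ a ∈ S, c a with hσ
  set P : ℝ := ∑ a ∈ S, (c a)^2 with hPdef
  have hP : 0 ≤ P := Finset.sum_nonneg fun a _ => sq_nonneg _
  have hsR0 : (0:ℝ) ≤ sR := Nat.cast_nonneg _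
  clear_value sR σ P
  have expand : ∑ R ∈ S.powersetCard q, ((q : ℝ) * σ - sR * ∑ a ∈ R, c a)^2
      = (S.card.choose q : ℝ) * ((q:ℝ)*σ)^2
        - 2*((q:ℝ)*σ)*sR*(∑ R ∈ S.powersetCard q, ∑ a ∈ R, c a)
        + sR^2*(∑ R ∈ S.powersetCard q, (∑ a ∈ R, c a)^2) := by
    have h : ∀ R ∈ S.powersetCard q, ((q : ℝ) * σ - sR * ∑ a ∈ R, c a)^2
        = ((q:ℝ)*σ)^2 - (2*((q:ℝ)*σ)*sR)*(∑ a ∈ R, c a) + sR^2*(∑ a ∈ R, c a)^2 :=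
      fun R _ => by ring
    rw [Finset.sum_congr rfl h, Finset.sum_add_distrib, Finset.sum_sub_distrib,
      Finset.sum_const, ← Finset.mul_sum, ← Finset.mul_sum, nsmul_eq_mul,
      Finset.card_powersetCard]
  have hg1 : ∑ R ∈ S.powersetCard q, ∑ a ∈ R, c a
      = ((S.card - 1).choose (q - 1) : ℝ) * σ := by
    rw [hσ]; exact sum_powersetCard_sum S hq c
  rcases eq_or_lt_of_le hq with hq1 | hq2
  · -- q = 1
    subst hq1
    have hg2 : ∑ R ∈ S.powersetCard 1, (∑ a ∈ R, c a)^2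
        = ((S.card - 1).choose (1 - 1) : ℝ) * P := by
      have h : ∀ R ∈ S.powersetCard 1, (∑ a ∈ R, c a)^2 = ∑ a ∈ R, (c a)^2 := by
        intro R hR
        obtain ⟨x, rfl⟩ := Finset.card_eq_one.1 (Finset.mem_powersetCard.1 hR).2
        simp
      rw [Finset.sum_congr rfl h, sum_powersetCard_sum S le_rfl, ← hPdef]
    rw [expand, hg1, hg2]
    have hN1 : (S.card.choose 1 : ℝ) = sR := by rw [Nat.choose_one_right, hsR]
    have hA1 : ((S.card - 1).choose (1 - 1) : ℝ) = 1 := by norm_num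
    rw [hN1, hA1]
    push_cast
    nlinarith [mul_nonneg hsR0 (sq_nonneg σ), hP, hsR0, sq_nonneg σ]
  · -- 2 ≤ q
    have hq2' : 2 ≤ q := hq2
    have hs3 : 3 ≤ S.card := by omega
    set A : ℝ := ((S.card - 1).choose (q - 1) : ℝ) with hA
    set B : ℝ := ((S.card - 2).choose (q - 2) : ℝ) with hB
    set N : ℝ := (S.card.choose q : ℝ) with hN
    have hg2 : ∑ R ∈ S.powersetCard q, (∑ a ∈ R, c a)^2
        = A * P + B * (σ^2 - P) := by
      rw [sum_powersetCard_sq S hq2' c]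
      have h : ∀ a ∈ S, ∑ b ∈ S.erase a, c a * c b = c a * σ - c a * c a := by
        intro a ha
        rw [← Finset.mul_sum, Finset.sum_erase_eq_sub ha, hσ]
        ring
      have hsqs : ∑ x ∈ S, c x * c x = P := by
        rw [hPdef]
        exact Finset.sum_congr rfl fun a _ => (sq (c a)).symm
      have hD : ∑ a ∈ S, ∑ b ∈ S.erase a, c a * c b = σ^2 - P := by
        rw [Finset.sum_congr rfl h, Finset.sum_sub_distrib, ← Finset.sum_mul, ← hσ, hsqs]
        ring
      rw [hD, ← hPdef, ← hA, ← hB]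
    -- nat identities
    have hA_nat : S.card * (S.card - 1).choose (q - 1) = q * S.card.choose q := by
      have h1 := Nat.add_one_mul_choose_eq (S.card - 1) (q - 1)
      have e1 : (S.card - 1) + 1 = S.card := by omega
      have e2 : (q - 1) + 1 = q := by omega
      rw [e1, e2] at h1
      rw [h1]; ring
    have hB_nat : (S.card - 1) * (S.card - 2).choose (q - 2)
        = (S.card - 1).choose (q - 1) * (q - 1) := by
      have h2 := Nat.add_one_mul_choose_eq (S.card - 2) (q - 2)
      have e1 : (S.card - 2) + 1 = S.card - 1 := by omega
      have e2 : (q - 2) + 1 = q - 1 := by omega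
      rw [e1, e2] at h2
      exact h2
    have hBA_nat : (S.card - 2).choose (q - 2) ≤ (S.card - 1).choose (q - 1) := by
      have h3 := Nat.choose_succ_succ (S.card - 2) (q - 2)
      have e1 : (S.card - 2).succ = S.card - 1 := by omega
      have e2 : (q - 2).succ = q - 1 := by omega
      rw [e1, e2] at h3
      omega
    have hAr : sR * A = q * N := by
      rw [hA, hN, hsR]
      exact_mod_cast congrArg (Nat.cast : ℕ → ℝ) hA_nat
    have hBr : (sR - 1) * B = A * ((q:ℝ) - 1) := by
      rw [hA, hB, hsR]
      have e1 : ((S.card:ℝ)) - 1 = ((S.card - 1 : ℕ) : ℝ) := by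
        rw [Nat.cast_sub (by omega : 1 ≤ S.card)]; norm_num
      have e2 : ((q:ℝ)) - 1 = ((q - 1 : ℕ) : ℝ) := by
        rw [Nat.cast_sub (by omega : 1 ≤ q)]; norm_num
      rw [e1, e2]
      exact_mod_cast congrArg (Nat.cast : ℕ → ℝ) hB_nat
    have hBAr : B ≤ A := by rw [hA, hB]; exact_mod_cast hBA_nat
    have hB0 : (0:ℝ) ≤ B := by rw [hB]; positivity
    have h7 : sR * B ≤ (q:ℝ) * N := by
      rw [← hAr]
      exact mul_le_mul_of_nonneg_left hBAr hsR0
    have hcoeff1 : N*(q:ℝ)^2 - 2*(q:ℝ)*sR*A + sR^2*B ≤ 0 := by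
      have hsB : sR^2*B - sR*B = (q:ℝ)^2*N - (q:ℝ)*N := by
        have : sR^2*B - sR*B = sR*((sR - 1)*B) := by ring
        rw [this, hBr]
        have : sR*(A*((q:ℝ)-1)) = (sR*A)*((q:ℝ)-1) := by ring
        rw [this, hAr]; ring
      have hq2r : (q:ℝ)*(sR*A) = (q:ℝ)*((q:ℝ)*N) := by rw [hAr]
      nlinarith [hsB, hq2r, h7]
    have hcoeff2 : sR^2*(A - B) ≤ N*(q:ℝ)*sR := by
      have h8 : sR^2*A = sR*((q:ℝ)*N) := by
        have : sR^2*A = sR*(sR*A) := by ring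
        rw [this, hAr]
      nlinarith [h8, mul_nonneg (mul_nonneg hsR0 hsR0) hB0]
    rw [expand, hg1, hg2]
    have hfinal : N*((q:ℝ)*σ)^2 - 2*((q:ℝ)*σ)*sR*(A*σ) + sR^2*(A*P + B*(σ^2 - P))
        = σ^2*(N*(q:ℝ)^2 - 2*(q:ℝ)*sR*A + sR^2*B) + P*(sR^2*(A - B)) := by ring
    rw [hfinal]
    have h9 : σ^2*(N*(q:ℝ)^2 - 2*(q:ℝ)*sR*A + sR^2*B) ≤ 0 :=
      mul_nonpos_of_nonneg_of_nonpos (sq_nonneg _) hcoeff1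
    have h10 : P*(sR^2*(A - B)) ≤ P*(N*(q:ℝ)*sR) :=
      mul_le_mul_of_nonneg_left hcoeff2 hP
    have hcomm : P*(N*(q:ℝ)*sR) = N*(q:ℝ)*sR*P := by ring
    linarith [h9, h10, hcomm.le, hcomm.ge]

lemma pointwise_sign (f g c w : ℝ) (hc : 0 < c) (hw : 0 ≤ w) :
    w * max f 0 ≤ (if 0 < g then w * f else 0) + w * |f - c * g| := by
  rcases lt_or_ge 0 g with hg | hg
  · rw [if_pos hg]
    have h1 : max f 0 ≤ f + |f - c * g| :=
      max_le (le_add_of_nonneg_right (abs_nonneg _))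
        (by nlinarith [neg_abs_le (f - c * g), mul_pos hc hg])
    calc w * max f 0 ≤ w * (f + |f - c * g|) := mul_le_mul_of_nonneg_left h1 hw
      _ = w * f + w * |f - c * g| := by ring
  · rw [if_neg (not_lt.2 hg)]
    have h1 : max f 0 ≤ |f - c * g| := by
      apply max_le _ (abs_nonneg _)
      have : 0 ≤ c * (-g) := mul_nonneg hc.le (by linarith)
      calc f ≤ f - c * g := by nlinarith
        _ ≤ |f - c * g| := le_abs_self _
    calc w * max f 0 ≤ w * |f - c * g| := mul_le_mul_of_nonneg_left h1 hw
      _ = 0 + w * |f - c * g| := by ring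

lemma generic_sample {k q : ℕ} (hq : 1 ≤ q) (S : Finset (Fin k)) (M : Fin k → Fin k → ℝ)
    (w : Fin k → ℝ) (hw : ∀ b, 0 ≤ w b) (D : ℝ) (hD0 : 0 ≤ D)
    (hD : ∀ b, ∑ a ∈ S, (M a b)^2 ≤ D) :
    ∃ R : Finset (Fin k), R ⊆ S ∧ R.card ≤ q ∧
      ∑ b, w b * max (∑ a ∈ S, M a b) 0 ≤
        (∑ b ∈ Finset.univ.filter fun b => 0 < ∑ a ∈ R, M a b, w b * ∑ a ∈ S, M a b)
          + (∑ b, w b) * Real.sqrt (↑k * D) / Real.sqrt q := by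
  classical
  have hsw : (0:ℝ) ≤ ∑ b, w b := Finset.sum_nonneg fun b _ => hw b
  have herr : (0:ℝ) ≤ (∑ b, w b) * Real.sqrt (↑k * D) / Real.sqrt q :=
    div_nonneg (mul_nonneg hsw (Real.sqrt_nonneg _)) (Real.sqrt_nonneg _)
  rcases le_or_gt S.card q with hSq | hSq
  · refine ⟨S, subset_rfl, hSq, ?_⟩
    have heq : ∑ b ∈ Finset.univ.filter fun b => 0 < ∑ a ∈ S, M a b, w b * ∑ a ∈ S, M a b
        = ∑ b, w b * max (∑ a ∈ S, M a b) 0 := by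
      rw [Finset.sum_filter]
      refine Finset.sum_congr rfl fun b _ => ?_
      by_cases hb : 0 < ∑ a ∈ S, M a b
      · rw [if_pos hb, max_eq_left hb.le]
      · rw [if_neg hb, max_eq_right (not_lt.1 hb), mul_zero]
    linarith [heq.ge]
  · -- sampling case
    have hq0 : (0:ℝ) < (q:ℝ) := by exact_mod_cast hq
    have hs0 : (0:ℝ) < (S.card:ℝ) := by
      have : 0 < S.card := by omega
      exact_mod_cast this
    have hsk : S.card ≤ k := by
      simpa using Finset.card_le_card (Finset.subset_univ S)
    have hne : (S.powersetCard q).Nonempty := Finset.powersetCard_nonempty.2 hSq.le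
    have hN0 : (0:ℝ) ≤ ((S.powersetCard q).card : ℝ) := Nat.cast_nonneg _
    set E : ℝ := Real.sqrt ((q:ℝ) * ((k:ℝ) * D)) with hE
    have hE0 : 0 ≤ E := Real.sqrt_nonneg _
    -- per-b absolute-sum bound
    have habs : ∀ b, ∑ R ∈ S.powersetCard q,
        |(q:ℝ) * (∑ a ∈ S, M a b) - (S.card:ℝ) * ∑ a ∈ R, M a b|
          ≤ ((S.powersetCard q).card : ℝ) * E := by
      intro b
      have h1 : (∑ R ∈ S.powersetCard q,
          |(q:ℝ) * (∑ a ∈ S, M a b) - (S.card:ℝ) * ∑ a ∈ R, M a b|)^2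
          ≤ ((S.powersetCard q).card : ℝ) * ∑ R ∈ S.powersetCard q,
            ((q:ℝ) * (∑ a ∈ S, M a b) - (S.card:ℝ) * ∑ a ∈ R, M a b)^2 := by
        have := sq_sum_le_card_mul_sum_sq (s := S.powersetCard q)
          (f := fun R => |(q:ℝ) * (∑ a ∈ S, M a b) - (S.card:ℝ) * ∑ a ∈ R, M a b|)
        simpa [sq_abs] using this
      have h2 : ∑ R ∈ S.powersetCard q,
          ((q:ℝ) * (∑ a ∈ S, M a b) - (S.card:ℝ) * ∑ a ∈ R, M a b)^2
          ≤ ((S.powersetCard q).card:ℝ) * q * S.card * ∑ a ∈ S, (M a b)^2 := by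
        rw [Finset.card_powersetCard]
        exact var_bound S hq hSq (fun a => M a b)
      have h3 : ((S.powersetCard q).card:ℝ) * q * S.card * ∑ a ∈ S, (M a b)^2
          ≤ ((S.powersetCard q).card:ℝ) * ((q:ℝ) * ((k:ℝ) * D)) := by
        have hMb : ∑ a ∈ S, (M a b)^2 ≤ D := hD b
        have hsum0 : 0 ≤ ∑ a ∈ S, (M a b)^2 := Finset.sum_nonneg fun a _ => sq_nonneg _
        have hskR : (S.card:ℝ) ≤ (k:ℝ) := by exact_mod_cast hsk
        have e : (0:ℝ) ≤ ((S.powersetCard q).card:ℝ) * q *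
            (((k:ℝ) - S.card) * D + S.card * (D - ∑ a ∈ S, (M a b)^2)) :=
          mul_nonneg (mul_nonneg hN0 hq0.le)
            (add_nonneg (mul_nonneg (by linarith) hD0)
              (mul_nonneg hs0.le (by linarith)))
        nlinarith [e]
      have h4 : (0:ℝ) ≤ ∑ R ∈ S.powersetCard q,
          |(q:ℝ) * (∑ a ∈ S, M a b) - (S.card:ℝ) * ∑ a ∈ R, M a b| :=
        Finset.sum_nonneg fun R _ => abs_nonneg _
      have h5 : (((S.powersetCard q).card:ℝ) * E)^2
          = ((S.powersetCard q).card:ℝ)^2 * ((q:ℝ) * ((k:ℝ) * D)) := by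
        rw [mul_pow, hE, Real.sq_sqrt (by positivity)]
      have h6 : (∑ R ∈ S.powersetCard q,
          |(q:ℝ) * (∑ a ∈ S, M a b) - (S.card:ℝ) * ∑ a ∈ R, M a b|)^2
          ≤ (((S.powersetCard q).card:ℝ) * E)^2 := by
        rw [h5]
        nlinarith [h1, h2, h3, hN0]
      have hNE : 0 ≤ ((S.powersetCard q).card:ℝ) * E := mul_nonneg hN0 hE0
      nlinarith [h6, h4, hNE]
    -- averaging over R
    have havg : ∑ R ∈ S.powersetCard q, (∑ b, w b *
          |(q:ℝ) * (∑ a ∈ S, M a b) - (S.card:ℝ) * ∑ a ∈ R, M a b|)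
        ≤ ∑ R ∈ S.powersetCard q, ((∑ b, w b) * E) := by
      rw [Finset.sum_comm]
      rw [Finset.sum_const, nsmul_eq_mul]
      calc ∑ b, ∑ R ∈ S.powersetCard q, w b *
            |(q:ℝ) * (∑ a ∈ S, M a b) - (S.card:ℝ) * ∑ a ∈ R, M a b|
          = ∑ b, w b * ∑ R ∈ S.powersetCard q,
            |(q:ℝ) * (∑ a ∈ S, M a b) - (S.card:ℝ) * ∑ a ∈ R, M a b| := by
            exact Finset.sum_congr rfl fun b _ => (Finset.mul_sum _ _ _).symm
        _ ≤ ∑ b, w b * (((S.powersetCard q).card : ℝ) * E) :=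
            Finset.sum_le_sum fun b _ =>
              mul_le_mul_of_nonneg_left (habs b) (hw b)
        _ = ((S.powersetCard q).card : ℝ) * ((∑ b, w b) * E) := by
            rw [← Finset.sum_mul]; ring
    obtain ⟨R, hR, hRb⟩ := Finset.exists_le_of_sum_le hne havg
    obtain ⟨hRS, hRcard⟩ := Finset.mem_powersetCard.1 hR
    refine ⟨R, hRS, hRcard.le, ?_⟩
    have hptw : ∑ b, w b * max (∑ a ∈ S, M a b) 0
        ≤ ∑ b, ((if 0 < ∑ a ∈ R, M a b then w b * ∑ a ∈ S, M a b else 0)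
            + w b * |(∑ a ∈ S, M a b) - ((S.card:ℝ)/(q:ℝ)) * ∑ a ∈ R, M a b|) :=
      Finset.sum_le_sum fun b _ =>
        pointwise_sign _ _ _ _ (div_pos hs0 hq0) (hw b)
    rw [Finset.sum_add_distrib] at hptw
    have hdiv : ∀ b, w b * |(∑ a ∈ S, M a b) - ((S.card:ℝ)/(q:ℝ)) * ∑ a ∈ R, M a b|
        = (1/(q:ℝ)) * (w b * |(q:ℝ) * (∑ a ∈ S, M a b) - (S.card:ℝ) * ∑ a ∈ R, M a b|) := by
      intro b
      have : (∑ a ∈ S, M a b) - ((S.card:ℝ)/(q:ℝ)) * ∑ a ∈ R, M a b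
          = ((q:ℝ) * (∑ a ∈ S, M a b) - (S.card:ℝ) * ∑ a ∈ R, M a b) / (q:ℝ) := by
        field_simp
      rw [this, abs_div, abs_of_pos hq0]
      ring
    have hbound2 : ∑ b, w b * |(∑ a ∈ S, M a b) - ((S.card:ℝ)/(q:ℝ)) * ∑ a ∈ R, M a b|
        ≤ (1/(q:ℝ)) * ((∑ b, w b) * E) := by
      calc ∑ b, w b * |(∑ a ∈ S, M a b) - ((S.card:ℝ)/(q:ℝ)) * ∑ a ∈ R, M a b|
          = (1/(q:ℝ)) * ∑ b, w b *
            |(q:ℝ) * (∑ a ∈ S, M a b) - (S.card:ℝ) * ∑ a ∈ R, M a b| := by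
            rw [Finset.mul_sum]
            exact Finset.sum_congr rfl fun b _ => hdiv b
        _ ≤ (1/(q:ℝ)) * ((∑ b, w b) * E) := by
            apply mul_le_mul_of_nonneg_left hRb (by positivity)
    have hkey : (1/(q:ℝ)) * ((∑ b, w b) * E)
        = (∑ b, w b) * Real.sqrt (↑k * D) / Real.sqrt q := by
      rw [hE, Real.sqrt_mul hq0.le]
      have hsq : Real.sqrt (q:ℝ) * Real.sqrt (q:ℝ) = (q:ℝ) :=
        Real.mul_self_sqrt hq0.le
      have hsq0 : (0:ℝ) < Real.sqrt (q:ℝ) := Real.sqrt_pos.2 hq0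
      rw [eq_div_iff hsq0.ne']
      have hqinv : (q:ℝ) * (q:ℝ)⁻¹ = 1 := mul_inv_cancel₀ hq0.ne'
      linear_combination ((∑ b, w b) * Real.sqrt ((k:ℝ) * D) / (q:ℝ)) * hsq
        + ((∑ b, w b) * Real.sqrt ((k:ℝ) * D)) * hqinv
    have hfilter : ∑ b ∈ Finset.univ.filter fun b => 0 < ∑ a ∈ R, M a b,
          w b * ∑ a ∈ S, M a b
        = ∑ b, (if 0 < ∑ a ∈ R, M a b then w b * ∑ a ∈ S, M a b else 0) :=
      Finset.sum_filter _ _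
    rw [hfilter]
    linarith [hptw, hbound2, hkey.le, hkey.ge]

lemma integral_comp_step {k : ℕ} (φ : ℝ → Fin k) (hφ : Measurable φ) (A : Set ℝ)
    (hA : MeasurableSet A) (hAfin : volume A < ⊤) (F : Fin k → ℝ) :
    ∫ x in A, F (φ x) = ∑ a, F a * (volume (A ∩ φ ⁻¹' {a})).toReal := by
  have hpt : (fun x => F (φ x))
      = fun x => ∑ a, (φ ⁻¹' {a}).indicator (fun _ => F a) x := by
    funext x
    simp [Set.indicator_apply]
  rw [hpt, MeasureTheory.integral_finset_sum]
  · refine Finset.sum_congr rfl fun a _ => ?_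
    rw [MeasureTheory.setIntegral_indicator (hφ (measurableSet_singleton a)),
      MeasureTheory.setIntegral_const, smul_eq_mul, mul_comm]
    rfl
  · intro a _
    exact (MeasureTheory.integrableOn_const hAfin.ne).indicator
      (hφ (measurableSet_singleton a))

end AuxLemmas

/-- Bound on the one-sided cut norm of a `k`-step kernel in terms of block sums
indexed by subsets of size at most `q`. -/
theorem oneSidedCutNorm_le_q_subsets {k q : ℕ} (hq : 1 ≤ q) (hqk : q ≤ k)
    (u v : ℝ) (hu : 0 ≤ u) (hv : 0 ≤ v)
    (Q : Fin k → Fin k → ℝ) (hQ : ∀ a b, |Q a b| ≤ 1)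
    (φ₁ φ₂ : ℝ → Fin k) (hφ₁ : Measurable φ₁) (hφ₂ : Measurable φ₂)
    (W : ℝ → ℝ → ℝ) (hW : ∀ x y, W x y = Q (φ₁ x) (φ₂ y))
    (α β : Fin k → ℝ)
    (hα : ∀ a, α a = (volume (φ₁ ⁻¹' {a} ∩ Set.Icc 0 u)).toReal)
    (hβ : ∀ b, β b = (volume (φ₂ ⁻¹' {b} ∩ Set.Icc 0 v)).toReal) :
    oneSidedCutNorm u v W ≤
      sSup {r : ℝ | ∃ R₁ R₂ : Finset (Fin k), R₁.card ≤ q ∧ R₂.card ≤ q ∧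
          r = blockSum α β Q (rightSet β Q R₂) (leftSet α Q R₁)} +
        (u * Real.sqrt (k * ∑ a, (β a) ^ 2) + v * Real.sqrt (k * ∑ a, (α a) ^ 2)) /
          Real.sqrt q := by
  classical
  have hα0 : ∀ a, 0 ≤ α a := fun a => (hα a) ▸ ENNReal.toReal_nonneg
  have hβ0 : ∀ b, 0 ≤ β b := fun b => (hβ b) ▸ ENNReal.toReal_nonneg
  have hIccU : volume (Set.Icc (0:ℝ) u) = ENNReal.ofReal u := by
    rw [Real.volume_Icc, sub_zero]
  have hIccV : volume (Set.Icc (0:ℝ) v) = ENNReal.ofReal v := by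
    rw [Real.volume_Icc, sub_zero]
  have hIccUfin : volume (Set.Icc (0:ℝ) u) ≠ ⊤ := by
    rw [hIccU]; exact ENNReal.ofReal_ne_top
  have hIccVfin : volume (Set.Icc (0:ℝ) v) ≠ ⊤ := by
    rw [hIccV]; exact ENNReal.ofReal_ne_top
  -- sum of the α's is at most u, likewise for β
  have hsum_le : ∀ (φ : ℝ → Fin k) (c : ℝ), Measurable φ → 0 ≤ c →
      ∑ a, (volume (φ ⁻¹' {a} ∩ Set.Icc 0 c)).toReal ≤ c := by
    intro φ c hφ hc
    have hdisj : (↑(Finset.univ : Finset (Fin k)) : Set (Fin k)).PairwiseDisjoint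
        (fun a => φ ⁻¹' {a} ∩ Set.Icc 0 c) := by
      intro a _ b _ hab
      refine Set.disjoint_left.2 fun z hz hz' => hab ?_
      have h1 : φ z = a := hz.1
      have h2 : φ z = b := hz'.1
      rw [← h1, h2]
    have hmeas : ∀ a ∈ (Finset.univ : Finset (Fin k)),
        MeasurableSet (φ ⁻¹' {a} ∩ Set.Icc 0 c) := fun a _ =>
      (hφ (measurableSet_singleton a)).inter measurableSet_Icc
    have hsum := MeasureTheory.measure_biUnion_finset (μ := volume) hdisj hmeas
    have hfin : ∀ a ∈ (Finset.univ : Finset (Fin k)),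
        volume (φ ⁻¹' {a} ∩ Set.Icc 0 c) ≠ ⊤ := by
      intro a _
      exact ne_top_of_le_ne_top (by rw [Real.volume_Icc]; exact ENNReal.ofReal_ne_top)
        (measure_mono Set.inter_subset_right)
    rw [← ENNReal.toReal_sum hfin, ← hsum]
    have hle : volume (⋃ a ∈ (Finset.univ : Finset (Fin k)),
        φ ⁻¹' {a} ∩ Set.Icc 0 c) ≤ volume (Set.Icc (0:ℝ) c) :=
      measure_mono (by
        intro z hz
        simp only [Set.mem_iUnion] at hz
        obtain ⟨a, _, _, hz2⟩ := hz
        exact hz2)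
    calc (volume (⋃ a ∈ (Finset.univ : Finset (Fin k)),
          φ ⁻¹' {a} ∩ Set.Icc 0 c)).toReal
        ≤ (volume (Set.Icc (0:ℝ) c)).toReal :=
          ENNReal.toReal_mono (by rw [Real.volume_Icc]; exact ENNReal.ofReal_ne_top) hle
      _ = c := by rw [Real.volume_Icc, sub_zero, ENNReal.toReal_ofReal hc]
  have hsumα : ∑ a, α a ≤ u := by
    calc ∑ a, α a = ∑ a, (volume (φ₁ ⁻¹' {a} ∩ Set.Icc 0 u)).toReal :=
          Finset.sum_congr rfl fun a _ => hα a
      _ ≤ u := hsum_le φ₁ u hφ₁ hu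
  have hsumβ : ∑ b, β b ≤ v := by
    calc ∑ b, β b = ∑ b, (volume (φ₂ ⁻¹' {b} ∩ Set.Icc 0 v)).toReal :=
          Finset.sum_congr rfl fun b _ => hβ b
      _ ≤ v := hsum_le φ₂ v hφ₂ hv
  -- the supremum set of block sums
  set 𝒮 : Set ℝ := {r : ℝ | ∃ R₁ R₂ : Finset (Fin k), R₁.card ≤ q ∧ R₂.card ≤ q ∧
      r = blockSum α β Q (rightSet β Q R₂) (leftSet α Q R₁)} with h𝒮
  have hfin𝒮 : 𝒮.Finite := by
    apply Set.Finite.subset (Set.finite_range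
      (fun p : Finset (Fin k) × Finset (Fin k) =>
        blockSum α β Q (rightSet β Q p.2) (leftSet α Q p.1)))
    rintro r ⟨R₁, R₂, _, _, rfl⟩
    exact ⟨(R₁, R₂), rfl⟩
  have h0mem : (0:ℝ) ∈ 𝒮 := by
    refine ⟨∅, ∅, by simp, by simp, ?_⟩
    have : leftSet α Q (∅ : Finset (Fin k)) = ∅ := by
      simp [leftSet]
    rw [this]
    simp [blockSum]
  have hbdd : BddAbove 𝒮 := hfin𝒮.bddAbove
  have hM0 : 0 ≤ sSup 𝒮 := le_csSup hbdd h0mem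
  have hsqk1 : (0:ℝ) ≤ Real.sqrt (k * ∑ a, (β a) ^ 2) := Real.sqrt_nonneg _
  have hsqk2 : (0:ℝ) ≤ Real.sqrt (k * ∑ a, (α a) ^ 2) := Real.sqrt_nonneg _
  have hsq0 : (0:ℝ) ≤ Real.sqrt q := Real.sqrt_nonneg _
  have herr0 : 0 ≤ (u * Real.sqrt (k * ∑ a, (β a) ^ 2)
      + v * Real.sqrt (k * ∑ a, (α a) ^ 2)) / Real.sqrt q := by positivity
  apply Real.sSup_le _ (by linarith)
  rintro r ⟨X, Y, hX, hY, hXu, hYv, rfl⟩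
  have hXfin : volume X < ⊤ :=
    lt_of_le_of_lt (measure_mono hXu) (by rw [hIccU]; exact ENNReal.ofReal_lt_top)
  have hYfin : volume Y < ⊤ :=
    lt_of_le_of_lt (measure_mono hYv) (by rw [hIccV]; exact ENNReal.ofReal_lt_top)
  set x : Fin k → ℝ := fun a => (volume (X ∩ φ₁ ⁻¹' {a})).toReal with hx
  set y : Fin k → ℝ := fun b => (volume (Y ∩ φ₂ ⁻¹' {b})).toReal with hy
  have hx0 : ∀ a, 0 ≤ x a := fun a => ENNReal.toReal_nonneg
  have hy0 : ∀ b, 0 ≤ y b := fun b => ENNReal.toReal_nonneg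
  have hxα : ∀ a, x a ≤ α a := by
    intro a
    rw [hα]
    apply ENNReal.toReal_mono
    · exact ne_top_of_le_ne_top hIccUfin (measure_mono Set.inter_subset_right)
    · exact measure_mono fun z hz => ⟨hz.2, hXu hz.1⟩
  have hyβ : ∀ b, y b ≤ β b := by
    intro b
    rw [hβ]
    apply ENNReal.toReal_mono
    · exact ne_top_of_le_ne_top hIccVfin (measure_mono Set.inter_subset_right)
    · exact measure_mono fun z hz => ⟨hz.2, hYv hz.1⟩
  -- compute the double integral
  have hinner : ∀ x0, ∫ y0 in Y, W x0 y0 = ∑ b, Q (φ₁ x0) b * y b := by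
    intro x0
    have : (fun y0 => W x0 y0) = fun y0 => Q (φ₁ x0) (φ₂ y0) := funext fun y0 => hW x0 y0
    rw [this]
    exact integral_comp_step φ₂ hφ₂ Y hY hYfin (Q (φ₁ x0))
  have hr : ∫ x0 in X, ∫ y0 in Y, W x0 y0
      = ∑ a, (∑ b, Q a b * y b) * x a := by
    simp_rw [hinner]
    exact integral_comp_step φ₁ hφ₁ X hX hXfin (fun a => ∑ b, Q a b * y b)
  rw [hr]
  -- choose the optimal step set on the X side
  set S₀ : Finset (Fin k) := Finset.univ.filter fun a => 0 < ∑ b, Q a b * y b with hS₀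
  have hstep1 : ∑ a, (∑ b, Q a b * y b) * x a
      ≤ ∑ a ∈ S₀, α a * (∑ b, Q a b * y b) := by
    rw [hS₀, Finset.sum_filter]
    refine Finset.sum_le_sum fun a _ => ?_
    by_cases ha : 0 < ∑ b, Q a b * y b
    · rw [if_pos ha]
      calc (∑ b, Q a b * y b) * x a ≤ (∑ b, Q a b * y b) * α a :=
            mul_le_mul_of_nonneg_left (hxα a) ha.le
        _ = α a * (∑ b, Q a b * y b) := by ring
    · rw [if_neg ha]
      exact mul_nonpos_of_nonpos_of_nonneg (not_lt.1 ha) (hx0 a)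
  have hswap1 : ∑ a ∈ S₀, α a * (∑ b, Q a b * y b)
      = ∑ b, y b * (∑ a ∈ S₀, α a * Q a b) := by
    simp_rw [Finset.mul_sum]
    rw [Finset.sum_comm]
    exact Finset.sum_congr rfl fun b _ => Finset.sum_congr rfl fun a _ => by ring
  have hstep2 : ∑ b, y b * (∑ a ∈ S₀, α a * Q a b)
      ≤ ∑ b, β b * max (∑ a ∈ S₀, α a * Q a b) 0 := by
    refine Finset.sum_le_sum fun b _ => ?_
    by_cases hb : 0 < ∑ a ∈ S₀, α a * Q a b
    · rw [max_eq_left hb.le]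
      exact mul_le_mul_of_nonneg_right (hyβ b) hb.le
    · rw [max_eq_right (not_lt.1 hb), mul_zero]
      exact mul_nonpos_of_nonneg_of_nonpos (hy0 b) (not_lt.1 hb)
  -- first sampling step
  have hQ2 : ∀ a b, (Q a b)^2 ≤ 1 := by
    intro a b
    have h1 := abs_le.1 (hQ a b)
    nlinarith [h1.1, h1.2]
  have hD1 : ∀ b, ∑ a ∈ S₀, (α a * Q a b)^2 ≤ ∑ a, (α a)^2 := by
    intro b
    calc ∑ a ∈ S₀, (α a * Q a b)^2 ≤ ∑ a ∈ S₀, (α a)^2 :=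
          Finset.sum_le_sum fun a _ => by
            rw [mul_pow]
            nlinarith [sq_nonneg (α a), hQ2 a b]
      _ ≤ ∑ a, (α a)^2 :=
          Finset.sum_le_sum_of_subset_of_nonneg (Finset.subset_univ _)
            fun a _ _ => sq_nonneg _
  obtain ⟨R₁, hR₁S, hR₁card, hs1⟩ := generic_sample hq S₀ (fun a b => α a * Q a b) β hβ0
    (∑ a, (α a)^2) (Finset.sum_nonneg fun a _ => sq_nonneg _) hD1
  have hleft : (Finset.univ.filter fun b => 0 < ∑ a ∈ R₁, α a * Q a b)
      = leftSet α Q R₁ := rfl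
  rw [hleft] at hs1
  -- bridge to the second sampling step
  have hbridge : ∑ b ∈ leftSet α Q R₁, β b * ∑ a ∈ S₀, α a * Q a b
      ≤ ∑ a, α a * max (∑ b ∈ leftSet α Q R₁, β b * Q a b) 0 := by
    have e1 : ∑ b ∈ leftSet α Q R₁, β b * ∑ a ∈ S₀, α a * Q a b
        = ∑ a ∈ S₀, α a * ∑ b ∈ leftSet α Q R₁, β b * Q a b := by
      simp_rw [Finset.mul_sum]
      rw [Finset.sum_comm]
      exact Finset.sum_congr rfl fun a _ => Finset.sum_congr rfl fun b _ => by ring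
    rw [e1]
    calc ∑ a ∈ S₀, α a * ∑ b ∈ leftSet α Q R₁, β b * Q a b
        ≤ ∑ a ∈ S₀, α a * max (∑ b ∈ leftSet α Q R₁, β b * Q a b) 0 :=
          Finset.sum_le_sum fun a _ =>
            mul_le_mul_of_nonneg_left (le_max_left _ _) (hα0 a)
      _ ≤ ∑ a, α a * max (∑ b ∈ leftSet α Q R₁, β b * Q a b) 0 :=
          Finset.sum_le_sum_of_subset_of_nonneg (Finset.subset_univ _)
            fun a _ _ => mul_nonneg (hα0 a) (le_max_right _ _)
  have hD2 : ∀ a, ∑ b ∈ leftSet α Q R₁, (β b * Q a b)^2 ≤ ∑ b, (β b)^2 := by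
    intro a
    calc ∑ b ∈ leftSet α Q R₁, (β b * Q a b)^2 ≤ ∑ b ∈ leftSet α Q R₁, (β b)^2 :=
          Finset.sum_le_sum fun b _ => by
            rw [mul_pow]
            nlinarith [sq_nonneg (β b), hQ2 a b]
      _ ≤ ∑ b, (β b)^2 :=
          Finset.sum_le_sum_of_subset_of_nonneg (Finset.subset_univ _)
            fun b _ _ => sq_nonneg _
  obtain ⟨R₂, hR₂T, hR₂card, hs2⟩ := generic_sample hq (leftSet α Q R₁)
    (fun b a => β b * Q a b) α hα0
    (∑ b, (β b)^2) (Finset.sum_nonneg fun b _ => sq_nonneg _) hD2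
  have hright : (Finset.univ.filter fun a => 0 < ∑ b ∈ R₂, β b * Q a b)
      = rightSet β Q R₂ := rfl
  rw [hright] at hs2
  -- identify the block sum
  have hblock : ∑ a ∈ rightSet β Q R₂, α a * ∑ b ∈ leftSet α Q R₁, β b * Q a b
      = blockSum α β Q (rightSet β Q R₂) (leftSet α Q R₁) := by
    unfold blockSum
    refine Finset.sum_congr rfl fun a _ => ?_
    rw [Finset.mul_sum]
    exact Finset.sum_congr rfl fun b _ => by ring
  have hmem : blockSum α β Q (rightSet β Q R₂) (leftSet α Q R₁) ∈ 𝒮 :=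
    ⟨R₁, R₂, hR₁card, hR₂card, rfl⟩
  have hMle : blockSum α β Q (rightSet β Q R₂) (leftSet α Q R₁) ≤ sSup 𝒮 :=
    le_csSup hbdd hmem
  -- error term comparisons
  have hε1 : (∑ b, β b) * Real.sqrt (↑k * ∑ a, (α a)^2) / Real.sqrt q
      ≤ v * Real.sqrt (↑k * ∑ a, (α a)^2) / Real.sqrt q := by
    gcongr
  have hε2 : (∑ a, α a) * Real.sqrt (↑k * ∑ b, (β b)^2) / Real.sqrt q
      ≤ u * Real.sqrt (↑k * ∑ b, (β b)^2) / Real.sqrt q := by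
    gcongr
  rw [add_div]
  have hadd : u * Real.sqrt (↑k * ∑ a, (β a) ^ 2) / Real.sqrt ↑q
      = u * Real.sqrt (↑k * ∑ b, (β b) ^ 2) / Real.sqrt ↑q := rfl
  linarith [hstep1, hswap1.le, hswap1.ge, hstep2, hs1, hbridge, hs2,
    hblock.le, hblock.ge, hMle, hε1, hε2]
end

section
/- Let Θ₀ ∈ [0,1]^{n×n} be a symmetric matrix with zero diagonal, and let A be a random symmetric 0/1 adjacency matrix whose entries A_{ij} (i<j) are independent Bernoulli with parameters (Θ₀)_{ij}, A_{ii}=0. Then E‖A − Θ₀‖_□ ≤ 12·√((‖Θ₀‖₁ + n)/n³), where ‖Θ₀‖₁ = ∑_{ij}|(Θ₀)_{ij}| and ‖·‖_□ is the normalized matrix cut norm. -/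
open MeasureTheory ProbabilityTheory

/-- Normalized cut norm of an `n × n` real matrix. -/
noncomputable def matCutNorm {n : ℕ} (B : Matrix (Fin n) (Fin n) ℝ) : ℝ :=
  (1 / (n : ℝ) ^ 2) * ⨆ S : Finset (Fin n), ⨆ T : Finset (Fin n),
    |∑ i ∈ S, ∑ j ∈ T, B i j|

/-- Entrywise ℓ¹ norm of a matrix. -/
noncomputable def matL1Norm {n : ℕ} (B : Matrix (Fin n) (Fin n) ℝ) : ℝ :=
  ∑ i, ∑ j, |B i j|

lemma exp_quad {r : ℝ} (hr : |r| ≤ 1) : Real.exp r - 1 - r ≤ r ^ 2 := by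
  have h := Real.exp_bound hr (by norm_num : 0 < 2)
  have hsum : ∑ m ∈ Finset.range 2, r ^ m / m.factorial = 1 + r := by
    simp [Finset.sum_range_succ]
  rw [hsum] at h
  have h2 : Real.exp r - (1 + r) ≤ |r| ^ 2 * ((2:ℕ).succ / ((2:ℕ).factorial * 2)) :=
    (abs_le.mp h).2
  have : |r| ^ 2 * ((2:ℕ).succ / ((2:ℕ).factorial * 2)) ≤ r ^ 2 := by
    rw [sq_abs]
    have : (0:ℝ) ≤ r ^ 2 := sq_nonneg r
    norm_num [Nat.factorial]
    nlinarith
  linarith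

lemma bern_integral {Ω : Type*} [MeasurableSpace Ω] (μ : Measure Ω) [IsProbabilityMeasure μ]
    (W : Ω → ℝ) (hW : Measurable W) (hval : ∀ ω, W ω = 0 ∨ W ω = 1) (g : ℝ → ℝ) :
    ∫ ω, g (W ω) ∂μ =
      (μ {ω | W ω = 1}).toReal * g 1 + (1 - (μ {ω | W ω = 1}).toReal) * g 0 := by
  set E : Set Ω := {ω | W ω = 1} with hE
  have hEm : MeasurableSet E := hW (measurableSet_singleton 1)
  have hfun : (fun ω => g (W ω)) = fun ω => E.indicator (fun _ => g 1 - g 0) ω + g 0 := by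
    funext ω
    rcases hval ω with h | h
    · have hnot : ω ∉ E := by simp [hE, h]
      simp [Set.indicator_of_notMem hnot, h]
    · have hmem : ω ∈ E := by simp [hE, h]
      simp [Set.indicator_of_mem hmem, h]
  rw [hfun]
  rw [integral_add ((integrable_const (g 1 - g 0)).indicator hEm) (integrable_const (g 0))]
  rw [integral_indicator_const _ hEm, integral_const]
  simp [smul_eq_mul]
  simp only [measureReal_def]
  ring

lemma bern_mgf {Ω : Type*} [MeasurableSpace Ω] (μ : Measure Ω) [IsProbabilityMeasure μ]
    (W : Ω → ℝ) (hW : Measurable W) (hval : ∀ ω, W ω = 0 ∨ W ω = 1) {θ r : ℝ}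
    (hp : (μ {ω | W ω = 1}).toReal = θ) (hθ0 : 0 ≤ θ) (hθ1 : θ ≤ 1) (hr : |r| ≤ 1) :
    ∫ ω, Real.exp (r * (W ω - θ)) ∂μ ≤ Real.exp (θ * r ^ 2) := by
  have h := bern_integral μ W hW hval (fun y => Real.exp (r * (y - θ)))
  rw [hp] at h
  rw [show (fun ω => Real.exp (r * (W ω - θ))) = fun ω => (fun y => Real.exp (r * (y - θ))) (W ω) from rfl, h]
  have key : θ * Real.exp (r * (1 - θ)) + (1 - θ) * Real.exp (r * (0 - θ))
      = Real.exp (-(r * θ)) * (1 + θ * (Real.exp r - 1)) := by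
    have e1 : r * (1 - θ) = r + -(r * θ) := by ring
    have e2 : r * (0 - θ) = -(r * θ) := by ring
    rw [e1, e2, Real.exp_add]
    ring
  rw [key]
  have h1 : 1 + θ * (Real.exp r - 1) ≤ Real.exp (θ * (Real.exp r - 1)) := by
    have := Real.add_one_le_exp (θ * (Real.exp r - 1))
    linarith
  have hpos : 0 < Real.exp (-(r * θ)) := Real.exp_pos _
  calc Real.exp (-(r * θ)) * (1 + θ * (Real.exp r - 1))
      ≤ Real.exp (-(r * θ)) * Real.exp (θ * (Real.exp r - 1)) := by
        apply mul_le_mul_of_nonneg_left h1 hpos.le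
    _ = Real.exp (θ * (Real.exp r - 1 - r)) := by rw [← Real.exp_add]; ring_nf
    _ ≤ Real.exp (θ * r ^ 2) := by
        apply Real.exp_le_exp.mpr
        exact mul_le_mul_of_nonneg_left (exp_quad hr) hθ0

noncomputable def coef {n : ℕ} (S T : Finset (Fin n)) (p : Fin n × Fin n) : ℝ :=
  (if p.1 ∈ S ∧ p.2 ∈ T then 1 else 0) + (if p.2 ∈ S ∧ p.1 ∈ T then 1 else 0)

lemma coef_nonneg {n : ℕ} (S T : Finset (Fin n)) (p : Fin n × Fin n) : 0 ≤ coef S T p := by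
  unfold coef; positivity

lemma coef_le_two {n : ℕ} (S T : Finset (Fin n)) (p : Fin n × Fin n) : coef S T p ≤ 2 := by
  unfold coef
  split <;> split <;> norm_num

lemma sym_sum_decomp {n : ℕ} (B : Matrix (Fin n) (Fin n) ℝ) (hs : B.IsSymm)
    (hd : ∀ i, B i i = 0) (S T : Finset (Fin n)) :
    ∑ i ∈ S, ∑ j ∈ T, B i j
      = ∑ q : {p : Fin n × Fin n // p.1 < p.2}, coef S T q.1 * B q.1.1 q.1.2 := by
  classical
  set f : Fin n × Fin n → ℝ := fun p => if p.1 ∈ S ∧ p.2 ∈ T then B p.1 p.2 else 0 with hf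
  have h1 : ∑ i ∈ S, ∑ j ∈ T, B i j = ∑ p : Fin n × Fin n, f p := by
    rw [← Finset.sum_product' (f := fun i j => B i j)]
    have hset : S ×ˢ T = Finset.univ.filter (fun p : Fin n × Fin n => p.1 ∈ S ∧ p.2 ∈ T) := by
      ext p; simp [Finset.mem_product]
    rw [hset, Finset.sum_filter]
  have h2 : ∑ p : Fin n × Fin n, f p
      = ∑ p ∈ Finset.univ.filter (fun p : Fin n × Fin n => p.1 < p.2), f p
        + ∑ p ∈ Finset.univ.filter (fun p : Fin n × Fin n => ¬ p.1 < p.2), f p :=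
    (Finset.sum_filter_add_sum_filter_not _ _ _).symm
  have h3 : ∑ p ∈ Finset.univ.filter (fun p : Fin n × Fin n => ¬ p.1 < p.2), f p
      = ∑ p ∈ Finset.univ.filter (fun p : Fin n × Fin n => p.2 < p.1), f p := by
    symm
    apply Finset.sum_subset
    · intro p hp
      simp only [Finset.mem_filter, Finset.mem_univ, true_and] at hp ⊢
      exact not_lt.mpr hp.le
    · intro p hp hnp
      simp only [Finset.mem_filter, Finset.mem_univ, true_and] at hp hnp
      have : p.1 = p.2 := le_antisymm (not_lt.mp hnp) (not_lt.mp hp)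
      simp only [hf]
      split
      · rw [show p.2 = p.1 from this.symm, hd]
      · rfl
  have h4 : ∑ p ∈ Finset.univ.filter (fun p : Fin n × Fin n => p.2 < p.1), f p
      = ∑ p ∈ Finset.univ.filter (fun p : Fin n × Fin n => p.1 < p.2), f p.swap := by
    apply Finset.sum_nbij' (i := Prod.swap) (j := Prod.swap)
    · intro p hp; simp only [Finset.mem_filter, Finset.mem_univ, true_and] at hp ⊢; exact hp
    · intro p hp; simp only [Finset.mem_filter, Finset.mem_univ, true_and] at hp ⊢; exact hp
    · intro p _; simp
    · intro p _; simp
    · intro p _; simp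
  have h5 : ∀ p : Fin n × Fin n, f p + f p.swap = coef S T p * B p.1 p.2 := by
    intro p
    have hsym : B p.2 p.1 = B p.1 p.2 := by
      have := congrFun (congrFun hs p.1) p.2
      simpa [Matrix.transpose_apply] using this
    simp only [hf, coef, Prod.fst_swap, Prod.snd_swap, hsym]
    split <;> split <;> ring
  have h6 : ∑ p ∈ Finset.univ.filter (fun p : Fin n × Fin n => p.1 < p.2),
        (coef S T p * B p.1 p.2)
      = ∑ q : {p : Fin n × Fin n // p.1 < p.2}, coef S T q.1 * B q.1.1 q.1.2 := by
    rw [← Finset.sum_subtype (Finset.univ.filter (fun p : Fin n × Fin n => p.1 < p.2))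
      (fun p => by simp) (fun p => coef S T p * B p.1 p.2)]
  rw [h1, h2, h3, h4, ← Finset.sum_add_distrib]
  rw [← h6]
  exact Finset.sum_congr rfl (fun p _ => h5 p)

lemma int_of_bdd {Ω : Type*} [MeasurableSpace Ω] {μ : Measure Ω} [IsProbabilityMeasure μ]
    {f : Ω → ℝ} (hf : Measurable f) {C : ℝ} (h : ∀ ω, |f ω| ≤ C) : Integrable f μ :=
  (integrable_const C).mono' hf.aestronglyMeasurable (ae_of_all _ fun ω => by
    simpa using h ω)
set_option maxHeartbeats 1000000 in
/-- For an inhomogeneous random graph with symmetric zero-diagonal probability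
matrix `Θ₀`, the sampled adjacency matrix `A` satisfies
`E‖A − Θ₀‖_□ ≤ 12·√((‖Θ₀‖₁ + n)/n³)`. -/
theorem expected_cutNorm_adjacency {Ω : Type*} [MeasurableSpace Ω] (μ : Measure Ω)
    [IsProbabilityMeasure μ] {n : ℕ}
    (Θ₀ : Matrix (Fin n) (Fin n) ℝ)
    (hΘsymm : Θ₀.IsSymm) (hΘdiag : ∀ i, Θ₀ i i = 0)
    (hΘrange : ∀ i j, Θ₀ i j ∈ Set.Icc (0:ℝ) 1)
    (A : Ω → Matrix (Fin n) (Fin n) ℝ)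
    (hAmeas : ∀ i j, Measurable fun ω => A ω i j)
    (hAsymm : ∀ ω, (A ω).IsSymm) (hAdiag : ∀ ω i, A ω i i = 0)
    (hAval : ∀ ω i j, A ω i j = 0 ∨ A ω i j = 1)
    (hABern : ∀ i j, i < j → (μ {ω | A ω i j = 1}).toReal = Θ₀ i j)
    (hAindep : iIndepFun
      (fun p : {p : Fin n × Fin n // p.1 < p.2} => fun ω => A ω p.1.1 p.1.2) μ) :
    ∫ ω, matCutNorm (A ω - Θ₀) ∂μ ≤
      12 * Real.sqrt ((matL1Norm Θ₀ + n) / (n : ℝ) ^ 3) := by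
  classical
  -- trivial case n = 0
  rcases Nat.eq_zero_or_pos n with hn0 | hn
  · subst hn0
    have h0 : ∀ ω, matCutNorm (A ω - Θ₀) = 0 := by
      intro ω
      simp [matCutNorm]
    simp only [h0, integral_zero]
    positivity
  -- notation
  set x : ℝ := matL1Norm Θ₀ with hxdef
  have hx0 : 0 ≤ x := by
    apply Finset.sum_nonneg; intro i _; apply Finset.sum_nonneg; intro j _; exact abs_nonneg _
  have hn1 : (1:ℝ) ≤ (n:ℝ) := by exact_mod_cast hn
  set sn : ℝ := Real.sqrt n with hsndef
  set sa : ℝ := Real.sqrt (x + n) with hsadef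
  have hsn2 : sn ^ 2 = n := Real.sq_sqrt (by positivity)
  have hsa2 : sa ^ 2 = x + n := Real.sq_sqrt (by positivity)
  have hsn1 : 1 ≤ sn := by
    rw [hsndef, show (1:ℝ) = Real.sqrt 1 by simp]
    exact Real.sqrt_le_sqrt hn1
  have hsn0 : 0 < sn := lt_of_lt_of_le one_pos hsn1
  have hsa0 : 0 < sa := Real.sqrt_pos.mpr (by linarith)
  have hsnsa : sn ≤ sa := Real.sqrt_le_sqrt (by linarith)
  set t : ℝ := sn / (2 * sa) with htdef
  have ht0 : 0 < t := by positivity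
  have hthalf : t ≤ 1 / 2 := by
    rw [htdef, div_le_div_iff₀ (by positivity) (by norm_num)]
    nlinarith
  -- the partial sums
  set X : Finset (Fin n) → Finset (Fin n) → Ω → ℝ :=
    fun S T ω => ∑ i ∈ S, ∑ j ∈ T, (A ω - Θ₀) i j with hXdef
  have hXmeas : ∀ S T, Measurable (X S T) := by
    intro S T
    apply Finset.measurable_sum
    intro i _
    apply Finset.measurable_sum
    intro j _
    simpa [Matrix.sub_apply] using (hAmeas i j).sub_const (Θ₀ i j)
  have hent : ∀ ω i j, |A ω i j - Θ₀ i j| ≤ 1 := by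
    intro ω i j
    have h1 := (hΘrange i j).1
    have h2 := (hΘrange i j).2
    rcases hAval ω i j with h | h <;> rw [h, abs_le] <;> constructor <;> linarith
  have hXbd : ∀ S T ω, |X S T ω| ≤ (n:ℝ) ^ 2 := by
    intro S T ω
    calc |X S T ω| ≤ ∑ i ∈ S, |∑ j ∈ T, (A ω - Θ₀) i j| := Finset.abs_sum_le_sum_abs _ _
      _ ≤ ∑ i ∈ S, ∑ j ∈ T, |(A ω - Θ₀) i j| := by
          apply Finset.sum_le_sum; intro i _; exact Finset.abs_sum_le_sum_abs _ _
      _ ≤ ∑ i ∈ S, ∑ j ∈ T, 1 := by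
          apply Finset.sum_le_sum; intro i _; apply Finset.sum_le_sum; intro j _
          simpa [Matrix.sub_apply] using hent ω i j
      _ = (S.card : ℝ) * T.card := by simp [mul_comm]
      _ ≤ (n:ℝ) * n := by
          apply mul_le_mul <;> try positivity
          · exact_mod_cast (Finset.card_le_univ S).trans_eq (by simp)
          · exact_mod_cast (Finset.card_le_univ T).trans_eq (by simp)
      _ = (n:ℝ) ^ 2 := by ring
  -- mgf bound
  have hmgf : ∀ s : ℝ, |s| ≤ 1/2 → ∀ S T : Finset (Fin n),
      ∫ ω, Real.exp (s * X S T ω) ∂μ ≤ Real.exp (4 * s ^ 2 * x) := by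
    intro s hs S T
    set Y : {p : Fin n × Fin n // p.1 < p.2} → Ω → ℝ :=
      fun q ω => coef S T q.1 * (A ω q.1.1 q.1.2 - Θ₀ q.1.1 q.1.2) with hYdef
    have hYmeas : ∀ q, Measurable (Y q) := fun q =>
      ((hAmeas _ _).sub measurable_const).const_mul _
    have hYindep : iIndepFun Y μ := by
      exact hAindep.comp (fun q (v : ℝ) => coef S T q.1 * (v - Θ₀ q.1.1 q.1.2))
        (fun q => (measurable_id.sub_const _).const_mul _)
    have hXeq : X S T = ∑ q : {p : Fin n × Fin n // p.1 < p.2}, Y q := by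
      funext ω
      have hd : ∀ i, (A ω - Θ₀) i i = 0 := by
        intro i; simp [Matrix.sub_apply, hAdiag, hΘdiag]
      have := sym_sum_decomp (A ω - Θ₀) ((hAsymm ω).sub hΘsymm) hd S T
      show (∑ i ∈ S, ∑ j ∈ T, (A ω - Θ₀) i j) = _
      rw [this, Finset.sum_apply]
      exact Finset.sum_congr rfl fun q _ => by simp [hYdef, Matrix.sub_apply]
    have hmgfeq : ∫ ω, Real.exp (s * X S T ω) ∂μ
        = mgf (∑ q : {p : Fin n × Fin n // p.1 < p.2}, Y q) μ s := by
      rw [mgf, ← hXeq]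
    rw [hmgfeq, hYindep.mgf_sum hYmeas Finset.univ]
    have hterm : ∀ q : {p : Fin n × Fin n // p.1 < p.2},
        mgf (Y q) μ s ≤ Real.exp (4 * s ^ 2 * Θ₀ q.1.1 q.1.2) := by
      intro q
      have hr : |s * coef S T q.1| ≤ 1 := by
        rw [abs_mul, abs_of_nonneg (coef_nonneg S T q.1)]
        calc |s| * coef S T q.1 ≤ (1/2) * 2 :=
          mul_le_mul hs (coef_le_two S T q.1) (coef_nonneg S T q.1) (by norm_num)
        _ = 1 := by norm_num
      have hB := bern_mgf μ (fun ω => A ω q.1.1 q.1.2) (hAmeas _ _)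
        (fun ω => hAval ω q.1.1 q.1.2) (hABern q.1.1 q.1.2 q.2)
        (hΘrange q.1.1 q.1.2).1 (hΘrange q.1.1 q.1.2).2 hr
      have heq : mgf (Y q) μ s
          = ∫ ω, Real.exp ((s * coef S T q.1) * (A ω q.1.1 q.1.2 - Θ₀ q.1.1 q.1.2)) ∂μ := by
        rw [mgf]
        congr 1; funext ω; rw [hYdef]; ring_nf
      rw [heq]
      refine hB.trans (Real.exp_le_exp.mpr ?_)
      have hc2 : (s * coef S T q.1) ^ 2 ≤ 4 * s ^ 2 := by
        have h1 := coef_nonneg S T q.1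
        have h2 := coef_le_two S T q.1
        have h3 : coef S T q.1 ^ 2 ≤ 4 := by nlinarith
        calc (s * coef S T q.1) ^ 2 = s ^ 2 * coef S T q.1 ^ 2 := by ring
          _ ≤ s ^ 2 * 4 := mul_le_mul_of_nonneg_left h3 (sq_nonneg s)
          _ = 4 * s ^ 2 := by ring
      nlinarith [(hΘrange q.1.1 q.1.2).1, sq_nonneg s]
    calc ∏ q : {p : Fin n × Fin n // p.1 < p.2}, mgf (Y q) μ s
        ≤ ∏ q : {p : Fin n × Fin n // p.1 < p.2}, Real.exp (4 * s ^ 2 * Θ₀ q.1.1 q.1.2) :=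
          Finset.prod_le_prod (fun q _ => mgf_nonneg) (fun q _ => hterm q)
      _ = Real.exp (∑ q : {p : Fin n × Fin n // p.1 < p.2}, 4 * s ^ 2 * Θ₀ q.1.1 q.1.2) :=
          (Real.exp_sum _ _).symm
      _ ≤ Real.exp (4 * s ^ 2 * x) := by
          apply Real.exp_le_exp.mpr
          rw [← Finset.mul_sum]
          apply mul_le_mul_of_nonneg_left _ (by positivity)
          have h1 : ∑ q : {p : Fin n × Fin n // p.1 < p.2}, Θ₀ q.1.1 q.1.2
              = ∑ p ∈ Finset.univ.filter (fun p : Fin n × Fin n => p.1 < p.2), Θ₀ p.1 p.2 := by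
            rw [← Finset.sum_subtype (Finset.univ.filter (fun p : Fin n × Fin n => p.1 < p.2))
              (fun p => by simp) (fun p : Fin n × Fin n => Θ₀ p.1 p.2)]
          have h2 : ∑ p ∈ Finset.univ.filter (fun p : Fin n × Fin n => p.1 < p.2), Θ₀ p.1 p.2
              ≤ ∑ p : Fin n × Fin n, Θ₀ p.1 p.2 :=
            Finset.sum_le_sum_of_subset_of_nonneg (Finset.filter_subset _ _)
              (fun p _ _ => (hΘrange p.1 p.2).1)
          have h3 : ∑ p : Fin n × Fin n, Θ₀ p.1 p.2 = x := by
            rw [hxdef, matL1Norm, Fintype.sum_prod_type]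
            exact Finset.sum_congr rfl fun i _ => Finset.sum_congr rfl fun j _ =>
              (abs_of_nonneg (hΘrange i j).1).symm
          linarith
  -- integrability of exponentials
  have hexpint : ∀ (s : ℝ) (S T : Finset (Fin n)),
      Integrable (fun ω => Real.exp (s * X S T ω)) μ := by
    intro s S T
    apply int_of_bdd ((hXmeas S T).const_mul s).exp (C := Real.exp (|s| * (n:ℝ)^2))
    intro ω
    rw [abs_of_nonneg (Real.exp_pos _).le]
    apply Real.exp_le_exp.mpr
    calc s * X S T ω ≤ |s * X S T ω| := le_abs_self _
      _ = |s| * |X S T ω| := abs_mul _ _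
      _ ≤ |s| * (n:ℝ)^2 := mul_le_mul_of_nonneg_left (hXbd S T ω) (abs_nonneg s)
  -- the sum of exponentials
  set Z : Ω → ℝ := fun ω => ∑ S : Finset (Fin n), ∑ T : Finset (Fin n),
    (Real.exp (t * X S T ω) + Real.exp (-t * X S T ω)) with hZdef
  have hZmeas : Measurable Z := by
    apply Finset.measurable_sum
    intro S _
    apply Finset.measurable_sum
    intro T _
    exact ((hXmeas S T).const_mul t).exp.add (((hXmeas S T).const_mul (-t)).exp)
  have hZint : Integrable Z μ := by
    apply integrable_finset_sum
    intro S _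
    apply integrable_finset_sum
    intro T _
    exact (hexpint t S T).add (hexpint (-t) S T)
  have hZ2 : ∀ ω, 2 ≤ Z ω := by
    intro ω
    have h00 : Real.exp (t * X ∅ ∅ ω) + Real.exp (-t * X ∅ ∅ ω) = 2 := by
      simp [hXdef]
      norm_num
    calc (2:ℝ) = Real.exp (t * X ∅ ∅ ω) + Real.exp (-t * X ∅ ∅ ω) := h00.symm
      _ ≤ ∑ T : Finset (Fin n), (Real.exp (t * X ∅ T ω) + Real.exp (-t * X ∅ T ω)) :=
        Finset.single_le_sum
          (f := fun T => Real.exp (t * X ∅ T ω) + Real.exp (-t * X ∅ T ω))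
          (fun T _ => by positivity) (Finset.mem_univ _)
      _ ≤ Z ω :=
        Finset.single_le_sum
          (f := fun S => ∑ T : Finset (Fin n), (Real.exp (t * X S T ω) + Real.exp (-t * X S T ω)))
          (fun S _ => Finset.sum_nonneg fun T _ => by positivity) (Finset.mem_univ _)
  have hZpos : ∀ ω, 0 < Z ω := fun ω => lt_of_lt_of_le two_pos (hZ2 ω)
  have hZub : ∀ ω, Z ω ≤ (2:ℝ)^(2*n+1) * Real.exp (t * (n:ℝ)^2) := by
    intro ω
    have hterm : ∀ S T : Finset (Fin n),
        Real.exp (t * X S T ω) + Real.exp (-t * X S T ω) ≤ 2 * Real.exp (t * (n:ℝ)^2) := by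
      intro S T
      have h1 : t * X S T ω ≤ t * (n:ℝ)^2 :=
        mul_le_mul_of_nonneg_left ((le_abs_self _).trans (hXbd S T ω)) ht0.le
      have h2 : -t * X S T ω ≤ t * (n:ℝ)^2 := by
        have : -X S T ω ≤ (n:ℝ)^2 := (neg_le_abs _).trans (hXbd S T ω)
        calc -t * X S T ω = t * (-X S T ω) := by ring
          _ ≤ t * (n:ℝ)^2 := mul_le_mul_of_nonneg_left this ht0.le
      have := Real.exp_le_exp.mpr h1
      have := Real.exp_le_exp.mpr h2
      linarith
    calc Z ω ≤ ∑ S : Finset (Fin n), ∑ T : Finset (Fin n), 2 * Real.exp (t * (n:ℝ)^2) := by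
          apply Finset.sum_le_sum
          intro S _
          exact Finset.sum_le_sum fun T _ => hterm S T
      _ = ((2:ℝ)^n * (2:ℝ)^n) * (2 * Real.exp (t * (n:ℝ)^2)) := by
          rw [Finset.sum_const, Finset.sum_const, Finset.card_univ, Fintype.card_finset,
            Fintype.card_fin, nsmul_eq_mul, nsmul_eq_mul]
          push_cast
          ring
      _ = (2:ℝ)^(2*n+1) * Real.exp (t * (n:ℝ)^2) := by
          rw [pow_succ, two_mul, pow_add]
          ring
  -- pointwise bound on the cut norm
  have hsup0 : ∀ ω, 0 ≤ ⨆ S : Finset (Fin n), ⨆ T : Finset (Fin n),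
      |∑ i ∈ S, ∑ j ∈ T, (A ω - Θ₀) i j| := by
    intro ω
    have hbd1 : ∀ S : Finset (Fin n), BddAbove (Set.range
        (fun T : Finset (Fin n) => |∑ i ∈ S, ∑ j ∈ T, (A ω - Θ₀) i j|)) :=
      fun S => Set.Finite.bddAbove (Set.finite_range _)
    have hbd2 : BddAbove (Set.range (fun S : Finset (Fin n) =>
        ⨆ T : Finset (Fin n), |∑ i ∈ S, ∑ j ∈ T, (A ω - Θ₀) i j|)) :=
      Set.Finite.bddAbove (Set.finite_range _)
    calc (0:ℝ) ≤ |∑ i ∈ (∅ : Finset (Fin n)), ∑ j ∈ (∅ : Finset (Fin n)), (A ω - Θ₀) i j| :=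
          abs_nonneg _
      _ ≤ ⨆ T : Finset (Fin n), |∑ i ∈ (∅ : Finset (Fin n)), ∑ j ∈ T, (A ω - Θ₀) i j| :=
          le_ciSup (hbd1 ∅) ∅
      _ ≤ ⨆ S : Finset (Fin n), ⨆ T : Finset (Fin n), |∑ i ∈ S, ∑ j ∈ T, (A ω - Θ₀) i j| :=
          le_ciSup hbd2 ∅
  have hpt : ∀ ω, matCutNorm (A ω - Θ₀) ≤ (1/((n:ℝ)^2 * t)) * Real.log (Z ω) := by
    intro ω
    rw [matCutNorm]
    have hsup : (⨆ S : Finset (Fin n), ⨆ T : Finset (Fin n),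
        |∑ i ∈ S, ∑ j ∈ T, (A ω - Θ₀) i j|) ≤ (1/t) * Real.log (Z ω) := by
      apply ciSup_le
      intro S
      apply ciSup_le
      intro T
      have h1 : Real.exp (t * |X S T ω|) ≤ Z ω := by
        have he : Real.exp (t * |X S T ω|)
            ≤ Real.exp (t * X S T ω) + Real.exp (-t * X S T ω) := by
          rcases abs_cases (X S T ω) with ⟨h, _⟩ | ⟨h, _⟩
          · rw [h]
            exact le_add_of_nonneg_right (Real.exp_pos _).le
          · rw [h, show t * -X S T ω = -t * X S T ω by ring]
            exact le_add_of_nonneg_left (Real.exp_pos _).le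
        refine he.trans ?_
        calc Real.exp (t * X S T ω) + Real.exp (-t * X S T ω)
            ≤ ∑ T' : Finset (Fin n), (Real.exp (t * X S T' ω) + Real.exp (-t * X S T' ω)) :=
              Finset.single_le_sum
                (f := fun T' => Real.exp (t * X S T' ω) + Real.exp (-t * X S T' ω))
                (fun T' _ => by positivity) (Finset.mem_univ _)
          _ ≤ Z ω :=
              Finset.single_le_sum
                (f := fun S' => ∑ T' : Finset (Fin n),
                  (Real.exp (t * X S' T' ω) + Real.exp (-t * X S' T' ω)))
                (fun S' _ => Finset.sum_nonneg fun T' _ => by positivity) (Finset.mem_univ _)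
      have h2 : t * |X S T ω| ≤ Real.log (Z ω) := by
        have h3 := Real.log_le_log (Real.exp_pos _) h1
        rwa [Real.log_exp] at h3
      have : |X S T ω| ≤ Real.log (Z ω) / t := (le_div_iff₀ ht0).mpr (by linarith)
      calc |∑ i ∈ S, ∑ j ∈ T, (A ω - Θ₀) i j| = |X S T ω| := rfl
        _ ≤ (1/t) * Real.log (Z ω) := by rw [one_div, inv_mul_eq_div]; exact this
    calc (1/(n:ℝ)^2) * (⨆ S : Finset (Fin n), ⨆ T : Finset (Fin n),
          |∑ i ∈ S, ∑ j ∈ T, (A ω - Θ₀) i j|)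
        ≤ (1/(n:ℝ)^2) * ((1/t) * Real.log (Z ω)) :=
          mul_le_mul_of_nonneg_left hsup (by positivity)
      _ = (1/((n:ℝ)^2 * t)) * Real.log (Z ω) := by
          field_simp
  -- integrability of log Z
  have hlogZbd : ∀ ω, |Real.log (Z ω)| ≤ Real.log ((2:ℝ)^(2*n+1) * Real.exp (t * (n:ℝ)^2)) := by
    intro ω
    have h1 : 0 ≤ Real.log (Z ω) := Real.log_nonneg (by linarith [hZ2 ω])
    rw [abs_of_nonneg h1]
    exact Real.log_le_log (hZpos ω) (hZub ω)
  have hlogint : Integrable (fun ω => Real.log (Z ω)) μ := int_of_bdd hZmeas.log hlogZbd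
  -- bound the integral of Z
  have hZa : ∫ ω, Z ω ∂μ ≤ (2:ℝ)^(2*n+1) * Real.exp (4 * t^2 * x) := by
    have habs_t : |t| ≤ 1/2 := by rw [abs_of_pos ht0]; exact hthalf
    have habs_t' : |(-t)| ≤ 1/2 := by rw [abs_neg]; exact habs_t
    have hint2 : ∀ S T : Finset (Fin n),
        Integrable (fun ω => Real.exp (t * X S T ω) + Real.exp (-t * X S T ω)) μ :=
      fun S T => (hexpint t S T).add (hexpint (-t) S T)
    have hint1 : ∀ S : Finset (Fin n), Integrable (fun ω => ∑ T : Finset (Fin n),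
        (Real.exp (t * X S T ω) + Real.exp (-t * X S T ω))) μ :=
      fun S => integrable_finset_sum _ (fun T _ => hint2 S T)
    have hI : ∫ ω, Z ω ∂μ = ∑ S : Finset (Fin n), ∑ T : Finset (Fin n),
        (∫ ω, Real.exp (t * X S T ω) ∂μ + ∫ ω, Real.exp (-t * X S T ω) ∂μ) := by
      calc ∫ ω, Z ω ∂μ
          = ∑ S : Finset (Fin n), ∫ ω, (∑ T : Finset (Fin n),
              (Real.exp (t * X S T ω) + Real.exp (-t * X S T ω))) ∂μ :=
            integral_finset_sum Finset.univ (fun S _ => hint1 S)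
        _ = ∑ S : Finset (Fin n), ∑ T : Finset (Fin n),
              ∫ ω, (Real.exp (t * X S T ω) + Real.exp (-t * X S T ω)) ∂μ :=
            Finset.sum_congr rfl fun S _ =>
              integral_finset_sum Finset.univ (fun T _ => hint2 S T)
        _ = ∑ S : Finset (Fin n), ∑ T : Finset (Fin n),
              (∫ ω, Real.exp (t * X S T ω) ∂μ + ∫ ω, Real.exp (-t * X S T ω) ∂μ) :=
            Finset.sum_congr rfl fun S _ => Finset.sum_congr rfl fun T _ =>
              integral_add (hexpint t S T) (hexpint (-t) S T)
    rw [hI]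
    calc ∑ S : Finset (Fin n), ∑ T : Finset (Fin n),
          (∫ ω, Real.exp (t * X S T ω) ∂μ + ∫ ω, Real.exp (-t * X S T ω) ∂μ)
        ≤ ∑ S : Finset (Fin n), ∑ T : Finset (Fin n), 2 * Real.exp (4 * t^2 * x) := by
          apply Finset.sum_le_sum
          intro S _
          apply Finset.sum_le_sum
          intro T _
          have b1 := hmgf t habs_t S T
          have b2 := hmgf (-t) habs_t' S T
          rw [neg_pow, show (4 : ℝ) * ((-1)^2 * t^2) * x = 4 * t^2 * x by ring] at b2
          linarith
      _ = ((2:ℝ)^n * (2:ℝ)^n) * (2 * Real.exp (4 * t^2 * x)) := by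
          rw [Finset.sum_const, Finset.sum_const, Finset.card_univ, Fintype.card_finset,
            Fintype.card_fin, nsmul_eq_mul, nsmul_eq_mul]
          push_cast
          ring
      _ = (2:ℝ)^(2*n+1) * Real.exp (4 * t^2 * x) := by
          rw [pow_succ, two_mul, pow_add]
          ring
  have ha2 : (2:ℝ) ≤ ∫ ω, Z ω ∂μ := by
    calc (2:ℝ) = ∫ _ω, (2:ℝ) ∂μ := by simp
      _ ≤ ∫ ω, Z ω ∂μ := integral_mono (integrable_const 2) hZint hZ2
  have hapos : (0:ℝ) < ∫ ω, Z ω ∂μ := lt_of_lt_of_le two_pos ha2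
  -- Jensen via the tangent line trick
  have hjensen : ∫ ω, Real.log (Z ω) ∂μ ≤ Real.log (∫ ω, Z ω ∂μ) := by
    set a : ℝ := ∫ ω, Z ω ∂μ with hadef
    have hp : ∀ ω, Real.log (Z ω) ≤ Z ω / a + (Real.log a - 1) := by
      intro ω
      have h := Real.log_le_sub_one_of_pos (div_pos (hZpos ω) hapos)
      rw [Real.log_div (hZpos ω).ne' hapos.ne'] at h
      linarith
    have hmono : ∫ ω, Real.log (Z ω) ∂μ ≤ ∫ ω, (Z ω / a + (Real.log a - 1)) ∂μ :=
      integral_mono hlogint ((hZint.div_const a).add (integrable_const _)) hp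
    rw [integral_add (hZint.div_const a) (integrable_const _), integral_div,
      integral_const] at hmono
    simp only [measure_univ, ENNReal.toReal_one, probReal_univ, smul_eq_mul, one_mul] at hmono
    rw [div_self hapos.ne'] at hmono
    linarith
  -- putting everything together
  have hgint : Integrable (fun ω => (1/((n:ℝ)^2 * t)) * Real.log (Z ω)) μ :=
    hlogint.const_mul _
  have hmain : ∫ ω, matCutNorm (A ω - Θ₀) ∂μ
      ≤ (1/((n:ℝ)^2 * t)) * ((2 * (n:ℝ) + 1) * Real.log 2 + 4 * t^2 * x) := by
    have hc : (0:ℝ) ≤ 1/((n:ℝ)^2 * t) := by positivity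
    calc ∫ ω, matCutNorm (A ω - Θ₀) ∂μ
        ≤ ∫ ω, (1/((n:ℝ)^2 * t)) * Real.log (Z ω) ∂μ := by
          apply integral_mono_of_nonneg (ae_of_all _ fun ω => ?_) hgint (ae_of_all _ hpt)
          rw [matCutNorm]
          exact mul_nonneg (by positivity) (hsup0 ω)
      _ = (1/((n:ℝ)^2 * t)) * ∫ ω, Real.log (Z ω) ∂μ := integral_const_mul _ _
      _ ≤ (1/((n:ℝ)^2 * t)) * Real.log (∫ ω, Z ω ∂μ) :=
          mul_le_mul_of_nonneg_left hjensen hc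
      _ ≤ (1/((n:ℝ)^2 * t)) * ((2 * (n:ℝ) + 1) * Real.log 2 + 4 * t^2 * x) := by
          apply mul_le_mul_of_nonneg_left _ hc
          have h1 : Real.log (∫ ω, Z ω ∂μ) ≤ Real.log ((2:ℝ)^(2*n+1) * Real.exp (4 * t^2 * x)) :=
            Real.log_le_log hapos hZa
          rwa [Real.log_mul (by positivity) (Real.exp_pos _).ne', Real.log_pow,
            Real.log_exp, show (((2*n+1 : ℕ)):ℝ) = 2 * (n:ℝ) + 1 by push_cast; ring] at h1
  refine hmain.trans ?_
  -- final arithmetic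
  have hsqrt : Real.sqrt ((x + (n:ℝ)) / (n:ℝ)^3) = sa / sn^3 := by
    have h6 : (sn^3)^2 = ((n:ℝ))^3 := by
      rw [show (sn^3)^2 = (sn^2)^3 by ring, hsn2]
    have h : (x + (n:ℝ)) / (n:ℝ)^3 = (sa / sn^3)^2 := by
      rw [div_pow, hsa2, h6]
    rw [h, Real.sqrt_sq (by positivity)]
  rw [hxdef] at hsqrt ⊢
  rw [hsqrt]
  have hL0 : (0:ℝ) ≤ Real.log 2 := Real.log_nonneg one_le_two
  have hL7 : Real.log 2 ≤ 0.7 := by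
    have := Real.log_two_lt_d9
    linarith
  have hsa2' : sa^2 = matL1Norm Θ₀ + sn^2 := by rw [hsa2, hsn2]
  have hsn21 : (1:ℝ) ≤ sn^2 := by nlinarith
  have key : 2 * sa^2 * (2 * sn^2 + 1) * Real.log 2 + 2 * (matL1Norm Θ₀) * sn^2
      ≤ 12 * sa^2 * sn^2 := by
    rw [hsa2']
    have hx0' : (0:ℝ) ≤ matL1Norm Θ₀ := hx0
    nlinarith [mul_nonneg hx0' (sub_nonneg.mpr hsn21),
      mul_nonneg (sub_nonneg.mpr hL7)
        (mul_nonneg (by nlinarith : (0:ℝ) ≤ matL1Norm Θ₀ + sn^2)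
          (by nlinarith : (0:ℝ) ≤ 2 * sn^2 + 1)),
      sq_nonneg sn, mul_nonneg (mul_nonneg hx0' hL0) (sub_nonneg.mpr hsn21)]
  have hLHS : (1/((n:ℝ)^2 * t)) * ((2 * (n:ℝ) + 1) * Real.log 2 + 4 * t^2 * x)
      = (2 * sa^2 * (2 * sn^2 + 1) * Real.log 2 + 2 * (matL1Norm Θ₀) * sn^2) / (sn^5 * sa) := by
    rw [htdef, hxdef, ← hsn2]
    field_simp
    ring
  rw [hLHS]
  have h12 : (12:ℝ) * (sa / sn^3) = (12 * sa^2 * sn^2) / (sn^5 * sa) := by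
    field_simp
  rw [h12]
  have hd : (0:ℝ) < sn^5 * sa := by positivity
  gcongr
end

section
/- In the setting of the previous model, if additionally ‖Θ₀‖_∞ ≥ 1/n (max entry at least 1/n), then E‖A − Θ₀‖_□ ≤ 24·√(‖Θ₀‖_∞/n). -/
open MeasureTheory ProbabilityTheory

lemma exp_le_one_add_self_add_sq {s : ℝ} (hs : |s| ≤ 1) : Real.exp s ≤ 1 + s + s ^ 2 := by
  have h := Real.exp_bound hs (by norm_num : 0 < 2)
  have h2 : ∑ m ∈ Finset.range 2, s ^ m / (m.factorial : ℝ) = 1 + s := by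
    simp [Finset.sum_range_succ]
  rw [h2] at h
  norm_num [Nat.factorial] at h
  have := (abs_le.1 h).2
  nlinarith [sq_abs s, sq_nonneg s]

open Finset in
lemma matrix_sum_pairs {n : ℕ} (B : Matrix (Fin n) (Fin n) ℝ)
    (hsymm : ∀ i j, B i j = B j i) (hdiag : ∀ i, B i i = 0)
    (S T : Finset (Fin n)) :
    ∑ i ∈ S, ∑ j ∈ T, B i j =
      ∑ p : {p : Fin n × Fin n // p.1 < p.2},
        ((if p.1.1 ∈ S ∧ p.1.2 ∈ T then (1:ℝ) else 0)
          + (if p.1.2 ∈ S ∧ p.1.1 ∈ T then (1:ℝ) else 0)) * B p.1.1 p.1.2 := by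
  classical
  set f : Fin n × Fin n → ℝ := fun q => if q.1 ∈ S ∧ q.2 ∈ T then B q.1 q.2 else 0 with hf
  have hST : S ×ˢ T = Finset.univ.filter (fun q : Fin n × Fin n => q.1 ∈ S ∧ q.2 ∈ T) := by
    ext q; simp [Finset.mem_product]
  have h1 : ∑ i ∈ S, ∑ j ∈ T, B i j = ∑ q : Fin n × Fin n, f q := by
    rw [← Finset.sum_product' (f := fun i j => B i j), hST, Finset.sum_filter]
  have h2 := Finset.sum_filter_add_sum_filter_not Finset.univ
    (fun q : Fin n × Fin n => q.1 < q.2) f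
  have h3 : ∑ q ∈ Finset.univ.filter (fun q : Fin n × Fin n => ¬ q.1 < q.2), f q
      = ∑ q ∈ Finset.univ.filter (fun q : Fin n × Fin n => q.2 < q.1), f q := by
    symm
    apply Finset.sum_subset
    · intro q hq
      simp only [Finset.mem_filter, Finset.mem_univ, true_and] at hq ⊢
      exact asymm hq
    · intro q hq hq'
      simp only [Finset.mem_filter, Finset.mem_univ, true_and] at hq hq'
      have hqq : q.1 = q.2 := le_antisymm (not_lt.1 hq') (not_lt.1 hq)
      simp only [hf]
      split_ifs with h
      · rw [← hqq, hdiag]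
      · rfl
  have h4 : ∑ q ∈ Finset.univ.filter (fun q : Fin n × Fin n => q.2 < q.1), f q
      = ∑ q ∈ Finset.univ.filter (fun q : Fin n × Fin n => q.1 < q.2), f q.swap := by
    refine Finset.sum_bij' (i := fun q _ => q.swap) (j := fun q _ => q.swap) ?_ ?_ ?_ ?_ ?_ <;>
      intro a ha <;>
      simp only [Finset.mem_filter, Finset.mem_univ, true_and, Prod.fst_swap, Prod.snd_swap,
        Prod.swap_swap] at ha ⊢ <;>
      first | exact ha | rfl
  have h5 : ∑ q ∈ Finset.univ.filter (fun q : Fin n × Fin n => q.1 < q.2), (f q + f q.swap)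
      = ∑ p : {p : Fin n × Fin n // p.1 < p.2}, (f p.1 + f p.1.swap) :=
    Finset.sum_subtype _ (by simp) _
  have h6 : ∀ p : {p : Fin n × Fin n // p.1 < p.2},
      f p.1 + f p.1.swap =
        ((if p.1.1 ∈ S ∧ p.1.2 ∈ T then (1:ℝ) else 0)
          + (if p.1.2 ∈ S ∧ p.1.1 ∈ T then (1:ℝ) else 0)) * B p.1.1 p.1.2 := by
    intro p
    simp only [hf, Prod.fst_swap, Prod.snd_swap]
    rw [hsymm p.1.2 p.1.1]
    by_cases h1 : p.1.1 ∈ S ∧ p.1.2 ∈ T <;> by_cases h2 : p.1.2 ∈ S ∧ p.1.1 ∈ T <;>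
      simp [h1, h2] <;> ring
  calc ∑ i ∈ S, ∑ j ∈ T, B i j = ∑ q : Fin n × Fin n, f q := h1
    _ = ∑ q ∈ Finset.univ.filter (fun q : Fin n × Fin n => q.1 < q.2), f q
        + ∑ q ∈ Finset.univ.filter (fun q : Fin n × Fin n => ¬ q.1 < q.2), f q := h2.symm
    _ = ∑ q ∈ Finset.univ.filter (fun q : Fin n × Fin n => q.1 < q.2), (f q + f q.swap) := by
        rw [h3, h4, ← Finset.sum_add_distrib]
    _ = ∑ p : {p : Fin n × Fin n // p.1 < p.2}, (f p.1 + f p.1.swap) := h5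
    _ = _ := Finset.sum_congr rfl (fun p _ => h6 p)

/-- Entrywise sup norm (maximal entry) of a matrix. -/
noncomputable def matLinftyNorm {n : ℕ} (B : Matrix (Fin n) (Fin n) ℝ) : ℝ :=
  ⨆ p : Fin n × Fin n, |B p.1 p.2|

set_option maxHeartbeats 1600000 in
/-- If moreover `‖Θ₀‖_∞ ≥ 1/n`, then `E‖A − Θ₀‖_□ ≤ 24·√(‖Θ₀‖_∞/n)`. -/
theorem expected_cutNorm_adjacency_sup {Ω : Type*} [MeasurableSpace Ω] (μ : Measure Ω)
    [IsProbabilityMeasure μ] {n : ℕ} (hn : 0 < n)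
    (Θ₀ : Matrix (Fin n) (Fin n) ℝ)
    (hΘsymm : Θ₀.IsSymm) (hΘdiag : ∀ i, Θ₀ i i = 0)
    (hΘrange : ∀ i j, Θ₀ i j ∈ Set.Icc (0:ℝ) 1)
    (hΘinf : 1 / (n : ℝ) ≤ matLinftyNorm Θ₀)
    (A : Ω → Matrix (Fin n) (Fin n) ℝ)
    (hAmeas : ∀ i j, Measurable fun ω => A ω i j)
    (hAsymm : ∀ ω, (A ω).IsSymm) (hAdiag : ∀ ω i, A ω i i = 0)
    (hAval : ∀ ω i j, A ω i j = 0 ∨ A ω i j = 1)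
    (hABern : ∀ i j, i < j → (μ {ω | A ω i j = 1}).toReal = Θ₀ i j)
    (hAindep : iIndepFun
      (fun p : {p : Fin n × Fin n // p.1 < p.2} => fun ω => A ω p.1.1 p.1.2) μ) :
    ∫ ω, matCutNorm (A ω - Θ₀) ∂μ ≤
      24 * Real.sqrt (matLinftyNorm Θ₀ / (n : ℝ)) := by
  classical
  have hn' : (0:ℝ) < n := by exact_mod_cast hn
  have hn1 : (1:ℝ) ≤ n := by exact_mod_cast hn
  set u := matLinftyNorm Θ₀ with hu_def
  have hu_pos : 0 < u := lt_of_lt_of_le (by positivity) hΘinf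
  set r := Real.sqrt (u / n) with hr_def
  have hr_pos : 0 < r := Real.sqrt_pos.2 (by positivity)
  have hr_sq : r ^ 2 = u / n := Real.sq_sqrt (by positivity)
  have hu_eq : u = n * r ^ 2 := by rw [hr_sq]; field_simp
  have hnu : 1 ≤ u * n := (div_le_iff₀ hn').mp hΘinf
  have hnr : 1 ≤ n * r := by nlinarith [mul_pos hn' hr_pos]
  set t := 1 / (2 * ((n:ℝ) * r)) with ht_def
  have ht_pos : 0 < t := by positivity
  have h2t : 2 * t ≤ 1 := by
    have h : 2 * t = 1 / ((n:ℝ) * r) := by rw [ht_def]; ring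
    rw [h]
    exact (div_le_one (by positivity)).2 hnr
  -- entry facts
  have hθ0 : ∀ i j, 0 ≤ Θ₀ i j := fun i j => (hΘrange i j).1
  have hθu : ∀ i j, Θ₀ i j ≤ u := by
    intro i j
    have hb : BddAbove (Set.range fun p : Fin n × Fin n => |Θ₀ p.1 p.2|) :=
      (Set.finite_range _).bddAbove
    have h := le_ciSup hb (i, j)
    calc Θ₀ i j ≤ |Θ₀ i j| := le_abs_self _
      _ ≤ u := h
  have hB1 : ∀ ω i j, |A ω i j - Θ₀ i j| ≤ 1 := by
    intro ω i j
    have h0 := (hΘrange i j).1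
    have h1 := (hΘrange i j).2
    rcases hAval ω i j with h | h <;> rw [h, abs_le] <;> constructor <;> linarith
  -- the centered sums
  set Y : Finset (Fin n) → Finset (Fin n) → Ω → ℝ :=
    fun S T ω => ∑ i ∈ S, ∑ j ∈ T, (A ω i j - Θ₀ i j) with hY_def
  have hYmeas : ∀ S T, Measurable (Y S T) := by
    intro S T
    apply Finset.measurable_sum
    intro i _
    exact Finset.measurable_sum _ (fun j _ => (hAmeas i j).sub measurable_const)
  have hYbd : ∀ S T ω, |Y S T ω| ≤ (n:ℝ)^2 := by
    intro S T ω
    have hcS : (S.card : ℝ) ≤ n := by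
      have h : S.card ≤ n := by simpa using Finset.card_le_univ S
      exact_mod_cast h
    have hcT : (T.card : ℝ) ≤ n := by
      have h : T.card ≤ n := by simpa using Finset.card_le_univ T
      exact_mod_cast h
    calc |Y S T ω| ≤ ∑ i ∈ S, |∑ j ∈ T, (A ω i j - Θ₀ i j)| := Finset.abs_sum_le_sum_abs _ _
      _ ≤ ∑ i ∈ S, ∑ j ∈ T, |A ω i j - Θ₀ i j| :=
          Finset.sum_le_sum fun i _ => Finset.abs_sum_le_sum_abs _ _
      _ ≤ ∑ _i ∈ S, ∑ _j ∈ T, (1:ℝ) :=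
          Finset.sum_le_sum fun i _ => Finset.sum_le_sum fun j _ => hB1 ω i j
      _ = (S.card : ℝ) * T.card := by
          simp [Finset.sum_const, nsmul_eq_mul]
      _ ≤ (n:ℝ)^2 := by
          have h1 : (0:ℝ) ≤ (S.card : ℝ) := Nat.cast_nonneg _
          have h2 : (0:ℝ) ≤ (T.card : ℝ) := Nat.cast_nonneg _
          nlinarith
  -- single Bernoulli mgf bound
  have bern : ∀ (i j : Fin n), i < j → ∀ s : ℝ, |s| ≤ 1 →
      Integrable (fun ω => Real.exp (s * (A ω i j - Θ₀ i j))) μ ∧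
      ∫ ω, Real.exp (s * (A ω i j - Θ₀ i j)) ∂μ ≤ Real.exp (Θ₀ i j * s ^ 2) := by
    intro i j hij s hs
    have hE : MeasurableSet {ω | A ω i j = 1} := hAmeas i j (measurableSet_singleton 1)
    have hind : (fun ω => A ω i j) = Set.indicator {ω | A ω i j = 1} (fun _ => (1:ℝ)) := by
      funext ω
      rcases hAval ω i j with h | h
      · rw [h]; symm; apply Set.indicator_of_notMem
        simp only [Set.mem_setOf_eq, h]; norm_num
      · rw [h]; symm
        exact Set.indicator_of_mem (show ω ∈ {ω | A ω i j = 1} from h) _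
    have hg_int : Integrable (fun ω => A ω i j) μ := by
      rw [hind]; exact (integrable_const 1).indicator hE
    have hg_val : ∫ ω, A ω i j ∂μ = Θ₀ i j := by
      rw [hind, MeasureTheory.integral_indicator_const (1:ℝ) hE, smul_eq_mul, mul_one]
      exact
        hABern i j hij
    have hptw : ∀ ω, Real.exp (s * (A ω i j - Θ₀ i j))
        = Real.exp (-(s * Θ₀ i j)) * (1 + (Real.exp s - 1) * A ω i j) := by
      intro ω
      rcases hAval ω i j with h | h <;> rw [h]
      · rw [show s * ((0:ℝ) - Θ₀ i j) = -(s * Θ₀ i j) by ring]; ring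
      · rw [show s * ((1:ℝ) - Θ₀ i j) = s + -(s * Θ₀ i j) by ring, Real.exp_add]; ring
    constructor
    · have heq : (fun ω => Real.exp (s * (A ω i j - Θ₀ i j)))
          = fun ω => Real.exp (-(s * Θ₀ i j)) * (1 + (Real.exp s - 1) * A ω i j) :=
        funext hptw
      rw [heq]
      exact (((integrable_const 1).add (hg_int.const_mul _)).const_mul _)
    · have hInt : ∫ ω, Real.exp (s * (A ω i j - Θ₀ i j)) ∂μ
          = Real.exp (-(s * Θ₀ i j)) * (1 + (Real.exp s - 1) * Θ₀ i j) := by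
        simp_rw [hptw]
        rw [MeasureTheory.integral_const_mul,
          MeasureTheory.integral_add (integrable_const 1) (hg_int.const_mul _),
          MeasureTheory.integral_const, MeasureTheory.integral_const_mul, hg_val]
        simp
      rw [hInt]
      have h1 : 1 + (Real.exp s - 1) * Θ₀ i j ≤ Real.exp ((Real.exp s - 1) * Θ₀ i j) := by
        linarith [Real.add_one_le_exp ((Real.exp s - 1) * Θ₀ i j)]
      calc Real.exp (-(s * Θ₀ i j)) * (1 + (Real.exp s - 1) * Θ₀ i j)
          ≤ Real.exp (-(s * Θ₀ i j)) * Real.exp ((Real.exp s - 1) * Θ₀ i j) :=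
            mul_le_mul_of_nonneg_left h1 (Real.exp_pos _).le
        _ = Real.exp (Θ₀ i j * (Real.exp s - 1 - s)) := by
            rw [← Real.exp_add]; congr 1; ring
        _ ≤ Real.exp (Θ₀ i j * s ^ 2) := by
            apply Real.exp_le_exp.2
            have h2 := exp_le_one_add_self_add_sq hs
            exact mul_le_mul_of_nonneg_left (by linarith) (hθ0 i j)
  -- product bound for a fixed pair of sets and sign
  have prodP : ∀ (S T : Finset (Fin n)) (ε : ℝ), |ε| = 1 →
      ∫ ω, Real.exp (t * (ε * Y S T ω)) ∂μ ≤ Real.exp (4 * (n:ℝ)^2 * u * t^2) := by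
    intro S T ε hε
    set c : Fin n × Fin n → ℝ := fun q =>
      ((if q.1 ∈ S ∧ q.2 ∈ T then (1:ℝ) else 0)
        + (if q.2 ∈ S ∧ q.1 ∈ T then (1:ℝ) else 0)) with hc_def
    have hc0 : ∀ q, 0 ≤ c q := by intro q; simp only [hc_def]; split_ifs <;> norm_num
    have hc2 : ∀ q, c q ≤ 2 := by intro q; simp only [hc_def]; split_ifs <;> norm_num
    set Z : {p : Fin n × Fin n // p.1 < p.2} → Ω → ℝ :=
      fun p ω => (ε * c p.1) * (A ω p.1.1 p.1.2 - Θ₀ p.1.1 p.1.2) with hZ_def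
    have hZmeas : ∀ p, Measurable (Z p) :=
      fun p => ((hAmeas _ _).sub measurable_const).const_mul _
    have hZindep : iIndepFun Z μ :=
      hAindep.comp (fun p x => (ε * c p.1) * (x - Θ₀ p.1.1 p.1.2))
        (fun p => (measurable_id.sub measurable_const).const_mul _)
    have hsum : ∀ ω, ε * Y S T ω = (∑ p, Z p) ω := by
      intro ω
      rw [Finset.sum_apply]
      have hmat := matrix_sum_pairs (n := n) (fun i j => A ω i j - Θ₀ i j)
        (fun i j => show A ω i j - Θ₀ i j = A ω j i - Θ₀ j i by
          rw [(hAsymm ω).apply i j, hΘsymm.apply i j])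
        (fun i => show A ω i i - Θ₀ i i = 0 by rw [hAdiag ω i, hΘdiag i]; ring) S T
      calc ε * Y S T ω
          = ε * ∑ p : {p : Fin n × Fin n // p.1 < p.2},
              ((if p.1.1 ∈ S ∧ p.1.2 ∈ T then (1:ℝ) else 0)
                + (if p.1.2 ∈ S ∧ p.1.1 ∈ T then (1:ℝ) else 0))
              * (A ω p.1.1 p.1.2 - Θ₀ p.1.1 p.1.2) := by
            simp only [hY_def]
            rw [hmat]
        _ = ∑ p, Z p ω := by
            rw [Finset.mul_sum]
            exact Finset.sum_congr rfl fun p _ => by simp only [hZ_def, hc_def]; ring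
    have hfun : (fun ω => Real.exp (t * (ε * Y S T ω)))
        = (fun ω => Real.exp (t * (∑ p, Z p) ω)) := by
      funext ω
      rw [hsum ω]
    have hmgf : mgf (∑ p, Z p) μ t = ∫ ω, Real.exp (t * (ε * Y S T ω)) ∂μ := by
      show (∫ ω, Real.exp (t * (∑ p, Z p) ω) ∂μ) = _
      rw [← hfun]
    rw [← hmgf, iIndepFun.mgf_sum hZindep hZmeas Finset.univ]
    have hfac : ∀ p : {p : Fin n × Fin n // p.1 < p.2},
        mgf (Z p) μ t ≤ Real.exp (u * (4 * t^2)) := by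
      intro p
      set s := t * (ε * c p.1) with hs_def
      have habs : |s| ≤ 2 * t := by
        rw [hs_def, abs_mul, abs_mul, hε, abs_of_nonneg (hc0 p.1), abs_of_pos ht_pos]
        calc t * (1 * c p.1) = t * c p.1 := by ring
          _ ≤ t * 2 := mul_le_mul_of_nonneg_left (hc2 p.1) ht_pos.le
          _ = 2 * t := by ring
      have habs1 : |s| ≤ 1 := habs.trans h2t
      have hfun2 : (fun ω => Real.exp (t * Z p ω))
          = (fun ω => Real.exp (s * (A ω p.1.1 p.1.2 - Θ₀ p.1.1 p.1.2))) := by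
        funext ω
        simp only [hZ_def, hs_def]
        ring_nf
      have heq : mgf (Z p) μ t
          = ∫ ω, Real.exp (s * (A ω p.1.1 p.1.2 - Θ₀ p.1.1 p.1.2)) ∂μ := by
        show (∫ ω, Real.exp (t * Z p ω) ∂μ) = _
        rw [hfun2]
      rw [heq]
      refine le_trans (bern p.1.1 p.1.2 p.2 s habs1).2 ?_
      apply Real.exp_le_exp.2
      have h1 : s^2 ≤ 4 * t^2 := by nlinarith [abs_nonneg s, sq_abs s, ht_pos]
      exact mul_le_mul (hθu _ _) h1 (sq_nonneg s) hu_pos.le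
    calc ∏ p, mgf (Z p) μ t
        ≤ ∏ _p : {p : Fin n × Fin n // p.1 < p.2}, Real.exp (u * (4*t^2)) :=
          Finset.prod_le_prod (fun p _ => mgf_nonneg) (fun p _ => hfac p)
      _ = Real.exp (u * (4*t^2)) ^ (Fintype.card {p : Fin n × Fin n // p.1 < p.2}) := by
          rw [Finset.prod_const, Finset.card_univ]
      _ ≤ Real.exp (u * (4*t^2)) ^ (n * n) := by
          apply pow_le_pow_right₀ (Real.one_le_exp (by positivity))
          calc Fintype.card {p : Fin n × Fin n // p.1 < p.2}
              ≤ Fintype.card (Fin n × Fin n) := Fintype.card_subtype_le _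
            _ = n * n := by simp
      _ = Real.exp (((n * n : ℕ) : ℝ) * (u * (4*t^2))) := by rw [Real.exp_nat_mul]
      _ = Real.exp (4 * (n:ℝ)^2 * u * t^2) := by congr 1; push_cast; ring
  -- integrability of the exponential terms
  have hexp_int : ∀ (S T : Finset (Fin n)) (ε : ℝ), |ε| = 1 →
      Integrable (fun ω => Real.exp (t * (ε * Y S T ω))) μ := by
    intro S T ε hε
    apply Integrable.mono' (integrable_const (Real.exp (t * (n:ℝ)^2)))
    · exact ((((hYmeas S T).const_mul ε).const_mul t).exp).aestronglyMeasurable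
    · refine Filter.Eventually.of_forall fun ω => ?_
      rw [Real.norm_eq_abs, abs_of_pos (Real.exp_pos _)]
      apply Real.exp_le_exp.2
      have h1 : ε * Y S T ω ≤ (n:ℝ)^2 := by
        calc ε * Y S T ω ≤ |ε * Y S T ω| := le_abs_self _
          _ = |Y S T ω| := by rw [abs_mul, hε, one_mul]
          _ ≤ (n:ℝ)^2 := hYbd S T ω
      exact mul_le_mul_of_nonneg_left h1 ht_pos.le
  -- the global sum G
  set G : Ω → ℝ := fun ω => ∑ S : Finset (Fin n), ∑ T : Finset (Fin n),
    (Real.exp (t * (1 * Y S T ω)) + Real.exp (t * (-1 * Y S T ω))) with hG_def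
  have habs1 : |(1:ℝ)| = 1 := by norm_num
  have habsm1 : |(-1:ℝ)| = 1 := by norm_num
  have hpair_int : ∀ S T : Finset (Fin n),
      Integrable (fun ω => Real.exp (t * (1 * Y S T ω)) + Real.exp (t * (-1 * Y S T ω))) μ :=
    fun S T => (hexp_int S T 1 habs1).add (hexp_int S T (-1) habsm1)
  have hG_int : Integrable G μ := by
    apply integrable_finset_sum
    intro S _
    exact integrable_finset_sum _ (fun T _ => hpair_int S T)
  have hterm_nonneg : ∀ ω (S T : Finset (Fin n)),
      (0:ℝ) ≤ Real.exp (t * (1 * Y S T ω)) + Real.exp (t * (-1 * Y S T ω)) := by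
    intro ω S T; positivity
  have hterm_le : ∀ ω (S T : Finset (Fin n)),
      Real.exp (t * (1 * Y S T ω)) + Real.exp (t * (-1 * Y S T ω)) ≤ G ω := by
    intro ω S T
    have h3 : Real.exp (t * (1 * Y S T ω)) + Real.exp (t * (-1 * Y S T ω))
        ≤ ∑ T' : Finset (Fin n),
            (Real.exp (t * (1 * Y S T' ω)) + Real.exp (t * (-1 * Y S T' ω))) :=
      Finset.single_le_sum (fun T' _ => hterm_nonneg ω S T') (Finset.mem_univ T)
    have h4 : ∑ T' : Finset (Fin n),
          (Real.exp (t * (1 * Y S T' ω)) + Real.exp (t * (-1 * Y S T' ω))) ≤ G ω :=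
      Finset.single_le_sum
        (f := fun S' => ∑ T' : Finset (Fin n),
          (Real.exp (t * (1 * Y S' T' ω)) + Real.exp (t * (-1 * Y S' T' ω))))
        (fun S' _ => Finset.sum_nonneg fun T' _ => hterm_nonneg ω S' T')
        (Finset.mem_univ S)
    linarith
  have hG_ge2 : ∀ ω, 2 ≤ G ω := by
    intro ω
    have h2 : Real.exp (t * (1 * Y ∅ ∅ ω)) + Real.exp (t * (-1 * Y ∅ ∅ ω)) = 2 := by
      have hY0 : Y ∅ ∅ ω = 0 := by simp [hY_def]
      rw [hY0]; norm_num
    linarith [hterm_le ω ∅ ∅]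
  set C := ∫ ω, G ω ∂μ with hC_def
  have hC_pos : (0:ℝ) < C := by
    have h : (2:ℝ) ≤ C := by
      calc (2:ℝ) = ∫ _ω, (2:ℝ) ∂μ := by simp
        _ ≤ ∫ ω, G ω ∂μ := integral_mono (integrable_const 2) hG_int (hG_ge2)
    linarith
  have hC_ub : C ≤ 2 * 2^n * 2^n * Real.exp (4 * (n:ℝ)^2 * u * t^2) := by
    simp only [hC_def, hG_def]
    rw [integral_finset_sum _ (fun S _ => integrable_finset_sum _
      (fun T _ => hpair_int S T))]
    have step : ∀ S : Finset (Fin n),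
        ∫ ω, ∑ T : Finset (Fin n),
          (Real.exp (t * (1 * Y S T ω)) + Real.exp (t * (-1 * Y S T ω))) ∂μ
        ≤ ∑ _T : Finset (Fin n), 2 * Real.exp (4 * (n:ℝ)^2 * u * t^2) := by
      intro S
      rw [integral_finset_sum _ (fun T _ => hpair_int S T)]
      apply Finset.sum_le_sum
      intro T _
      rw [integral_add (hexp_int S T 1 habs1) (hexp_int S T (-1) habsm1)]
      have b1 := prodP S T 1 habs1
      have b2 := prodP S T (-1) habsm1
      linarith
    calc ∑ S : Finset (Fin n), ∫ ω, ∑ T : Finset (Fin n),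
          (Real.exp (t * (1 * Y S T ω)) + Real.exp (t * (-1 * Y S T ω))) ∂μ
        ≤ ∑ _S : Finset (Fin n), ∑ _T : Finset (Fin n),
            2 * Real.exp (4 * (n:ℝ)^2 * u * t^2) :=
          Finset.sum_le_sum fun S _ => step S
      _ = 2 * 2^n * 2^n * Real.exp (4 * (n:ℝ)^2 * u * t^2) := by
          rw [Finset.sum_const, Finset.sum_const, Finset.card_univ]
          simp only [Fintype.card_finset, Fintype.card_fin, nsmul_eq_mul]
          push_cast
          ring
  -- pointwise bound on the sup
  set F : Ω → ℝ := fun ω => ⨆ S : Finset (Fin n), ⨆ T : Finset (Fin n), |Y S T ω| with hF_def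
  have hF_nonneg : ∀ ω, 0 ≤ F ω :=
    fun ω => Real.iSup_nonneg fun S => Real.iSup_nonneg fun T => abs_nonneg _
  have hF_le : ∀ ω, F ω ≤ (1/t) * (Real.log C + G ω / C - 1) := by
    intro ω
    have hGpos : 0 < G ω := lt_of_lt_of_le two_pos (hG_ge2 ω)
    have step1 : F ω ≤ (1/t) * Real.log (G ω) := by
      simp only [hF_def]
      apply ciSup_le
      intro S
      apply ciSup_le
      intro T
      have hpair : Real.exp (t * |Y S T ω|)
          ≤ Real.exp (t * (1 * Y S T ω)) + Real.exp (t * (-1 * Y S T ω)) := by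
        rcases abs_cases (Y S T ω) with ⟨h, _⟩ | ⟨h, _⟩
        · rw [h, show t * (1 * Y S T ω) = t * Y S T ω by ring]
          linarith [(Real.exp_pos (t * (-1 * Y S T ω))).le]
        · rw [h, show t * (-1 * Y S T ω) = t * -Y S T ω by ring]
          linarith [(Real.exp_pos (t * (1 * Y S T ω))).le]
      have hlog : t * |Y S T ω| ≤ Real.log (G ω) := by
        have h := Real.log_le_log (Real.exp_pos _) (hpair.trans (hterm_le ω S T))
        rwa [Real.log_exp] at h
      calc |Y S T ω| = (1/t) * (t * |Y S T ω|) := by field_simp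
        _ ≤ (1/t) * Real.log (G ω) :=
            mul_le_mul_of_nonneg_left hlog (by positivity)
    have step2 : Real.log (G ω) ≤ Real.log C + G ω / C - 1 := by
      have hdiv : 0 < G ω / C := div_pos hGpos hC_pos
      have h := Real.log_le_sub_one_of_pos hdiv
      rw [Real.log_div (ne_of_gt hGpos) (ne_of_gt hC_pos)] at h
      linarith
    calc F ω ≤ (1/t) * Real.log (G ω) := step1
      _ ≤ (1/t) * (Real.log C + G ω / C - 1) :=
          mul_le_mul_of_nonneg_left step2 (by positivity)
  have hU_int : Integrable (fun ω => (1/t) * (Real.log C + G ω / C - 1)) μ :=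
    ((((integrable_const (Real.log C)).add (hG_int.div_const C)).sub
      (integrable_const 1)).const_mul _)
  have hintF : ∫ ω, F ω ∂μ ≤ (1/t) * Real.log C := by
    calc ∫ ω, F ω ∂μ ≤ ∫ ω, (1/t) * (Real.log C + G ω / C - 1) ∂μ :=
        integral_mono_of_nonneg (Filter.Eventually.of_forall hF_nonneg) hU_int
          (Filter.Eventually.of_forall hF_le)
      _ = (1/t) * (Real.log C + C / C - 1) := by
          rw [MeasureTheory.integral_const_mul]
          congr 1
          have hre : (fun ω => Real.log C + G ω / C - 1)
              = fun ω => (Real.log C - 1) + (1/C) * G ω := by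
            funext ω; ring
          rw [hre, integral_add (integrable_const _) (hG_int.const_mul _),
            MeasureTheory.integral_const_mul, integral_const]
          simp only [probReal_univ, smul_eq_mul, one_mul]
          rw [← hC_def]
          ring
      _ = (1/t) * Real.log C := by rw [div_self (ne_of_gt hC_pos)]; ring
  -- bound on log C
  have hlogC : Real.log C ≤ 1 + 2 * n + 4 * (n:ℝ)^2 * u * t^2 := by
    have h2exp : (2:ℝ) ≤ Real.exp 1 := by
      linarith [Real.exp_one_gt_d9]
    have hpow : (2:ℝ)^n ≤ Real.exp (n:ℝ) := by
      calc (2:ℝ)^n ≤ (Real.exp 1)^n := pow_le_pow_left₀ (by norm_num) h2exp n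
        _ = Real.exp (n:ℝ) := by rw [← Real.exp_nat_mul]; norm_num
    have hCexp : C ≤ Real.exp (1 + (n:ℝ) + (n:ℝ) + 4 * (n:ℝ)^2 * u * t^2) := by
      calc C ≤ 2 * 2^n * 2^n * Real.exp (4 * (n:ℝ)^2 * u * t^2) := hC_ub
        _ ≤ Real.exp 1 * Real.exp (n:ℝ) * Real.exp (n:ℝ)
            * Real.exp (4 * (n:ℝ)^2 * u * t^2) := by gcongr <;> positivity
        _ = Real.exp (1 + (n:ℝ) + (n:ℝ) + 4 * (n:ℝ)^2 * u * t^2) := by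
            rw [← Real.exp_add, ← Real.exp_add, ← Real.exp_add]
    have h1 : Real.log C ≤ 1 + (n:ℝ) + (n:ℝ) + 4 * (n:ℝ)^2 * u * t^2 := by
      have := Real.log_le_log hC_pos hCexp
      rwa [Real.log_exp] at this
    linarith
  -- assembling
  have hcut : ∀ ω, matCutNorm (A ω - Θ₀) = (1 / (n:ℝ)^2) * F ω := fun ω => rfl
  have main : ∫ ω, matCutNorm (A ω - Θ₀) ∂μ ≤ (1/(n:ℝ)^2) * ((1/t) * Real.log C) := by
    calc ∫ ω, matCutNorm (A ω - Θ₀) ∂μ = ∫ ω, (1/(n:ℝ)^2) * F ω ∂μ :=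
        integral_congr_ae (Filter.Eventually.of_forall fun ω => hcut ω)
      _ = (1/(n:ℝ)^2) * ∫ ω, F ω ∂μ := MeasureTheory.integral_const_mul _ _
      _ ≤ _ := mul_le_mul_of_nonneg_left hintF (by positivity)
  refine main.trans ?_
  have hshow : 24 * Real.sqrt (matLinftyNorm Θ₀ / (n:ℝ)) = 24 * r := by rw [hr_def, hu_def]
  rw [hshow]
  have h4t : 4 * (n:ℝ)^2 * u * t^2 = n := by
    rw [hu_eq, ht_def]
    field_simp
    ring
  calc (1/(n:ℝ)^2) * ((1/t) * Real.log C)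
      ≤ (1/(n:ℝ)^2) * ((1/t) * (1 + 2*(n:ℝ) + 4 * (n:ℝ)^2 * u * t^2)) := by
        apply mul_le_mul_of_nonneg_left
          (mul_le_mul_of_nonneg_left hlogC (by positivity)) (by positivity)
    _ = (1/(n:ℝ)^2) * ((2 * ((n:ℝ) * r)) * (1 + 3*(n:ℝ))) := by
        rw [h4t, ht_def]
        have hpos : (0:ℝ) < (n:ℝ) * r := by positivity
        field_simp
        ring
    _ ≤ 24 * r := by
        rw [div_mul_eq_mul_div, one_mul, div_le_iff₀ (by positivity : (0:ℝ) < (n:ℝ)^2)]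
        nlinarith [mul_pos hn' hr_pos, hr_pos]
end
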